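/- arXiv:math/0602669 — 4 statements merged into one kernel-verified Lean document; each statement's English description precedes it below -/
import Mathlib

section
/- Let σ, b : ℝ → ℝ be continuous with σ > 0 and b(0) = 0, and suppose that Σ exists. If f ∈ C¹(ℝ) is simultaneously a C¹-generalized solution of Lf = ℓ̇₁ and of Lf = ℓ̇₂ for ℓ̇₁, ℓ̇₂ ∈ C⁰(ℝ), then ℓ̇₁ = ℓ̇₂. In other words, for fixed f ∈ C¹(ℝ) there is at most one ℓ̇ ∈ C⁰(ℝ) such that Lf = ℓ̇ in the C¹-generalized sense. -/
open MeasureTheory Filter Topology Set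

noncomputable section

/-- A mollifier: a Schwartz function with total integral one. -/
def IsMollifier (Φ : SchwartzMap ℝ ℝ) : Prop := (∫ x : ℝ, Φ x) = 1

/-- `Φₙ(x) = n Φ(n x)`. -/
def moll (Φ : SchwartzMap ℝ ℝ) (n : ℕ) (x : ℝ) : ℝ := (n : ℝ) * Φ ((n : ℝ) * x)

/-- Convolution `(f ∗ g)(x) = ∫ f(x − y) g(y) dy`. -/
def convol (f g : ℝ → ℝ) (x : ℝ) : ℝ := ∫ y : ℝ, f (x - y) * g y

/-- `σₙ² = (σ² ∧ n) ∗ Φₙ`. -/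
def sigmaSqReg (σ : ℝ → ℝ) (Φ : SchwartzMap ℝ ℝ) (n : ℕ) : ℝ → ℝ :=
  convol (fun x => min (σ x ^ 2) (n : ℝ)) (moll Φ n)

/-- `bₙ = ((−n) ∨ (b ∧ n)) ∗ Φₙ`. -/
def bReg (b : ℝ → ℝ) (Φ : SchwartzMap ℝ ℝ) (n : ℕ) : ℝ → ℝ :=
  convol (fun x => max (-(n : ℝ)) (min (b x) (n : ℝ))) (moll Φ n)

/-- `x ↦ 2∫₀ˣ bₙ'/σₙ² dy`. -/
def SigmaApprox (σ b : ℝ → ℝ) (Φ : SchwartzMap ℝ ℝ) (n : ℕ) (x : ℝ) : ℝ :=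
  2 * ∫ y in (0:ℝ)..x, deriv (bReg b Φ n) y / sigmaSqReg σ Φ n y

/-- `Σ` exists, with value `Sg`: for every mollifier the approximations converge
uniformly on compact sets to the (mollifier-independent) continuous function `Sg`. -/
def SigmaExists (σ b Sg : ℝ → ℝ) : Prop :=
  Continuous Sg ∧
    ∀ Φ : SchwartzMap ℝ ℝ, IsMollifier Φ →
      TendstoLocallyUniformly (fun n => SigmaApprox σ b Φ n) Sg atTop

/-- The regularized operator `Lₙ g = (σₙ²/2) g'' + bₙ' g'`. -/
def Lreg (σ b : ℝ → ℝ) (Φ : SchwartzMap ℝ ℝ) (n : ℕ) (g : ℝ → ℝ) (x : ℝ) : ℝ :=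
  sigmaSqReg σ Φ n x / 2 * deriv (deriv g) x + deriv (bReg b Φ n) x * deriv g x

/-- `f` is a `C¹`-generalized solution of `L f = ℓ`. -/
def IsC1GenSolution (σ b f ℓ : ℝ → ℝ) : Prop :=
  ContDiff ℝ 1 f ∧ Continuous ℓ ∧
    ∀ Φ : SchwartzMap ℝ ℝ, IsMollifier Φ →
      ∃ fn : ℕ → ℝ → ℝ,
        (∀ n, ContDiff ℝ 2 (fn n)) ∧
        (∀ n, Continuous (Lreg σ b Φ n (fn n))) ∧
        TendstoLocallyUniformly fn f atTop ∧
        TendstoLocallyUniformly (fun n => deriv (fn n)) (deriv f) atTop ∧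
        TendstoLocallyUniformly (fun n => Lreg σ b Φ n (fn n)) ℓ atTop

/-- `h(x) = ∫₀ˣ e^{−Σ(y)} dy`, i.e. `h(0) = 0`, `h' = e^{−Σ}`. -/
def hFun (Sg : ℝ → ℝ) (x : ℝ) : ℝ := ∫ y in (0:ℝ)..x, Real.exp (-Sg y)


-- auxiliary

namespace S5Aux

open Convolution

def myBump : ContDiffBump (0:ℝ) := ⟨1/2, 1, by norm_num, by norm_num⟩

def Φ₀ : ℝ → ℝ := myBump.normed volume

lemma Φ₀_smooth : ContDiff ℝ (⊤:ℕ∞) Φ₀ := myBump.contDiff_normed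

lemma Φ₀_nonneg (x : ℝ) : 0 ≤ Φ₀ x := myBump.nonneg_normed x

lemma Φ₀_supp : Function.support Φ₀ = Metric.ball (0:ℝ) 1 := by
  have := myBump.support_normed_eq (μ := volume)
  simpa [myBump, Φ₀] using this

lemma Φ₀_int : (∫ x : ℝ, Φ₀ x) = 1 := myBump.integral_normed

def ΦS : SchwartzMap ℝ ℝ where
  toFun := Φ₀
  smooth' := Φ₀_smooth
  decay' := by
    intro k n
    have h1 : HasCompactSupport (iteratedFDeriv ℝ n Φ₀) :=
      myBump.hasCompactSupport_normed.iteratedFDeriv n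
    have h2 : Continuous (iteratedFDeriv ℝ n Φ₀) :=
      Φ₀_smooth.continuous_iteratedFDeriv (by exact_mod_cast le_top)
    have h3 : HasCompactSupport fun x : ℝ => ‖x‖ ^ k * ‖iteratedFDeriv ℝ n Φ₀ x‖ := by
      have := (h1.norm).mul_left (f := fun x : ℝ => ‖x‖ ^ k)
      exact this
    have h4 : Continuous fun x : ℝ => ‖x‖ ^ k * ‖iteratedFDeriv ℝ n Φ₀ x‖ :=
      (continuous_norm.pow k).mul h2.norm
    obtain ⟨C, hC⟩ := h4.bounded_above_of_compact_support h3
    exact ⟨C, fun x => (le_abs_self _).trans (hC x)⟩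

lemma ΦS_mollifier : IsMollifier ΦS := Φ₀_int

lemma ΦS_apply (x : ℝ) : ΦS x = Φ₀ x := rfl

lemma moll_nonneg (n : ℕ) (x : ℝ) : 0 ≤ moll ΦS n x :=
  mul_nonneg (Nat.cast_nonneg n) (Φ₀_nonneg _)

lemma moll_support {n : ℕ} (hn : 1 ≤ n) {x : ℝ} (hx : moll ΦS n x ≠ 0) :
    |x| < 1 / n := by
  have hΦ : Φ₀ ((n:ℝ) * x) ≠ 0 := by
    intro h
    apply hx
    simp [moll, ΦS_apply, h]
  have hmem : (n:ℝ) * x ∈ Metric.ball (0:ℝ) 1 := Φ₀_supp ▸ Function.mem_support.2 hΦ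
  have hnpos : (0:ℝ) < n := by exact_mod_cast hn
  have h1 : (n:ℝ) * |x| < 1 := by
    simpa [Real.dist_eq, abs_mul, abs_of_pos hnpos] using hmem
  rw [lt_div_iff₀ hnpos]
  linarith [h1]

lemma moll_support_le {n : ℕ} (hn : 1 ≤ n) {x : ℝ} (hx : moll ΦS n x ≠ 0) :
    |x| ≤ 1 := by
  have h := moll_support hn hx
  have hn1 : 1 / (n:ℝ) ≤ 1 := by
    rw [div_le_one (by exact_mod_cast hn)]
    exact_mod_cast hn
  linarith

lemma moll_zero_of {n : ℕ} (hn : 1 ≤ n) {x : ℝ} (hx : 1 < |x|) : moll ΦS n x = 0 := by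
  by_contra h
  exact absurd (moll_support_le hn h) (not_le.mpr hx)

lemma moll_hcs {n : ℕ} (hn : 1 ≤ n) : HasCompactSupport (moll ΦS n) := by
  apply HasCompactSupport.intro (isCompact_Icc (a := (-1:ℝ)) (b := 1))
  intro x hx
  apply moll_zero_of hn
  rw [mem_Icc, not_and_or] at hx
  rcases hx with h | h
  · exact lt_abs.mpr (Or.inr (by push_neg at h; linarith))
  · exact lt_abs.mpr (Or.inl (by push_neg at h; linarith))

lemma moll_contDiff (n : ℕ) : ContDiff ℝ (⊤:ℕ∞) (moll ΦS n) := by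
  have : moll ΦS n = fun x => (n:ℝ) * Φ₀ ((n:ℝ) * x) := rfl
  rw [this]
  exact contDiff_const.mul (Φ₀_smooth.comp (contDiff_const.mul contDiff_id))

lemma moll_cont (n : ℕ) : Continuous (moll ΦS n) := (moll_contDiff n).continuous

lemma moll_integrable {n : ℕ} (hn : 1 ≤ n) : Integrable (moll ΦS n) :=
  (moll_cont n).integrable_of_hasCompactSupport (moll_hcs hn)

lemma moll_integral {n : ℕ} (hn : 1 ≤ n) : (∫ x : ℝ, moll ΦS n x) = 1 := by
  have hnpos : (0:ℝ) < n := by exact_mod_cast hn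
  have : (∫ x : ℝ, moll ΦS n x) = (n:ℝ) * ∫ x : ℝ, Φ₀ ((n:ℝ) * x) := by
    simp only [moll, ΦS_apply]
    exact integral_const_mul _ _
  rw [this, MeasureTheory.Measure.integral_comp_mul_left Φ₀ (n:ℝ), Φ₀_int]
  rw [abs_of_pos (by positivity : (0:ℝ) < ((n:ℝ))⁻¹)]
  simp
  exact mul_inv_cancel₀ (ne_of_gt hnpos)

lemma convol_eq (f g : ℝ → ℝ) :
    convol f g = g ⋆[ContinuousLinearMap.mul ℝ ℝ, volume] f := by
  funext x
  simp only [convol, convolution, ContinuousLinearMap.mul_apply']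
  simp_rw [mul_comm]

lemma convol_contDiff {u : ℝ → ℝ} (hu : Continuous u) {n : ℕ} (hn : 1 ≤ n) :
    ContDiff ℝ (⊤:ℕ∞) (convol u (moll ΦS n)) := by
  rw [convol_eq]
  exact (moll_hcs hn).contDiff_convolution_left _ (moll_contDiff n) (hu.locallyIntegrable)

section SigmaFacts

variable {σ : ℝ → ℝ} (hσc : Continuous σ) (hσpos : ∀ x, 0 < σ x)

include hσc in
/-- integrand of `sigmaSqReg` is integrable -/
lemma integrand_integrable (x : ℝ) {n : ℕ} (hn : 1 ≤ n) :
    Integrable (fun y => min (σ (x - y) ^ 2) (n:ℝ) * moll ΦS n y) := by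
  apply Continuous.integrable_of_hasCompactSupport
  · exact (((hσc.comp (continuous_const.sub continuous_id)).pow 2).min continuous_const).mul
      (moll_cont n)
  · exact (moll_hcs hn).mul_left

lemma sigmaSqReg_apply (x : ℝ) (n : ℕ) :
    sigmaSqReg σ ΦS n x = ∫ y : ℝ, min (σ (x - y) ^ 2) (n:ℝ) * moll ΦS n y := rfl

include hσc hσpos in
lemma sigmaSq_lower {R : ℝ} (hR : 0 ≤ R) :
    ∃ c > 0, ∀ n : ℕ, 1 ≤ n → ∀ x ∈ Icc (-R) R, c ≤ sigmaSqReg σ ΦS n x := by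
  obtain ⟨x₀, hx₀K, hx₀⟩ := (isCompact_Icc (a := -(R+1)) (b := R+1)).exists_isMinOn
    ⟨0, by rw [mem_Icc]; constructor <;> linarith⟩ ((hσc.pow 2).continuousOn)
  set c := min (σ x₀ ^ 2) 1 with hc
  have hcpos : 0 < c := lt_min (pow_pos (hσpos x₀) 2) one_pos
  refine ⟨c, hcpos, fun n hn x hx => ?_⟩
  have hnpos : (1:ℝ) ≤ n := by exact_mod_cast hn
  have h1 : ∀ y : ℝ, c * moll ΦS n y ≤ min (σ (x - y) ^ 2) (n:ℝ) * moll ΦS n y := by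
    intro y
    rcases eq_or_ne (moll ΦS n y) 0 with h | h
    · simp [h]
    · apply mul_le_mul_of_nonneg_right _ (moll_nonneg n y)
      have hy := moll_support_le hn h
      have hxy : x - y ∈ Icc (-(R+1)) (R+1) := by
        rw [mem_Icc] at hx ⊢
        rw [abs_le] at hy
        constructor <;> linarith [hx.1, hx.2, hy.1, hy.2]
      refine le_min ?_ ?_
      · exact (min_le_left _ 1).trans (hx₀ hxy)
      · exact (min_le_right _ 1).trans hnpos
  calc c = ∫ y : ℝ, c * moll ΦS n y := by
        rw [integral_const_mul, moll_integral hn, mul_one]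
    _ ≤ ∫ y : ℝ, min (σ (x - y) ^ 2) (n:ℝ) * moll ΦS n y :=
        integral_mono ((moll_integrable hn).const_mul c) (integrand_integrable hσc x hn) h1
    _ = sigmaSqReg σ ΦS n x := rfl

set_option maxHeartbeats 1000000 in
include hσc in
lemma sigmaSq_tendsto (z : ℝ) :
    Tendsto (fun n => sigmaSqReg σ ΦS n z) atTop (𝓝 (σ z ^ 2)) := by
  rw [Metric.tendsto_atTop]
  intro ε hε
  obtain ⟨M, hM⟩ := (isCompact_Icc (a := z - 1) (b := z + 1)).exists_bound_of_continuousOn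
    ((hσc.pow 2).continuousOn)
  obtain ⟨δ, hδpos, hδ⟩ := Metric.continuousAt_iff.mp ((hσc.pow 2).continuousAt (x := z))
    (ε/2) (half_pos hε)
  obtain ⟨N₁, hN₁⟩ := exists_nat_ge M
  obtain ⟨N₂, hN₂⟩ := exists_nat_gt (1/δ)
  refine ⟨max 1 (max N₁ N₂), fun n hn => ?_⟩
  have hn1 : 1 ≤ n := le_trans (le_max_left _ _) hn
  have hnpos : (0:ℝ) < n := by exact_mod_cast hn1
  have hnM : M ≤ (n:ℝ) := le_trans hN₁ (by exact_mod_cast le_trans (le_max_left _ _) (le_trans (le_max_right _ _) hn))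
  have hnδ : 1/(n:ℝ) < δ := by
    have h2 : (1:ℝ)/δ < n := lt_of_lt_of_le hN₂ (by exact_mod_cast le_trans (le_max_right _ _) (le_trans (le_max_right _ _) hn))
    rw [div_lt_iff₀ hnpos]
    rw [div_lt_iff₀ hδpos] at h2
    linarith
  have key : ∀ y : ℝ,
      |(min (σ (z - y) ^ 2) (n:ℝ) - σ z ^ 2) * moll ΦS n y| ≤ (ε/2) * moll ΦS n y := by
    intro y
    rcases eq_or_ne (moll ΦS n y) 0 with h | h
    · simp [h]
    · have hy1 := moll_support hn1 h
      have hy2 := moll_support_le hn1 h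
      rw [abs_le] at hy2
      have hmem : z - y ∈ Icc (z-1) (z+1) := by
        rw [mem_Icc]; constructor <;> linarith [hy2.1, hy2.2]
      have hb : σ (z - y) ^ 2 ≤ (n:ℝ) := by
        have := hM _ hmem
        rw [Real.norm_eq_abs, abs_of_nonneg (sq_nonneg _)] at this
        linarith [show (σ ^ 2) (z - y) = σ (z - y) ^ 2 from rfl]
      rw [min_eq_left hb, abs_mul, abs_of_nonneg (moll_nonneg n y)]
      apply mul_le_mul_of_nonneg_right _ (moll_nonneg n y)
      have : dist (z - y) z < δ := by
        rw [Real.dist_eq]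
        simp only [sub_sub_cancel_left, abs_neg]
        exact lt_trans hy1 hnδ
      exact le_of_lt (hδ this)
  have hint1 := integrand_integrable hσc z hn1
  have hint0 := (moll_integrable hn1).const_mul (σ z ^ 2)
  have heq : (∫ y : ℝ, (min (σ (z - y) ^ 2) (n:ℝ) - σ z ^ 2) * moll ΦS n y)
      = sigmaSqReg σ ΦS n z - σ z ^ 2 := by
    calc (∫ y : ℝ, (min (σ (z - y) ^ 2) (n:ℝ) - σ z ^ 2) * moll ΦS n y)
        = ∫ y : ℝ, (min (σ (z - y) ^ 2) (n:ℝ) * moll ΦS n y - σ z ^ 2 * moll ΦS n y) := by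
          congr 1; funext y; ring
      _ = (∫ y : ℝ, min (σ (z - y) ^ 2) (n:ℝ) * moll ΦS n y)
          - ∫ y : ℝ, σ z ^ 2 * moll ΦS n y := integral_sub hint1 hint0
      _ = sigmaSqReg σ ΦS n z - σ z ^ 2 := by
          rw [sigmaSqReg_apply, integral_const_mul, moll_integral hn1, mul_one]
  rw [Real.dist_eq, ← heq, ← Real.norm_eq_abs]
  calc ‖∫ y : ℝ, (min (σ (z - y) ^ 2) (n:ℝ) - σ z ^ 2) * moll ΦS n y‖
      ≤ ∫ y : ℝ, ‖(min (σ (z - y) ^ 2) (n:ℝ) - σ z ^ 2) * moll ΦS n y‖ :=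
        norm_integral_le_integral_norm _
    _ ≤ ∫ y : ℝ, (ε/2) * moll ΦS n y := by
        apply integral_mono ?_ ((moll_integrable hn1).const_mul (ε/2))
          (fun y => by simpa only [Real.norm_eq_abs] using key y)
        have : (fun y : ℝ => ‖(min (σ (z - y) ^ 2) (n:ℝ) - σ z ^ 2) * moll ΦS n y‖)
            = fun y : ℝ => |((fun y : ℝ => min (σ (z - y) ^ 2) (n:ℝ) * moll ΦS n y)
              - fun y : ℝ => σ z ^ 2 * moll ΦS n y) y| := by
          funext y; rw [Real.norm_eq_abs]; congr 1; simp; ring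
        rw [this]
        exact (hint1.sub hint0).abs
    _ = ε/2 := by rw [integral_const_mul, moll_integral hn1, mul_one]
    _ < ε := half_lt_self hε

end SigmaFacts

lemma abs_le_of_mem_uIcc {t y : ℝ} (h : t ∈ uIcc 0 y) : |t| ≤ |y| := by
  rcases Set.mem_uIcc.mp h with ⟨h1, h2⟩ | ⟨h1, h2⟩ <;> rw [abs_le] <;> constructor <;>
    [linarith [abs_nonneg y]; linarith [le_abs_self y];
     linarith [neg_abs_le y]; linarith [abs_nonneg y]]

lemma tlu_at {F : ℕ → ℝ → ℝ} {f : ℝ → ℝ} (h : TendstoLocallyUniformly F f atTop) (x : ℝ) :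
    Tendsto (fun n => F n x) atTop (𝓝 (f x)) :=
  (tendstoLocallyUniformlyOn_univ.mpr h).tendsto_at (mem_univ x)

lemma tlu_tuo {F : ℕ → ℝ → ℝ} {f : ℝ → ℝ} (h : TendstoLocallyUniformly F f atTop)
    {s : Set ℝ} (hs : IsCompact s) : TendstoUniformlyOn F f atTop s :=
  (tendstoLocallyUniformlyOn_iff_tendstoUniformlyOn_of_compact hs).mp
    (h.tendstoLocallyUniformlyOn)

end S5Aux

section Main

open S5Aux

/-- Remark 2.9: for a fixed `f ∈ C¹(ℝ)` there is at most one `ℓ̇ ∈ C⁰(ℝ)`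
such that `Lf = ℓ̇` in the `C¹`-generalized sense. -/
theorem statement5 (σ b Sg : ℝ → ℝ) (hσc : Continuous σ) (hσpos : ∀ x, 0 < σ x)
    (hbc : Continuous b) (hb0 : b 0 = 0) (hSg : SigmaExists σ b Sg)
    (f ℓ₁ ℓ₂ : ℝ → ℝ)
    (h₁ : IsC1GenSolution σ b f ℓ₁) (h₂ : IsC1GenSolution σ b f ℓ₂) :
    ℓ₁ = ℓ₂ := by
  classical
  obtain ⟨hSgc, hSgconv⟩ := hSg
  obtain ⟨hf1, hl1c, H₁⟩ := h₁
  obtain ⟨-, hl2c, H₂⟩ := h₂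
  obtain ⟨fn, hfn2, hfnLc, -, hfnd, hfnL⟩ := H₁ ΦS ΦS_mollifier
  obtain ⟨gn, hgn2, hgnLc, -, hgnd, hgnL⟩ := H₂ ΦS ΦS_mollifier
  have hZg := hSgconv ΦS ΦS_mollifier
  set d : ℝ → ℝ := fun y => ℓ₁ y - ℓ₂ y with hd
  have hdc : Continuous d := hl1c.sub hl2c
  have hσ2ne : ∀ y : ℝ, σ y ^ 2 ≠ 0 := fun y => (pow_pos (hσpos y) 2).ne'
  set g₀ : ℝ → ℝ := fun y => Real.exp (Sg y) * (2 * d y / σ y ^ 2) with hg₀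
  have hg₀c : Continuous g₀ :=
    (Real.continuous_exp.comp hSgc).mul ((continuous_const.mul hdc).div (hσc.pow 2) hσ2ne)
  -- notation
  set S : ℕ → ℝ → ℝ := fun n => sigmaSqReg σ ΦS n with hS
  set B : ℕ → ℝ → ℝ := fun n => deriv (bReg b ΦS n) with hB
  set Sgm : ℕ → ℝ → ℝ := fun n => SigmaApprox σ b ΦS n with hSgm
  set dn : ℕ → ℝ → ℝ := fun n y => Lreg σ b ΦS n (fn n) y - Lreg σ b ΦS n (gn n) y with hdn
  set Fn : ℕ → ℝ → ℝ := fun n y => Real.exp (Sgm n y) * (deriv (fn n) y - deriv (gn n) y)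
    with hFn
  set Gn : ℕ → ℝ → ℝ := fun n y => Real.exp (Sgm n y) * (2 * dn n y / S n y) with hGn
  have hScont : ∀ n : ℕ, 1 ≤ n → Continuous (S n) := fun n hn =>
    (convol_contDiff ((hσc.pow 2).min continuous_const) hn).continuous
  have hbRegC : ∀ n : ℕ, 1 ≤ n → ContDiff ℝ (⊤:ℕ∞) (bReg b ΦS n) := fun n hn =>
    convol_contDiff (continuous_const.max (hbc.min continuous_const)) hn
  have hBcont : ∀ n : ℕ, 1 ≤ n → Continuous (B n) := fun n hn =>
    (hbRegC n hn).continuous_deriv (by exact_mod_cast le_top)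
  have hdnc : ∀ n : ℕ, Continuous (dn n) := fun n => (hfnLc n).sub (hgnLc n)
  -- main claim
  have claim : ∀ x : ℝ, (∫ y in (0:ℝ)..x, g₀ y) = 0 := by
    intro x
    set R : ℝ := |x| + 1 with hR
    have hRpos : (0:ℝ) ≤ R := by positivity
    obtain ⟨c, hcpos, hcbd⟩ := sigmaSq_lower hσc hσpos hRpos
    have hsubIcc : uIcc (0:ℝ) x ⊆ Icc (-R) R := by
      intro y hy
      have := abs_le_of_mem_uIcc hy
      rw [mem_Icc]
      rw [abs_le] at this
      constructor <;> [linarith [this.1]; linarith [this.2]]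
    have hsubIoo : uIcc (0:ℝ) x ⊆ Ioo (-R) R := by
      intro y hy
      have := abs_le_of_mem_uIcc hy
      rw [abs_le] at this
      rw [mem_Ioo]
      constructor <;> [linarith [this.1, abs_nonneg x]; linarith [this.2, abs_nonneg x]]
    have hsub' : ∀ y ∈ uIcc (0:ℝ) x, uIcc (0:ℝ) y ⊆ Ioo (-R) R := by
      intro y hy t ht
      have h1 := abs_le_of_mem_uIcc ht
      have h2 := abs_le_of_mem_uIcc hy
      rw [abs_le] at h1
      rw [mem_Ioo]
      constructor <;> [linarith [h1.1, h2]; linarith [h1.2, h2]]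
    -- derivative of Sgm
    have hZgder : ∀ n : ℕ, 1 ≤ n → ∀ y ∈ uIcc (0:ℝ) x,
        HasDerivAt (Sgm n) (2 * (B n y / S n y)) y := by
      intro n hn y hy
      have hSc := hScont n hn
      have hBc := hBcont n hn
      have hyIoo := hsubIoo hy
      have hcontOn : ContinuousOn (fun t => B n t / S n t) (Ioo (-R) R) :=
        hBc.continuousOn.div hSc.continuousOn
          (fun t ht => (lt_of_lt_of_le hcpos (hcbd n hn t (Ioo_subset_Icc_self ht))).ne')
      have hmeasf : StronglyMeasurableAtFilter (fun t => B n t / S n t) (𝓝 y) :=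
        ⟨univ, univ_mem, ((hBc.measurable.div hSc.measurable).aestronglyMeasurable).restrict⟩
      have hca : ContinuousAt (fun t => B n t / S n t) y :=
        hcontOn.continuousAt (isOpen_Ioo.mem_nhds hyIoo)
      have hint : IntervalIntegrable (fun t => B n t / S n t) volume 0 y :=
        (hcontOn.mono (hsub' y hy)).intervalIntegrable
      have h0 := intervalIntegral.integral_hasDerivAt_right hint hmeasf hca
      exact HasDerivAt.const_mul (2:ℝ) h0
    have hZgcontOn : ∀ n : ℕ, 1 ≤ n → ContinuousOn (Sgm n) (uIcc (0:ℝ) x) :=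
      fun n hn y hy => ((hZgder n hn y hy).continuousAt).continuousWithinAt
    have hGncont : ∀ n : ℕ, 1 ≤ n → ContinuousOn (Gn n) (uIcc (0:ℝ) x) := by
      intro n hn
      apply (Real.continuous_exp.comp_continuousOn (hZgcontOn n hn)).mul
      apply ((continuous_const.mul (hdnc n)).continuousOn).div ((hScont n hn).continuousOn)
      exact fun y hy => (lt_of_lt_of_le hcpos (hcbd n hn y (hsubIcc hy))).ne'
    -- the key integral identity
    have key : ∀ n : ℕ, 1 ≤ n → (∫ y in (0:ℝ)..x, Gn n y) = Fn n x - Fn n 0 := by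
      intro n hn
      have hfnC1 : ContDiff ℝ 1 (deriv (fn n)) := by
        have h2 : ContDiff ℝ ((1 + 1 : ℕ) : WithTop ℕ∞) (fn n) := by
          exact_mod_cast hfn2 n
        simpa using ContDiff.iterate_deriv' 1 1 h2
      have hgnC1 : ContDiff ℝ 1 (deriv (gn n)) := by
        have h2 : ContDiff ℝ ((1 + 1 : ℕ) : WithTop ℕ∞) (gn n) := by
          exact_mod_cast hgn2 n
        simpa using ContDiff.iterate_deriv' 1 1 h2
      have hderF : ∀ y ∈ uIcc (0:ℝ) x, HasDerivAt (Fn n) (Gn n y) y := by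
        intro y hy
        have hSy : c ≤ S n y := hcbd n hn y (hsubIcc hy)
        have hSyne : S n y ≠ 0 := (lt_of_lt_of_le hcpos hSy).ne'
        have hExp : HasDerivAt (fun z => Real.exp (Sgm n z))
            (Real.exp (Sgm n y) * (2 * (B n y / S n y))) y := (hZgder n hn y hy).exp
        have hu : HasDerivAt (fun z => deriv (fn n) z - deriv (gn n) z)
            (deriv (deriv (fn n)) y - deriv (deriv (gn n)) y) y :=
          ((hfnC1.differentiable one_ne_zero y).hasDerivAt).sub
            ((hgnC1.differentiable one_ne_zero y).hasDerivAt)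
        have hmul := hExp.mul hu
        have hval : Real.exp (Sgm n y) * (2 * (B n y / S n y)) *
              (deriv (fn n) y - deriv (gn n) y)
            + Real.exp (Sgm n y) * (deriv (deriv (fn n)) y - deriv (deriv (gn n)) y)
            = Gn n y := by
          have hdn_eq : dn n y = S n y / 2 * (deriv (deriv (fn n)) y - deriv (deriv (gn n)) y)
              + B n y * (deriv (fn n) y - deriv (gn n) y) := by
            simp only [hdn, Lreg, hS, hB]
            ring
          rw [hGn]
          simp only [hdn_eq]
          field_simp
          ring
        rw [hFn]
        exact hval ▸ hmul
      have hGnint : IntervalIntegrable (Gn n) volume 0 x :=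
        (hGncont n hn).intervalIntegrable
      exact intervalIntegral.integral_eq_sub_of_hasDerivAt hderF hGnint
    -- limit of RHS
    have hRHS : Tendsto (fun n => Fn n x - Fn n 0) atTop (𝓝 0) := by
      have hpt : ∀ z : ℝ, Tendsto (fun n => Fn n z) atTop (𝓝 0) := by
        intro z
        have h1 : Tendsto (fun n => Sgm n z) atTop (𝓝 (Sg z)) := tlu_at hZg z
        have h2 : Tendsto (fun n => deriv (fn n) z) atTop (𝓝 (deriv f z)) := tlu_at hfnd z
        have h3 : Tendsto (fun n => deriv (gn n) z) atTop (𝓝 (deriv f z)) := tlu_at hgnd z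
        have := ((Real.continuous_exp.continuousAt.tendsto).comp h1).mul (h2.sub h3)
        simpa using this
      simpa using (hpt x).sub (hpt 0)
    -- limit of LHS by dominated convergence
    have hLHS : Tendsto (fun n => ∫ y in (0:ℝ)..x, Gn n y) atTop
        (𝓝 (∫ y in (0:ℝ)..x, g₀ y)) := by
      obtain ⟨CZg, hCZg⟩ := (isCompact_uIcc (a := (0:ℝ)) (b := x)).exists_bound_of_continuousOn
        hSgc.continuousOn
      obtain ⟨Cd, hCd⟩ := (isCompact_uIcc (a := (0:ℝ)) (b := x)).exists_bound_of_continuousOn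
        hdc.continuousOn
      have hTUOZg : TendstoUniformlyOn Sgm Sg atTop (uIcc (0:ℝ) x) := tlu_tuo hZg isCompact_uIcc
      have hTUOd : TendstoUniformlyOn dn d atTop (uIcc (0:ℝ) x) :=
        (tlu_tuo hfnL isCompact_uIcc).sub (tlu_tuo hgnL isCompact_uIcc)
      have hevZg := Metric.tendstoUniformlyOn_iff.mp hTUOZg 1 one_pos
      have hevd := Metric.tendstoUniformlyOn_iff.mp hTUOd 1 one_pos
      apply intervalIntegral.tendsto_integral_filter_of_dominated_convergence
        (bound := fun _ => Real.exp (CZg + 1) * (2 * (Cd + 1) / c))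
      · filter_upwards [eventually_ge_atTop 1] with n hn
        exact ((hGncont n hn).mono uIoc_subset_uIcc).aestronglyMeasurable measurableSet_uIoc
      · filter_upwards [eventually_ge_atTop 1, hevZg, hevd] with n hn hZgb hdb
        apply Eventually.of_forall
        intro y hy
        have hy' : y ∈ uIcc (0:ℝ) x := uIoc_subset_uIcc hy
        have hSy : c ≤ S n y := hcbd n hn y (hsubIcc hy')
        have hSypos : 0 < S n y := lt_of_lt_of_le hcpos hSy
        have h1 : Sgm n y ≤ CZg + 1 := by
          have := hZgb y hy'
          rw [Real.dist_eq, abs_lt] at this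
          have h2 := hCZg y hy'
          rw [Real.norm_eq_abs, abs_le] at h2
          linarith [this.1, this.2, h2.1, h2.2]
        have h2 : |dn n y| ≤ Cd + 1 := by
          have := hdb y hy'
          rw [Real.dist_eq, abs_lt] at this
          have h3 := hCd y hy'
          rw [Real.norm_eq_abs, abs_le] at h3
          rw [abs_le]
          constructor <;> [linarith [this.1, this.2, h3.1]; linarith [this.1, this.2, h3.2]]
        calc ‖Gn n y‖ = Real.exp (Sgm n y) * (2 * |dn n y| / S n y) := by
              rw [hGn]
              rw [Real.norm_eq_abs, abs_mul, abs_of_pos (Real.exp_pos _), abs_div,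
                abs_mul, abs_two, abs_of_pos hSypos]
          _ ≤ Real.exp (CZg + 1) * (2 * (Cd + 1) / c) := by
              have hCd0 : (0:ℝ) ≤ Cd :=
                le_trans (norm_nonneg _) (hCd 0 left_mem_uIcc)
              apply mul_le_mul (Real.exp_le_exp.mpr h1) ?_
                (div_nonneg (by positivity) hSypos.le) (le_of_lt (Real.exp_pos _))
              apply div_le_div₀ (by positivity) (by linarith [h2]) hcpos hSy
      · exact intervalIntegrable_const
      · apply Eventually.of_forall
        intro y hy
        have hy' : y ∈ uIcc (0:ℝ) x := uIoc_subset_uIcc hy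
        have h1 : Tendsto (fun n => Sgm n y) atTop (𝓝 (Sg y)) := tlu_at hZg y
        have h2 : Tendsto (fun n => dn n y) atTop (𝓝 (d y)) := hTUOd.tendsto_at hy'
        have h3 : Tendsto (fun n => S n y) atTop (𝓝 (σ y ^ 2)) := sigmaSq_tendsto hσc y
        exact ((Real.continuous_exp.continuousAt.tendsto).comp h1).mul
          (((tendsto_const_nhds.mul h2).div h3 (hσ2ne y)))
    have hLHS' : Tendsto (fun n => ∫ y in (0:ℝ)..x, Gn n y) atTop (𝓝 0) := by
      apply hRHS.congr'
      filter_upwards [eventually_ge_atTop 1] with n hn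
      exact (key n hn).symm
    exact tendsto_nhds_unique hLHS hLHS'
  -- conclude ℓ₁ = ℓ₂
  funext z
  have hG0 : (fun u => ∫ y in (0:ℝ)..u, g₀ y) = fun _ => (0:ℝ) := funext claim
  have hder : deriv (fun u => ∫ y in (0:ℝ)..u, g₀ y) z = g₀ z :=
    Continuous.deriv_integral g₀ hg₀c 0 z
  rw [hG0, deriv_const] at hder
  have hg0z : g₀ z = 0 := hder.symm
  have h2 : 2 * d z / σ z ^ 2 = 0 := by
    rcases mul_eq_zero.mp hg0z with h | h
    · exact absurd h (Real.exp_ne_zero _)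
    · exact h
  have h3 : d z = 0 := by
    rcases div_eq_zero_iff.mp h2 with h | h
    · linarith
    · exact absurd h (hσ2ne z)
  have : ℓ₁ z - ℓ₂ z = 0 := h3
  linarith


end Main

end
end

section
/- Let σ, b : ℝ → ℝ be continuous with σ > 0 and b(0) = 0, and suppose that Σ exists. Then 𝒟_L, the set of f ∈ C¹(ℝ) that are C¹-generalized solutions of Lf = ℓ̇ for some ℓ̇ ∈ C⁰(ℝ), is exactly the set of f ∈ C¹(ℝ) for which there exists ψ ∈ C¹(ℝ) with f'(x) = e^{−Σ(x)} ψ(x) for all x. -/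
open MeasureTheory Filter Topology Set

noncomputable section

namespace S6

variable {σ b : ℝ → ℝ}



/-- poly bound -/
lemma pow5_bound {t : ℝ} (ht : 0 ≤ t) : (1 + t)^5 ≤ 32 * (1 + t^5) := by
  nlinarith [pow_nonneg ht 2, pow_nonneg ht 3, pow_nonneg ht 4, pow_nonneg ht 5,
    sq_nonneg (1-t), sq_nonneg t, mul_nonneg (mul_nonneg ht ht) ht,
    sq_nonneg (t^2 - t), sq_nonneg (t^2-1), sq_nonneg (t*(t-1)), sq_nonneg (t^2*(t-1))]

lemma one_add_abs_pos (x : ℝ) : (0:ℝ) < (1 + |x|) := by positivity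

/-- Schwartz decay with exponent 5. -/
lemma schwartz_decay5 (Φ : SchwartzMap ℝ ℝ) : ∃ C : ℝ, 0 < C ∧ ∀ x, |Φ x| ≤ C / (1 + |x|)^5 := by
  obtain ⟨C0, hC0, h0⟩ := Φ.decay 0 0
  obtain ⟨C5, hC5, h5⟩ := Φ.decay 5 0
  refine ⟨32 * (C0 + C5), by positivity, fun x => ?_⟩
  rw [le_div_iff₀ (by positivity)]
  have e0 := h0 x; have e5 := h5 x
  rw [norm_iteratedFDeriv_zero] at e0 e5
  simp only [pow_zero, one_mul, Real.norm_eq_abs] at e0 e5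
  calc |Φ x| * (1 + |x|)^5 ≤ |Φ x| * (32 * (1 + |x|^5)) := by
        have := pow5_bound (abs_nonneg x)
        exact mul_le_mul_of_nonneg_left this (abs_nonneg _)
    _ = 32 * (|Φ x| + |x|^5 * |Φ x|) := by ring
    _ ≤ 32 * (C0 + C5) := by
        have : |x| ^ 5 * |Φ x| ≤ C5 := by simpa [Real.norm_eq_abs] using e5
        nlinarith [abs_nonneg (Φ x)]

/-- derivative of moll -/
def mollD (Φ : SchwartzMap ℝ ℝ) (n : ℕ) (x : ℝ) : ℝ := (n:ℝ)^2 * deriv Φ ((n:ℝ) * x)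

lemma hasDerivAt_moll (Φ : SchwartzMap ℝ ℝ) (n : ℕ) (x : ℝ) :
    HasDerivAt (moll Φ n) (mollD Φ n x) x := by
  have h1 : HasDerivAt (fun x : ℝ => (n:ℝ) * x) ((n:ℝ)) x := by
    simpa using (hasDerivAt_id x).const_mul (n:ℝ)
  have h2 : HasDerivAt Φ (deriv Φ ((n:ℝ)*x)) ((n:ℝ)*x) := Φ.differentiableAt.hasDerivAt
  have h3 := (h2.comp x h1).const_mul (n:ℝ)
  exact h3.congr_deriv (by rw [mollD]; ring)

lemma continuous_mollD (Φ : SchwartzMap ℝ ℝ) (n : ℕ) : Continuous (mollD Φ n) := by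
  have : Continuous (deriv Φ) := by
    have := (SchwartzMap.derivCLM ℝ ℝ Φ).continuous
    exact this
  unfold mollD
  exact continuous_const.mul (this.comp (continuous_const.mul continuous_id))

lemma continuous_moll (Φ : SchwartzMap ℝ ℝ) (n : ℕ) : Continuous (moll Φ n) := by
  unfold moll; continuity

lemma moll_decay5 (Φ : SchwartzMap ℝ ℝ) : ∃ C : ℝ, 0 < C ∧ ∀ (n : ℕ) (x : ℝ),
    |moll Φ n x| ≤ (n : ℝ) * C / (1 + |x|)^5 := by
  obtain ⟨C, hC, h⟩ := schwartz_decay5 Φ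
  refine ⟨C, hC, fun n x => ?_⟩
  rcases Nat.eq_zero_or_pos n with hn | hn
  · simp [moll, hn]
  have hn1 : (1:ℝ) ≤ n := by exact_mod_cast hn
  have key : |Φ ((n:ℝ)*x)| ≤ C / (1 + |x|)^5 := by
    refine (h _).trans ?_
    apply div_le_div_of_nonneg_left hC.le (by positivity)
    have : |x| ≤ |(n:ℝ)*x| := by
      rw [abs_mul, abs_of_nonneg (by positivity : (0:ℝ) ≤ (n:ℝ))]
      nlinarith [abs_nonneg x]
    gcongr
  calc |moll Φ n x| = (n:ℝ) * |Φ ((n:ℝ)*x)| := by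
        rw [moll, abs_mul, abs_of_nonneg (by positivity : (0:ℝ) ≤ (n:ℝ))]
    _ ≤ (n:ℝ) * (C / (1+|x|)^5) := by
        exact mul_le_mul_of_nonneg_left key (by positivity)
    _ = (n:ℝ) * C / (1+|x|)^5 := by ring

lemma mollD_decay5 (Φ : SchwartzMap ℝ ℝ) : ∃ C : ℝ, 0 < C ∧ ∀ (n : ℕ) (x : ℝ),
    |mollD Φ n x| ≤ ((n : ℝ))^2 * C / (1 + |x|)^5 := by
  obtain ⟨C, hC, h⟩ := schwartz_decay5 (SchwartzMap.derivCLM ℝ ℝ Φ)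
  simp only [SchwartzMap.derivCLM_apply] at h
  refine ⟨C, hC, fun n x => ?_⟩
  rcases Nat.eq_zero_or_pos n with hn | hn
  · simp [mollD, hn]
  have hn1 : (1:ℝ) ≤ n := by exact_mod_cast hn
  have key : |deriv Φ ((n:ℝ)*x)| ≤ C / (1 + |x|)^5 := by
    refine (h _).trans ?_
    apply div_le_div_of_nonneg_left hC.le (by positivity)
    have : |x| ≤ |(n:ℝ)*x| := by
      rw [abs_mul, abs_of_nonneg (by positivity : (0:ℝ) ≤ (n:ℝ))]
      nlinarith [abs_nonneg x]
    gcongr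
  calc |mollD Φ n x| = (n:ℝ)^2 * |deriv Φ ((n:ℝ)*x)| := by
        rw [mollD, abs_mul, abs_of_nonneg (by positivity : (0:ℝ) ≤ ((n:ℝ)^2))]
    _ ≤ (n:ℝ)^2 * (C / (1+|x|)^5) := mul_le_mul_of_nonneg_left key (by positivity)
    _ = (n:ℝ)^2 * C / (1+|x|)^5 := by ring

/-- integrability of decay profiles -/
lemma integrable_inv_one_add_pow (k : ℕ) (hk : 2 ≤ k) :
    Integrable (fun x : ℝ => ((1 + |x|)^k)⁻¹) := by
  have h : Integrable (fun x : ℝ => (1 + ‖x‖) ^ (-(k:ℝ))) volume :=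
    integrable_one_add_norm (by simp; exact_mod_cast lt_of_lt_of_le one_lt_two (by exact_mod_cast hk))
  refine h.congr (Eventually.of_forall fun x => ?_)
  have h1 : (0:ℝ) ≤ 1 + ‖x‖ := by positivity
  have : (1 + ‖x‖ : ℝ) ^ (-(k:ℝ)) = ((1+|x|)^k)⁻¹ := by
    rw [Real.rpow_neg h1, Real.rpow_natCast]; simp [Real.norm_eq_abs]
  simpa using this

lemma integrable_shift_decay (c x₀ : ℝ) (k : ℕ) (hk : 2 ≤ k) :
    Integrable (fun t : ℝ => c / (1 + |x₀ - t|)^k) := by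
  have h := (integrable_inv_one_add_pow k hk).comp_sub_left x₀
  simpa [div_eq_mul_inv] using h.const_mul c

/-- shift comparison -/
lemma shift_decay_le {x x₀ t C : ℝ} (hC : 0 ≤ C) (hx : |x - x₀| ≤ 1) :
    C / (1 + |x - t|)^5 ≤ 32 * C / (1 + |x₀ - t|)^5 := by
  have h1 : 1 + |x₀ - t| ≤ 2 * (1 + |x - t|) := by
    have : |x₀ - t| ≤ |x₀ - x| + |x - t| := abs_sub_le _ _ _
    have h2 : |x₀ - x| ≤ 1 := by rwa [abs_sub_comm]
    have h3 : (0:ℝ) ≤ |x - t| := abs_nonneg _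
    linarith
  have h5 : (1 + |x₀ - t|)^5 ≤ 32 * (1 + |x - t|)^5 := by
    calc (1 + |x₀ - t|)^5 ≤ (2 * (1 + |x - t|))^5 := by
          apply pow_le_pow_left₀ (by positivity) h1
      _ = 32 * (1 + |x - t|)^5 := by ring
  rw [div_le_div_iff₀ (by positivity) (by positivity)]
  calc C * (1 + |x₀ - t|)^5 ≤ C * (32 * (1 + |x - t|)^5) := by
        exact mul_le_mul_of_nonneg_left h5 hC
    _ = 32 * C * (1 + |x - t|)^5 := by ring


def convW (u ϕ : ℝ → ℝ) (x : ℝ) : ℝ := ∫ t : ℝ, u t * ϕ (x - t)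

lemma convol_eq_convW (u ϕ : ℝ → ℝ) (x : ℝ) :
    (∫ y : ℝ, u (x - y) * ϕ y) = convW u ϕ x := by
  have := integral_sub_left_eq_self (fun t => u t * ϕ (x - t)) volume x
  rw [convW, ← this]
  congr 1; funext y; simp

variable {u ϕ ϕ' : ℝ → ℝ} {M C C' : ℝ}

lemma decay_nonneg (hϕ : ∀ z : ℝ, |ϕ z| ≤ C / (1 + |z|)^5) : 0 ≤ C := by
  have h := (abs_nonneg (ϕ 0)).trans (hϕ 0)
  simp only [abs_zero] at h
  by_contra hc
  push_neg at hc
  have : C / (1 + |(0:ℝ)|)^5 < 0 := by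
    apply div_neg_of_neg_of_pos hc; positivity
  linarith

lemma integrable_convW_integrand (hu : Continuous u) (huM : ∀ x, |u x| ≤ M)
    (hϕc : Continuous ϕ) (hϕ : ∀ z, |ϕ z| ≤ C / (1 + |z|)^5) (x : ℝ) :
    Integrable (fun t => u t * ϕ (x - t)) := by
  have hC := decay_nonneg hϕ
  have hM : 0 ≤ M := (abs_nonneg (u 0)).trans (huM 0)
  refine Integrable.mono' (g := fun t => M * C / (1 + |x - t|)^5)
    (integrable_shift_decay _ _ 5 (by norm_num)) ?_ ?_
  · exact (hu.mul (hϕc.comp (continuous_const.sub continuous_id))).aestronglyMeasurable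
  · refine Eventually.of_forall fun t => ?_
    rw [Real.norm_eq_abs, abs_mul]
    calc |u t| * |ϕ (x - t)| ≤ M * (C / (1 + |x - t|)^5) :=
        mul_le_mul (huM t) (hϕ _) (abs_nonneg _) hM
      _ = M * C / (1 + |x - t|)^5 := by ring

lemma continuous_convW (hu : Continuous u) (huM : ∀ x, |u x| ≤ M)
    (hϕc : Continuous ϕ) (hϕ : ∀ z, |ϕ z| ≤ C / (1 + |z|)^5) :
    Continuous (convW u ϕ) := by
  have hC := decay_nonneg hϕ
  have hM : 0 ≤ M := (abs_nonneg (u 0)).trans (huM 0)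
  rw [continuous_iff_continuousAt]
  intro x₀
  apply continuousAt_of_dominated (bound := fun t => M * (32 * C) / (1 + |x₀ - t|)^5)
  · exact Eventually.of_forall fun x =>
      (hu.mul (hϕc.comp (continuous_const.sub continuous_id))).aestronglyMeasurable
  · have : ∀ᶠ x in 𝓝 x₀, x ∈ Metric.ball x₀ 1 := by
      apply Metric.ball_mem_nhds; norm_num
    filter_upwards [this] with x hx
    refine Eventually.of_forall fun t => ?_
    rw [Real.norm_eq_abs, abs_mul]
    have hx1 : |x - x₀| ≤ 1 := by
      rw [← Real.dist_eq]; exact (Metric.mem_ball.mp hx).le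
    calc |u t| * |ϕ (x - t)| ≤ M * (C / (1 + |x - t|)^5) :=
        mul_le_mul (huM t) (hϕ _) (abs_nonneg _) hM
      _ ≤ M * (32 * C / (1 + |x₀ - t|)^5) := by
          exact mul_le_mul_of_nonneg_left (shift_decay_le hC hx1) hM
      _ = M * (32 * C) / (1 + |x₀ - t|)^5 := by ring
  · exact integrable_shift_decay _ _ 5 (by norm_num)
  · refine Eventually.of_forall fun t => ?_
    exact ((continuous_const.mul (hϕc.comp (continuous_id.sub continuous_const))).continuousAt)


lemma hasDerivAt_convW (hu : Continuous u) (huM : ∀ x, |u x| ≤ M)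
    (hϕc : Continuous ϕ) (hϕ : ∀ z, |ϕ z| ≤ C / (1 + |z|)^5)
    (hϕ'c : Continuous ϕ') (hϕ' : ∀ z, |ϕ' z| ≤ C' / (1 + |z|)^5)
    (hd : ∀ z, HasDerivAt ϕ (ϕ' z) z) (x₀ : ℝ) :
    HasDerivAt (convW u ϕ) (convW u ϕ' x₀) x₀ := by
  have hC' := decay_nonneg hϕ'
  have hM : 0 ≤ M := (abs_nonneg (u 0)).trans (huM 0)
  have key := hasDerivAt_integral_of_dominated_loc_of_deriv_le
    (F := fun x t => u t * ϕ (x - t)) (F' := fun x t => u t * ϕ' (x - t))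
    (bound := fun t => M * (32 * C') / (1 + |x₀ - t|)^5) (x₀ := x₀)
    (s := Metric.ball x₀ 1) (Metric.ball_mem_nhds x₀ one_pos)
    (Eventually.of_forall fun x =>
      (hu.mul (hϕc.comp (continuous_const.sub continuous_id))).aestronglyMeasurable)
    (integrable_convW_integrand hu huM hϕc hϕ x₀)
    ((hu.mul (hϕ'c.comp (continuous_const.sub continuous_id))).aestronglyMeasurable)
    ?_ (integrable_shift_decay _ _ 5 (by norm_num)) ?_
  · exact key.2
  · refine Eventually.of_forall fun t => fun x hx => ?_
    have hx1 : |x - x₀| ≤ 1 := by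
      rw [← Real.dist_eq]; exact (Metric.mem_ball.mp hx).le
    rw [Real.norm_eq_abs, abs_mul]
    calc |u t| * |ϕ' (x - t)| ≤ M * (C' / (1 + |x - t|)^5) :=
        mul_le_mul (huM t) (hϕ' _) (abs_nonneg _) hM
      _ ≤ M * (32 * C' / (1 + |x₀ - t|)^5) :=
          mul_le_mul_of_nonneg_left (shift_decay_le hC' hx1) hM
      _ = M * (32 * C') / (1 + |x₀ - t|)^5 := by ring
  · refine Eventually.of_forall fun t => fun x _ => ?_
    have h1 : HasDerivAt (fun x : ℝ => x - t) 1 x := by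
      simpa using (hasDerivAt_id x).sub_const t
    have h2 := ((hd (x - t)).comp x h1)
    simpa using h2.const_mul (u t)

variable {σ b : ℝ → ℝ}

def truncS (σ : ℝ → ℝ) (n : ℕ) (x : ℝ) : ℝ := min (σ x ^ 2) (n : ℝ)
def truncB (b : ℝ → ℝ) (n : ℕ) (x : ℝ) : ℝ := max (-(n : ℝ)) (min (b x) (n : ℝ))

lemma truncS_cont (hσ : Continuous σ) (n : ℕ) : Continuous (truncS σ n) :=
  ((hσ.pow 2).min continuous_const)
lemma truncB_cont (hb : Continuous b) (n : ℕ) : Continuous (truncB b n) :=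
  (continuous_const.max (hb.min continuous_const))
lemma truncS_bound (n : ℕ) (x : ℝ) : |truncS σ n x| ≤ (n:ℝ) := by
  have h0 : (0:ℝ) ≤ (n:ℝ) := by positivity
  rw [abs_le]
  exact ⟨le_trans (by linarith) (le_min (sq_nonneg (σ x)) h0), min_le_right _ _⟩
lemma truncB_bound (n : ℕ) (x : ℝ) : |truncB b n x| ≤ (n:ℝ) := by
  rw [abs_le]; constructor
  · exact le_max_left _ _
  · exact max_le (neg_le_self (by positivity)) ((min_le_right _ _))

lemma sigmaSqReg_eq (Φ : SchwartzMap ℝ ℝ) (n : ℕ) :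
    sigmaSqReg σ Φ n = convW (truncS σ n) (moll Φ n) := by
  funext x
  simp only [sigmaSqReg, convol]
  exact convol_eq_convW (truncS σ n) (moll Φ n) x

lemma bReg_eq (Φ : SchwartzMap ℝ ℝ) (n : ℕ) :
    bReg b Φ n = convW (truncB b n) (moll Φ n) := by
  funext x
  simp only [bReg, convol]
  exact convol_eq_convW (truncB b n) (moll Φ n) x

lemma sigmaSqReg_continuous (hσ : Continuous σ)
    (Φ : SchwartzMap ℝ ℝ) (n : ℕ) : Continuous (sigmaSqReg σ Φ n) := by
  rw [sigmaSqReg_eq]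
  obtain ⟨C, hC, hb⟩ := moll_decay5 Φ
  exact continuous_convW (truncS_cont hσ n) (truncS_bound n)
    (continuous_moll Φ n) (hb n)

lemma bReg_hasDerivAt (hb : Continuous b) (Φ : SchwartzMap ℝ ℝ) (n : ℕ) (x : ℝ) :
    HasDerivAt (bReg b Φ n) (convW (truncB b n) (mollD Φ n) x) x := by
  rw [bReg_eq]
  obtain ⟨C, hC, hd1⟩ := moll_decay5 Φ
  obtain ⟨C', hC', hd2⟩ := mollD_decay5 Φ
  exact hasDerivAt_convW (truncB_cont hb n) (truncB_bound n)
    (continuous_moll Φ n) (hd1 n) (continuous_mollD Φ n) (hd2 n)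
    (hasDerivAt_moll Φ n) x

lemma deriv_bReg (hb : Continuous b) (Φ : SchwartzMap ℝ ℝ) (n : ℕ) :
    deriv (bReg b Φ n) = convW (truncB b n) (mollD Φ n) := by
  funext x; exact (bReg_hasDerivAt hb Φ n x).deriv

lemma deriv_bReg_continuous (hb : Continuous b) (Φ : SchwartzMap ℝ ℝ) (n : ℕ) :
    Continuous (deriv (bReg b Φ n)) := by
  rw [deriv_bReg hb]
  obtain ⟨C', hC', hd2⟩ := mollD_decay5 Φ
  exact continuous_convW (truncB_cont hb n) (truncB_bound n)
    (continuous_mollD Φ n) (hd2 n)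

lemma integrable_decay0 (c : ℝ) (k : ℕ) (hk : 2 ≤ k) :
    Integrable (fun t : ℝ => c / (1 + |t|)^k) := by
  have := integrable_shift_decay c 0 k hk
  simpa using this

lemma integrable_moll (Φ : SchwartzMap ℝ ℝ) (n : ℕ) : Integrable (moll Φ n) := by
  obtain ⟨C, hC, h⟩ := moll_decay5 Φ
  refine Integrable.mono' (integrable_decay0 ((n:ℝ)*C) 5 (by norm_num)) (continuous_moll Φ n).aestronglyMeasurable ?_
  exact Eventually.of_forall fun t => by simpa [Real.norm_eq_abs] using h n t

lemma integral_moll (Φ : SchwartzMap ℝ ℝ) (hΦ : (∫ x : ℝ, Φ x) = 1) {n : ℕ} (hn : 1 ≤ n) :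
    (∫ x : ℝ, moll Φ n x) = 1 := by
  have hn0 : (0:ℝ) < n := by exact_mod_cast hn
  have h1 : (∫ x : ℝ, Φ ((n:ℝ) * x)) = |((n:ℝ))⁻¹| • ∫ y : ℝ, Φ y :=
    MeasureTheory.Measure.integral_comp_mul_left (fun y => Φ y) (n:ℝ)
  calc (∫ x : ℝ, moll Φ n x) = ∫ x : ℝ, (n:ℝ) * Φ ((n:ℝ) * x) := rfl
    _ = (n:ℝ) * ∫ x : ℝ, Φ ((n:ℝ) * x) := MeasureTheory.integral_const_mul _ _
    _ = (n:ℝ) * (|((n:ℝ))⁻¹| * ∫ y : ℝ, Φ y) := by rw [h1]; simp [smul_eq_mul]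
    _ = 1 := by
        rw [hΦ, abs_of_pos (by positivity)]
        field_simp

lemma integral_abs_moll (Φ : SchwartzMap ℝ ℝ) {n : ℕ} (hn : 1 ≤ n) :
    (∫ x : ℝ, |moll Φ n x|) = ∫ x : ℝ, |Φ x| := by
  have hn0 : (0:ℝ) < n := by exact_mod_cast hn
  have h1 : (∫ x : ℝ, |Φ ((n:ℝ) * x)|) = |((n:ℝ))⁻¹| • ∫ y : ℝ, |Φ y| :=
    MeasureTheory.Measure.integral_comp_mul_left (fun y => |Φ y|) (n:ℝ)
  calc (∫ x : ℝ, |moll Φ n x|) = ∫ x : ℝ, (n:ℝ) * |Φ ((n:ℝ) * x)| := by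
        congr 1; funext x; rw [moll, abs_mul, abs_of_pos hn0]
    _ = (n:ℝ) * ∫ x : ℝ, |Φ ((n:ℝ) * x)| := MeasureTheory.integral_const_mul _ _
    _ = (n:ℝ) * (|((n:ℝ))⁻¹| * ∫ y : ℝ, |Φ y|) := by rw [h1]; simp [smul_eq_mul]
    _ = ∫ y : ℝ, |Φ y| := by
        rw [abs_of_pos (by positivity)]
        field_simp

lemma integral_shift (g : ℝ → ℝ) (x : ℝ) : (∫ t : ℝ, g (x - t)) = ∫ t : ℝ, g t :=
  integral_sub_left_eq_self g volume x

lemma moll_tail_bound {Φ : SchwartzMap ℝ ℝ} {C δ : ℝ} (hC : 0 < C)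
    (hΦd : ∀ z, |Φ z| ≤ C / (1 + |z|)^5) (hδ : 0 < δ) {n : ℕ} (hn : 1 ≤ n)
    {y : ℝ} (hy : δ ≤ |y|) :
    |moll Φ n y| ≤ C / ((n:ℝ)^2 * δ^3) / (1 + |y|)^2 := by
  have hn0 : (0:ℝ) < n := by exact_mod_cast hn
  have hn1 : (1:ℝ) ≤ n := by exact_mod_cast hn
  have hy0 : 0 < |y| := lt_of_lt_of_le hδ hy
  have key : ((n:ℝ)*|y|)^3 * (1 + |y|)^2 ≤ (1 + (n:ℝ)*|y|)^5 := by
    have h1 : (n:ℝ)*|y| ≤ 1 + (n:ℝ)*|y| := by linarith [mul_nonneg hn0.le (abs_nonneg y)]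
    have h2 : 1 + |y| ≤ 1 + (n:ℝ)*|y| := by nlinarith [abs_nonneg y]
    calc ((n:ℝ)*|y|)^3 * (1 + |y|)^2 ≤ (1 + (n:ℝ)*|y|)^3 * (1 + (n:ℝ)*|y|)^2 := by
          apply mul_le_mul (pow_le_pow_left₀ (by positivity) h1 3)
            (pow_le_pow_left₀ (by positivity) h2 2) (by positivity) (by positivity)
      _ = (1 + (n:ℝ)*|y|)^5 := by ring
  have habs : |(n:ℝ)*y| = (n:ℝ)*|y| := by
    rw [abs_mul, abs_of_pos hn0]
  calc |moll Φ n y| = (n:ℝ) * |Φ ((n:ℝ)*y)| := by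
        rw [moll, abs_mul, abs_of_pos hn0]
    _ ≤ (n:ℝ) * (C / (1 + (n:ℝ)*|y|)^5) := by
        have := hΦd ((n:ℝ)*y); rw [habs] at this
        exact mul_le_mul_of_nonneg_left this hn0.le
    _ ≤ (n:ℝ) * (C / (((n:ℝ)*|y|)^3 * (1 + |y|)^2)) := by
        apply mul_le_mul_of_nonneg_left _ hn0.le
        apply div_le_div_of_nonneg_left hC.le (by positivity) key
    _ ≤ (n:ℝ) * (C / (((n:ℝ)*δ)^3 * (1 + |y|)^2)) := by
        apply mul_le_mul_of_nonneg_left _ hn0.le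
        apply div_le_div_of_nonneg_left hC.le (by positivity)
        have : ((n:ℝ)*δ)^3 ≤ ((n:ℝ)*|y|)^3 := by
          apply pow_le_pow_left₀ (by positivity)
          exact mul_le_mul_of_nonneg_left hy hn0.le
        exact mul_le_mul_of_nonneg_right this (by positivity)
    _ = C / ((n:ℝ)^2 * δ^3) / (1 + |y|)^2 := by
        field_simp

theorem tlu_trunc_conv (u : ℝ → ℝ) (hu : Continuous u) (hu0 : ∀ x, 0 ≤ u x)
    (Φ : SchwartzMap ℝ ℝ) (hΦ1 : (∫ x : ℝ, Φ x) = 1) :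
    TendstoLocallyUniformly
      (fun (n : ℕ) x => convW (fun z => min (u z) (n:ℝ)) (moll Φ n) x) u atTop := by
  obtain ⟨C, hC, hΦd⟩ := schwartz_decay5 Φ
  obtain ⟨C₁, hC₁, hmd⟩ := moll_decay5 Φ
  rw [tendstoLocallyUniformly_iff_forall_isCompact]
  intro K hK
  rw [Metric.tendstoUniformlyOn_iff]
  intro ε hε
  obtain ⟨r, hr⟩ := hK.isBounded.subset_closedBall 0
  set R : ℝ := max r 0 + 1 with hR
  have hR1 : 1 ≤ R := by
    rw [hR]; linarith [le_max_right r (0:ℝ)]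
  have hKR : ∀ x ∈ K, |x| ≤ R := by
    intro x hx
    have := hr hx
    rw [Metric.mem_closedBall, Real.dist_eq, sub_zero] at this
    calc |x| ≤ r := this
      _ ≤ max r 0 := le_max_left _ _
      _ ≤ R := by simp [hR]
  set J : Set ℝ := Icc (-(R+1)) (R+1) with hJdef
  have hJ : IsCompact J := isCompact_Icc
  obtain ⟨M, hM⟩ := hJ.exists_bound_of_continuousOn hu.continuousOn
  have hJne : (R+1) ∈ J := by
    constructor <;> simp <;> linarith
  have hM0 : 0 ≤ M := le_trans (norm_nonneg _) (hM _ hJne)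
  set I := ∫ x : ℝ, |Φ x| with hI
  have hI0 : 0 ≤ I := integral_nonneg fun x => abs_nonneg _
  set ε' := ε / (2*(I+1)) with hε'def
  have hε' : 0 < ε' := by positivity
  have huc := hJ.uniformContinuousOn_of_continuous hu.continuousOn
  rw [Metric.uniformContinuousOn_iff] at huc
  obtain ⟨δ₀, hδ₀, hδprop⟩ := huc ε' hε'
  set δ : ℝ := min (δ₀/2) 1 with hδdef
  have hδpos : 0 < δ := by
    apply lt_min (by linarith) one_pos
  have hδ1 : δ ≤ 1 := min_le_right _ _
  have hδhalf : δ < δ₀ := lt_of_le_of_lt (min_le_left _ _) (by linarith)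
  set K₂ := ∫ t : ℝ, (1:ℝ) / (1 + |t|)^2 with hK₂
  have hK₂0 : 0 ≤ K₂ := integral_nonneg fun x => by positivity
  have h3 : Tendsto (fun n : ℕ => 2*(C/δ^3*K₂) / (n:ℝ)) atTop (𝓝 0) :=
    tendsto_const_div_atTop_nhds_zero_nat _
  have h3' : ∀ᶠ n : ℕ in atTop, 2*(C/δ^3*K₂) / (n:ℝ) < ε/2 :=
    h3.eventually (gt_mem_nhds (by linarith))
  filter_upwards [eventually_ge_atTop 1, eventually_ge_atTop ⌈M⌉₊, h3'] with n hn1 hnM h3n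
  intro x hxK
  -- setup for fixed n, x
  have hn0 : (0:ℝ) < n := by exact_mod_cast hn1
  have hMn : M ≤ (n:ℝ) := le_trans (Nat.le_ceil M) (by exact_mod_cast hnM)
  have hxR : |x| ≤ R := hKR x hxK
  have hxJ : x ∈ J := by
    rw [hJdef, mem_Icc]
    rw [abs_le] at hxR
    constructor <;> linarith [hxR.1, hxR.2]
  set trunc : ℝ → ℝ := fun z => min (u z) (n:ℝ) with htrunc
  have htruncc : Continuous trunc := hu.min continuous_const
  have htruncb : ∀ z, |trunc z| ≤ (n:ℝ) := by
    intro z; rw [abs_le]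
    exact ⟨le_trans (by linarith) (le_min (hu0 z) hn0.le), min_le_right _ _⟩
  set φn := moll Φ n with hφn
  have g1 : Integrable (fun t => trunc t * φn (x - t)) :=
    integrable_convW_integrand htruncc htruncb (continuous_moll Φ n) (hmd n) x
  have g2 : Integrable (fun t => u x * φn (x - t)) :=
    (((integrable_moll Φ n).comp_sub_left x).const_mul (u x))
  have h4 : (∫ t : ℝ, u x * φn (x - t)) = u x := by
    rw [MeasureTheory.integral_const_mul]
    rw [integral_shift φn x, integral_moll Φ hΦ1 hn1, mul_one]
  have hTu : convW trunc φn x - u x = ∫ t : ℝ, (trunc t - u x) * φn (x - t) := by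
    have e : (∫ t : ℝ, (trunc t - u x) * φn (x - t))
        = (∫ t : ℝ, trunc t * φn (x - t)) - ∫ t : ℝ, u x * φn (x - t) := by
      rw [← integral_sub g1 g2]; congr 1; funext t; ring
    unfold convW
    rw [e, h4]
  -- the bound function
  set coef := ((n:ℝ) + M) * (C / ((n:ℝ)^2 * δ^3)) with hcoef
  have hcoef0 : 0 ≤ coef := by positivity
  set B : ℝ → ℝ := fun t => ε' * |φn (x - t)| + coef * (1 / (1 + |x - t|)^2) with hB
  have hBint : Integrable B := by
    apply Integrable.add
    · exact (((integrable_moll Φ n).comp_sub_left x).abs.const_mul ε')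
    · have := (integrable_shift_decay 1 x 2 (by norm_num)).const_mul coef
      simpa using this
  have hptwise : ∀ t : ℝ, ‖(trunc t - u x) * φn (x - t)‖ ≤ B t := by
    intro t
    rw [Real.norm_eq_abs, abs_mul]
    rcases lt_or_ge |x - t| δ with hnear | hfar
    · -- near case
      have htJ : t ∈ J := by
        rw [hJdef, mem_Icc]
        have : |t| ≤ |x| + |x - t| := by
          calc |t| = |x - (x - t)| := by ring_nf
            _ ≤ |x| + |x - t| := abs_sub _ _
        have h5 : |t| ≤ R + 1 := by linarith [hxR, hnear.le, hδ1]
        rw [abs_le] at h5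
        exact ⟨by linarith [h5.1], h5.2⟩
      have hud : dist (u t) (u x) < ε' := by
        apply hδprop t htJ x hxJ
        rw [Real.dist_eq]
        calc |t - x| = |x - t| := abs_sub_comm _ _
          _ < δ := hnear
          _ < δ₀ := hδhalf
      have hutM : u t ≤ M := le_trans (le_abs_self _) (hM t htJ)
      have htr : trunc t = u t := min_eq_left (le_trans hutM hMn)
      have h6 : |trunc t - u x| ≤ ε' := by
        rw [htr, ← Real.dist_eq]
        exact hud.le
      calc |trunc t - u x| * |φn (x - t)| ≤ ε' * |φn (x - t)| :=
          mul_le_mul_of_nonneg_right h6 (abs_nonneg _)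
        _ ≤ B t := le_add_of_nonneg_right (by positivity)
    · -- far case
      have h7 : |trunc t - u x| ≤ (n:ℝ) + M := by
        have h8 : |u x| ≤ M := by
          rw [← Real.norm_eq_abs]; exact hM x hxJ
        calc |trunc t - u x| ≤ |trunc t| + |u x| := abs_sub _ _
          _ ≤ (n:ℝ) + M := add_le_add (htruncb t) h8
      have h9 : |φn (x - t)| ≤ C / ((n:ℝ)^2 * δ^3) / (1 + |x - t|)^2 :=
        moll_tail_bound hC hΦd hδpos hn1 hfar
      calc |trunc t - u x| * |φn (x - t)|
          ≤ ((n:ℝ) + M) * (C / ((n:ℝ)^2 * δ^3) / (1 + |x - t|)^2) :=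
            mul_le_mul h7 h9 (abs_nonneg _) (by positivity)
        _ = coef * (1 / (1 + |x - t|)^2) := by rw [hcoef]; ring
        _ ≤ B t := le_add_of_nonneg_left (by positivity)
  have hmain : |convW trunc φn x - u x| ≤ ∫ t : ℝ, B t := by
    rw [hTu, ← Real.norm_eq_abs]
    exact norm_integral_le_of_norm_le hBint (Eventually.of_forall hptwise)
  have hBval : (∫ t : ℝ, B t) = ε' * I + coef * K₂ := by
    rw [hB]
    rw [integral_add (((integrable_moll Φ n).comp_sub_left x).abs.const_mul ε')
      (by simpa using (integrable_shift_decay 1 x 2 (by norm_num)).const_mul coef)]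
    congr 1
    · rw [MeasureTheory.integral_const_mul]
      congr 1
      have := integral_shift (fun t => |φn t|) x
      rw [this, integral_abs_moll Φ hn1]
    · rw [MeasureTheory.integral_const_mul]
      congr 1
      exact integral_shift (fun t => 1 / (1 + |t|)^2) x
  have hfirst : ε' * I < ε / 2 := by
    have : ε' * I < ε' * (I + 1) := by
      apply mul_lt_mul_of_pos_left (by linarith) hε'
    have heq : ε' * (I + 1) = ε / 2 := by
      rw [hε'def]; field_simp
    linarith
  have hsecond : coef * K₂ < ε / 2 := by
    have hle : coef * K₂ ≤ 2*(C/δ^3*K₂) / (n:ℝ) := by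
      rw [hcoef]
      have h10 : (n:ℝ) + M ≤ 2 * n := by linarith
      calc ((n:ℝ) + M) * (C / ((n:ℝ)^2 * δ^3)) * K₂
          ≤ (2*(n:ℝ)) * (C / ((n:ℝ)^2 * δ^3)) * K₂ := by
            apply mul_le_mul_of_nonneg_right (mul_le_mul_of_nonneg_right h10 (by positivity)) hK₂0
        _ = 2*(C/δ^3*K₂) / (n:ℝ) := by field_simp
    linarith
  rw [Real.dist_eq, abs_sub_comm]
  calc |convW trunc φn x - u x| ≤ ε' * I + coef * K₂ := by rw [← hBval]; exact hmain
    _ < ε/2 + ε/2 := add_lt_add hfirst hsecond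
    _ = ε := by ring

lemma tlu_iff {F : ℕ → ℝ → ℝ} {f : ℝ → ℝ} :
    TendstoLocallyUniformly F f atTop ↔
      ∀ r : ℝ, 0 < r → ∀ ε : ℝ, 0 < ε →
        ∀ᶠ n in atTop, ∀ x ∈ Icc (-r) r, |F n x - f x| < ε := by
  rw [tendstoLocallyUniformly_iff_forall_isCompact]
  constructor
  · intro h r hr ε hε
    have := (Metric.tendstoUniformlyOn_iff).mp (h (Icc (-r) r) isCompact_Icc) ε hε
    filter_upwards [this] with n hn x hx
    rw [abs_sub_comm, ← Real.dist_eq]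
    exact hn x hx
  · intro h K hK
    rw [Metric.tendstoUniformlyOn_iff]
    intro ε hε
    obtain ⟨r, hr⟩ := hK.isBounded.subset_closedBall 0
    have hr1 : K ⊆ Icc (-(max r 1)) (max r 1) := by
      intro x hx
      have := hr hx
      rw [Metric.mem_closedBall, Real.dist_eq, sub_zero] at this
      rw [mem_Icc]
      have h1 : |x| ≤ max r 1 := le_trans this (le_max_left _ _)
      rw [abs_le] at h1
      exact ⟨h1.1, h1.2⟩
    filter_upwards [h (max r 1) (lt_of_lt_of_le one_pos (le_max_right _ _)) ε hε] with n hn x hx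
    rw [Real.dist_eq, abs_sub_comm]
    exact hn x (hr1 hx)


lemma tlu_const (g : ℝ → ℝ) : TendstoLocallyUniformly (fun _ : ℕ => g) g atTop := by
  rw [tlu_iff]
  intro r hr ε hε
  exact Eventually.of_forall fun n x _ => by simpa using hε

lemma tlu_congr {F G : ℕ → ℝ → ℝ} {f : ℝ → ℝ}
    (h : ∀ r : ℝ, 0 < r → ∀ᶠ n in atTop, ∀ x ∈ Icc (-r) r, F n x = G n x)
    (hF : TendstoLocallyUniformly F f atTop) : TendstoLocallyUniformly G f atTop := by
  rw [tlu_iff] at hF ⊢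
  intro r hr ε hε
  filter_upwards [h r hr, hF r hr ε hε] with n h1 h2 x hx
  rw [← h1 x hx]; exact h2 x hx

/-- bound of a continuous function on Icc -/
lemma cont_bound (g : ℝ → ℝ) (hg : Continuous g) (r : ℝ) :
    ∃ A : ℝ, 0 ≤ A ∧ ∀ x ∈ Icc (-r) r, |g x| ≤ A := by
  obtain ⟨A, hA⟩ := (isCompact_Icc (a := -r) (b := r)).exists_bound_of_continuousOn hg.continuousOn
  refine ⟨max A 0, le_max_right _ _, fun x hx => ?_⟩
  exact le_trans (hA x hx) (le_max_left _ _)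

lemma tlu_mul {F G : ℕ → ℝ → ℝ} {f g : ℝ → ℝ}
    (hF : TendstoLocallyUniformly F f atTop) (hG : TendstoLocallyUniformly G g atTop)
    (hf : Continuous f) (hg : Continuous g) :
    TendstoLocallyUniformly (fun n x => F n x * G n x) (fun x => f x * g x) atTop := by
  rw [tlu_iff] at hF hG ⊢
  intro r hr ε hε
  obtain ⟨A, hA0, hA⟩ := cont_bound f hf r
  obtain ⟨B, hB0, hB⟩ := cont_bound g hg r
  set ε₁ := min 1 (ε / (2 * (A + B + 2))) with hε₁def
  have hε₁ : 0 < ε₁ := lt_min one_pos (by positivity)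
  filter_upwards [hF r hr ε₁ hε₁, hG r hr ε₁ hε₁] with n h1 h2 x hx
  have e1 := h1 x hx
  have e2 := h2 x hx
  have hFb : |F n x| ≤ A + 1 := by
    calc |F n x| = |(F n x - f x) + f x| := by ring_nf
      _ ≤ |F n x - f x| + |f x| := abs_add_le _ _
      _ ≤ 1 + A := add_le_add (le_trans e1.le (min_le_left _ _)) (hA x hx)
      _ = A + 1 := by ring
  calc |F n x * G n x - f x * g x|
      = |F n x * (G n x - g x) + (F n x - f x) * g x| := by ring_nf
    _ ≤ |F n x * (G n x - g x)| + |(F n x - f x) * g x| := abs_add_le _ _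
    _ = |F n x| * |G n x - g x| + |F n x - f x| * |g x| := by rw [abs_mul, abs_mul]
    _ ≤ (A + 1) * ε₁ + ε₁ * B := by
        apply add_le_add
        · exact mul_le_mul hFb e2.le (abs_nonneg _) (by linarith)
        · exact mul_le_mul e1.le (hB x hx) (abs_nonneg _) hε₁.le
    _ = (A + B + 1) * ε₁ := by ring
    _ ≤ (A + B + 1) * (ε / (2 * (A + B + 2))) := by
        apply mul_le_mul_of_nonneg_left (min_le_right _ _) (by linarith)
    _ < ε := by
        rw [div_eq_mul_inv]
        rw [show (A + B + 1) * (ε * (2 * (A + B + 2))⁻¹) = ε * ((A + B + 1) / (2 * (A + B + 2))) by ring]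
        have : (A + B + 1) / (2 * (A + B + 2)) < 1 := by
          rw [div_lt_one (by positivity)]; linarith
        nlinarith

lemma tlu_exp {S : ℕ → ℝ → ℝ} {Sg : ℝ → ℝ}
    (hS : TendstoLocallyUniformly S Sg atTop) (hSgc : Continuous Sg) :
    TendstoLocallyUniformly (fun n x => Real.exp (S n x)) (fun x => Real.exp (Sg x)) atTop := by
  rw [tlu_iff] at hS ⊢
  intro r hr ε hε
  obtain ⟨B, hB0, hB⟩ := cont_bound (fun x => Real.exp (Sg x)) (Real.continuous_exp.comp hSgc) r
  set ε₁ := min 1 (ε / (2 * (B + 1))) with hε₁def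
  have hε₁ : 0 < ε₁ := lt_min one_pos (by positivity)
  filter_upwards [hS r hr ε₁ hε₁] with n h1 x hx
  have e1 := h1 x hx
  have key : Real.exp (S n x) - Real.exp (Sg x) = Real.exp (Sg x) * (Real.exp (S n x - Sg x) - 1) := by
    rw [mul_sub, mul_one, ← Real.exp_add]; ring_nf
  rw [key, abs_mul]
  have h2 : |Real.exp (S n x - Sg x) - 1| ≤ 2 * |S n x - Sg x| :=
    Real.abs_exp_sub_one_le (le_trans e1.le (min_le_left _ _))
  calc |Real.exp (Sg x)| * |Real.exp (S n x - Sg x) - 1|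
      ≤ B * (2 * ε₁) := by
        apply mul_le_mul (hB x hx) (le_trans h2 (by linarith)) (abs_nonneg _) hB0
    _ ≤ B * (2 * (ε / (2 * (B + 1)))) := by
        apply mul_le_mul_of_nonneg_left _ hB0
        have := min_le_right (1:ℝ) (ε / (2 * (B + 1)))
        linarith [this]
    _ = ε * (B / (B + 1)) := by field_simp
    _ < ε := by
        have : B / (B + 1) < 1 := by rw [div_lt_one (by positivity)]; linarith
        nlinarith

lemma tlu_inv {F : ℕ → ℝ → ℝ} {f : ℝ → ℝ}
    (hF : TendstoLocallyUniformly F f atTop) (hf : Continuous f) (hpos : ∀ x, 0 < f x) :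
    TendstoLocallyUniformly (fun n x => (F n x)⁻¹) (fun x => (f x)⁻¹) atTop := by
  rw [tlu_iff] at hF ⊢
  intro r hr ε hε
  obtain ⟨c, hcmem, hc⟩ := (isCompact_Icc (a := -r) (b := r)).exists_isMinOn
    (nonempty_Icc.mpr (by linarith)) hf.continuousOn
  set m := f c with hm
  have hm0 : 0 < m := hpos c
  have hmle : ∀ x ∈ Icc (-r) r, m ≤ f x := fun x hx => hc hx
  set ε₁ := min (m/2) (ε * m^2 / 4) with hε₁def
  have hε₁ : 0 < ε₁ := lt_min (by linarith) (by positivity)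
  filter_upwards [hF r hr ε₁ hε₁] with n h1 x hx
  have e1 := h1 x hx
  have hfx : m ≤ f x := hmle x hx
  have hFx : m/2 ≤ F n x := by
    have : |F n x - f x| < m/2 := lt_of_lt_of_le e1 (min_le_left _ _)
    rw [abs_lt] at this
    linarith
  have hFx0 : F n x ≠ 0 := (lt_of_lt_of_le (by linarith) hFx : (0:ℝ) < F n x).ne'
  have hfx0 : f x ≠ 0 := (hpos x).ne'
  have key : (F n x)⁻¹ - (f x)⁻¹ = (f x - F n x) / (F n x * f x) := by
    field_simp
  rw [key, abs_div]
  have hden : m^2/2 ≤ |F n x * f x| := by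
    rw [abs_mul]
    rw [abs_of_pos (by linarith : (0:ℝ) < F n x), abs_of_pos (hpos x)]
    calc m^2/2 = (m/2) * m := by ring
      _ ≤ F n x * f x := mul_le_mul hFx hfx hm0.le (by linarith)
  have hnum : |f x - F n x| < ε₁ := by rw [abs_sub_comm]; exact e1
  have h1' : |f x - F n x| / |F n x * f x| ≤ |f x - F n x| / (m^2/2) :=
    div_le_div_of_nonneg_left (abs_nonneg _) (by positivity : (0:ℝ) < m^2/2) hden
  have h2' : |f x - F n x| / (m^2/2) < ε₁ / (m^2/2) :=
    (div_lt_div_iff_of_pos_right (by positivity : (0:ℝ) < m^2/2)).mpr hnum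
  have h3' : ε₁ / (m^2/2) ≤ (ε * m^2/4) / (m^2/2) :=
    (div_le_div_iff_of_pos_right (by positivity : (0:ℝ) < m^2/2)).mpr (min_le_right _ _)
  have h4' : (ε * m^2/4) / (m^2/2) = ε/2 := by field_simp; ring
  linarith


/-- FTC: continuous integrand -/
lemma hasDerivAt_primitive {g : ℝ → ℝ} (hg : Continuous g) (x : ℝ) :
    HasDerivAt (fun y => ∫ t in (0:ℝ)..y, g t) (g x) x :=
  intervalIntegral.integral_hasDerivAt_right (hg.intervalIntegrable _ _)
    (hg.stronglyMeasurableAtFilter _ _) hg.continuousAt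

lemma tlu_integral {F : ℕ → ℝ → ℝ} {f : ℝ → ℝ}
    (hF : TendstoLocallyUniformly F f atTop)
    (hFc : ∀ᶠ n in atTop, Continuous (F n)) (hfc : Continuous f) :
    TendstoLocallyUniformly (fun n x => ∫ t in (0:ℝ)..x, F n t)
      (fun x => ∫ t in (0:ℝ)..x, f t) atTop := by
  rw [tlu_iff] at hF ⊢
  intro r hr ε hε
  have hε₁ : 0 < ε / (2 * (r + 1)) := by positivity
  filter_upwards [hF r hr _ hε₁, hFc] with n h1 hFcn x hx
  have hsub : ∀ y ∈ Set.uIoc (0:ℝ) x, |F n y - f y| ≤ ε / (2 * (r + 1)) := by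
    intro y hy
    apply (h1 y _).le
    rw [mem_Icc]
    rcases le_or_gt 0 x with h | h
    · rw [uIoc_of_le h] at hy
      rw [mem_Icc] at hx
      exact ⟨by linarith [hy.1.le], le_trans hy.2 hx.2⟩
    · rw [uIoc_of_ge h.le] at hy
      rw [mem_Icc] at hx
      exact ⟨le_trans hx.1 hy.1.le, by linarith [hy.2]⟩
  have heq : (∫ t in (0:ℝ)..x, F n t) - ∫ t in (0:ℝ)..x, f t
      = ∫ t in (0:ℝ)..x, (F n t - f t) := by
    rw [intervalIntegral.integral_sub (hFcn.intervalIntegrable _ _)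
      (hfc.intervalIntegrable _ _)]
  rw [heq]
  have key : |∫ t in (0:ℝ)..x, (F n t - f t)| ≤ ε / (2 * (r + 1)) * |x - 0| := by
    rw [← Real.norm_eq_abs]
    apply intervalIntegral.norm_integral_le_of_norm_le_const
    intro y hy
    rw [Real.norm_eq_abs]
    exact hsub y hy
  have hxr : |x - 0| ≤ r := by
    rw [sub_zero]; rw [mem_Icc] at hx; rw [abs_le]; exact ⟨hx.1, hx.2⟩
  calc |∫ t in (0:ℝ)..x, (F n t - f t)| ≤ ε / (2 * (r + 1)) * |x - 0| := key
    _ ≤ ε / (2 * (r + 1)) * r := by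
        apply mul_le_mul_of_nonneg_left hxr (by positivity)
    _ < ε := by
        rw [div_mul_eq_mul_div, div_lt_iff₀ (by positivity)]
        nlinarith

def bump : ContDiffBump (0:ℝ) := ⟨1, 2, one_pos, one_lt_two⟩

def bumpSchwartz : SchwartzMap ℝ ℝ where
  toFun := bump.normed volume
  smooth' := by
    have := bump.contDiff_normed (μ := volume) (n := ⊤)
    exact this
  decay' := by
    intro k n
    have hsmooth : ContDiff ℝ (⊤:ℕ∞) (bump.normed volume) := bump.contDiff_normed
    have hcs : HasCompactSupport (bump.normed volume) := bump.hasCompactSupport_normed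
    have hcs' : HasCompactSupport (iteratedFDeriv ℝ n (bump.normed volume)) :=
      hcs.iteratedFDeriv n
    have hcont : Continuous (iteratedFDeriv ℝ n (bump.normed volume)) :=
      hsmooth.continuous_iteratedFDeriv (by exact_mod_cast le_top)
    have hg : Continuous (fun x : ℝ => ‖x‖^k * ‖iteratedFDeriv ℝ n (bump.normed volume) x‖) :=
      ((continuous_norm).pow k).mul hcont.norm
    have hgcs : HasCompactSupport (fun x : ℝ => ‖x‖^k * ‖iteratedFDeriv ℝ n (bump.normed volume) x‖) := by
      apply HasCompactSupport.mul_left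
      exact hcs'.norm
    obtain ⟨C, hC⟩ := hg.bounded_above_of_compact_support hgcs
    refine ⟨C, fun x => ?_⟩
    have := hC x
    calc ‖x‖^k * ‖iteratedFDeriv ℝ n (bump.normed volume) x‖
        ≤ ‖‖x‖^k * ‖iteratedFDeriv ℝ n (bump.normed volume) x‖‖ := le_abs_self _
      _ ≤ C := this

lemma bumpSchwartz_mollifier : IsMollifier bumpSchwartz := by
  have : (∫ x : ℝ, bumpSchwartz x) = ∫ x : ℝ, bump.normed volume x := rfl
  rw [IsMollifier, this]
  exact bump.integral_normed

lemma bumpSchwartz_nonneg (x : ℝ) : 0 ≤ bumpSchwartz x := bump.nonneg_normed x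

lemma bumpSchwartz_support {y : ℝ} (hy : bumpSchwartz y ≠ 0) : |y| < 2 := by
  have : y ∈ Function.support (bump.normed volume) := hy
  rw [bump.support_normed_eq] at this
  have h2 : bump.rOut = 2 := rfl
  rw [h2] at this
  simpa [Real.dist_eq] using this

lemma moll_bump_nonneg (n : ℕ) (y : ℝ) : 0 ≤ moll bumpSchwartz n y :=
  mul_nonneg (by positivity) (bumpSchwartz_nonneg _)

lemma moll_bump_support {n : ℕ} (hn : 1 ≤ n) {y : ℝ} (hy : moll bumpSchwartz n y ≠ 0) :
    |y| < 2 := by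
  have hn0 : (0:ℝ) < n := by exact_mod_cast hn
  have hΦ : bumpSchwartz ((n:ℝ) * y) ≠ 0 := by
    intro h; apply hy; rw [moll, h, mul_zero]
  have h2 := bumpSchwartz_support hΦ
  have hn1 : (1:ℝ) ≤ n := by exact_mod_cast hn
  have : |y| ≤ |(n:ℝ) * y| := by
    rw [abs_mul, abs_of_pos hn0]
    nlinarith [abs_nonneg y]
  linarith

lemma sigmaSqReg_bump_pos {σ : ℝ → ℝ} (hσ : Continuous σ) (hσpos : ∀ x, 0 < σ x)
    {n : ℕ} (hn : 1 ≤ n) (x : ℝ) : 0 < sigmaSqReg σ bumpSchwartz n x := by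
  rw [sigmaSqReg_eq]
  have hn1 : (1:ℝ) ≤ n := by exact_mod_cast hn
  -- minimum of truncS on [x-2, x+2]
  obtain ⟨z, hzmem, hz⟩ := (isCompact_Icc (a := x - 2) (b := x + 2)).exists_isMinOn
    (nonempty_Icc.mpr (by linarith)) (truncS_cont hσ n).continuousOn
  set c := truncS σ n z with hc
  have hc0 : 0 < c := by
    rw [hc]; unfold truncS
    exact lt_min (pow_pos (hσpos z) 2) (by linarith)
  have hmono : ∀ t : ℝ, c * moll bumpSchwartz n (x - t) ≤ truncS σ n t * moll bumpSchwartz n (x - t) := by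
    intro t
    rcases eq_or_ne (moll bumpSchwartz n (x - t)) 0 with h0 | h0
    · rw [h0, mul_zero, mul_zero]
    · have hsupp := moll_bump_support hn h0
      have htmem : t ∈ Icc (x - 2) (x + 2) := by
        rw [abs_lt] at hsupp
        rw [mem_Icc]
        constructor <;> linarith [hsupp.1, hsupp.2]
      exact mul_le_mul_of_nonneg_right (hz htmem) (moll_bump_nonneg n _)
  obtain ⟨C, hC, hmd⟩ := moll_decay5 bumpSchwartz
  have hint1 : Integrable (fun t => c * moll bumpSchwartz n (x - t)) :=
    ((integrable_moll bumpSchwartz n).comp_sub_left x).const_mul c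
  have hint2 : Integrable (fun t => truncS σ n t * moll bumpSchwartz n (x - t)) :=
    integrable_convW_integrand (truncS_cont hσ n) (truncS_bound n)
      (continuous_moll bumpSchwartz n) (hmd n) x
  have hle : (∫ t : ℝ, c * moll bumpSchwartz n (x - t))
      ≤ ∫ t : ℝ, truncS σ n t * moll bumpSchwartz n (x - t) :=
    integral_mono hint1 hint2 hmono
  have hval : (∫ t : ℝ, c * moll bumpSchwartz n (x - t)) = c := by
    rw [MeasureTheory.integral_const_mul, integral_shift (moll bumpSchwartz n) x,
      integral_moll bumpSchwartz bumpSchwartz_mollifier hn, mul_one]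
  rw [convW]
  calc (0:ℝ) < c := hc0
    _ = ∫ t : ℝ, c * moll bumpSchwartz n (x - t) := hval.symm
    _ ≤ _ := hle

end S6


namespace S6
open intervalIntegral

lemma tlu_tendsto_at {F : ℕ → ℝ → ℝ} {f : ℝ → ℝ}
    (h : TendstoLocallyUniformly F f atTop) (x : ℝ) :
    Tendsto (fun n => F n x) atTop (𝓝 (f x)) := by
  have h' : TendstoLocallyUniformlyOn F f atTop univ :=
    (tendstoLocallyUniformlyOn_univ).mpr h
  exact h'.tendsto_at (mem_univ x)

lemma tlu_neg {F : ℕ → ℝ → ℝ} {f : ℝ → ℝ}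
    (h : TendstoLocallyUniformly F f atTop) :
    TendstoLocallyUniformly (fun n x => -(F n x)) (fun x => -(f x)) atTop := by
  rw [tlu_iff] at h ⊢
  intro r hr ε hε
  filter_upwards [h r hr ε hε] with n h1 x hx
  have := h1 x hx
  rw [show -F n x - -f x = -(F n x - f x) by ring, abs_neg]
  exact this

lemma tlu_congr_lim {F : ℕ → ℝ → ℝ} {f g : ℝ → ℝ}
    (h : TendstoLocallyUniformly F f atTop) (hfg : ∀ x, f x = g x) :
    TendstoLocallyUniformly F g atTop := by
  have : f = g := funext hfg
  rwa [← this]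

lemma tlu_const_add {F : ℕ → ℝ → ℝ} {f : ℝ → ℝ} (c : ℝ)
    (h : TendstoLocallyUniformly F f atTop) :
    TendstoLocallyUniformly (fun n x => c + F n x) (fun x => c + f x) atTop := by
  rw [tlu_iff] at h ⊢
  intro r hr ε hε
  filter_upwards [h r hr ε hε] with n h1 x hx
  simpa using h1 x hx

lemma uIcc_zero_subset {r x : ℝ} (hx : x ∈ Icc (-r) r) : uIcc 0 x ⊆ Icc (-r) r := by
  rw [mem_Icc] at hx
  intro y hy
  rw [mem_uIcc] at hy
  rw [mem_Icc]
  rcases hy with ⟨h1, h2⟩ | ⟨h1, h2⟩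
  · exact ⟨by linarith, by linarith⟩
  · exact ⟨by linarith, by linarith⟩

variable {σ b : ℝ → ℝ}

lemma tlu_sigmaSq (hσ : Continuous σ) (Φ : SchwartzMap ℝ ℝ) (hΦ : IsMollifier Φ) :
    TendstoLocallyUniformly (fun n => sigmaSqReg σ Φ n) (fun x => σ x ^ 2) atTop := by
  have h := tlu_trunc_conv (fun z => σ z ^ 2) (hσ.pow 2) (fun x => sq_nonneg _) Φ hΦ
  have e : (fun n => sigmaSqReg σ Φ n)
      = fun (n : ℕ) x => convW (fun z => min (σ z ^ 2) (n:ℝ)) (moll Φ n) x := by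
    funext n
    exact sigmaSqReg_eq Φ n
  rw [e]
  exact h

lemma continuous_SigmaApprox_integrand (hσ : Continuous σ) (hb : Continuous b)
    {Φ : SchwartzMap ℝ ℝ} {n : ℕ} (hpos : ∀ y, 0 < sigmaSqReg σ Φ n y) :
    Continuous (fun y => deriv (bReg b Φ n) y / sigmaSqReg σ Φ n y) :=
  (deriv_bReg_continuous hb Φ n).div (sigmaSqReg_continuous hσ Φ n)
    (fun y => (hpos y).ne')

lemma hasDerivAt_SigmaApprox (hσ : Continuous σ) (hb : Continuous b)
    {Φ : SchwartzMap ℝ ℝ} {n : ℕ} (hpos : ∀ y, 0 < sigmaSqReg σ Φ n y) (x : ℝ) :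
    HasDerivAt (SigmaApprox σ b Φ n)
      (2 * (deriv (bReg b Φ n) x / sigmaSqReg σ Φ n x)) x := by
  have hq := continuous_SigmaApprox_integrand hσ hb hpos
  have := (hasDerivAt_primitive hq x).const_mul (2:ℝ)
  exact this

lemma continuous_SigmaApprox (hσ : Continuous σ) (hb : Continuous b)
    {Φ : SchwartzMap ℝ ℝ} {n : ℕ} (hpos : ∀ y, 0 < sigmaSqReg σ Φ n y) :
    Continuous (SigmaApprox σ b Φ n) := by
  rw [continuous_iff_continuousAt]
  exact fun x => (hasDerivAt_SigmaApprox hσ hb hpos x).continuousAt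

lemma contDiff_one_of_hasDerivAt {F G : ℝ → ℝ} (h : ∀ x, HasDerivAt F (G x) x)
    (hG : Continuous G) : ContDiff ℝ 1 F ∧ deriv F = G := by
  have e : deriv F = G := funext fun x => (h x).deriv
  exact ⟨contDiff_one_iff_deriv.mpr ⟨fun x => (h x).differentiableAt, by rw [e]; exact hG⟩, e⟩

lemma contDiff_two_of_hasDerivAt {F G : ℝ → ℝ} (h : ∀ x, HasDerivAt F (G x) x)
    (hG : ContDiff ℝ 1 G) : ContDiff ℝ 2 F := by
  have e : deriv F = G := funext fun x => (h x).deriv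
  rw [show (2 : WithTop ℕ∞) = 1 + 1 from by norm_num]
  refine contDiff_succ_iff_deriv.mpr ⟨fun x => (h x).differentiableAt, ?_, ?_⟩
  · intro h'; exact absurd h' (by norm_num)
  · rw [e]; exact hG

lemma contDiff_two_deriv_deriv {F : ℝ → ℝ} (h : ContDiff ℝ 2 F) :
    ContDiff ℝ 1 (deriv F) := by
  rw [show (2 : WithTop ℕ∞) = 1 + 1 from by norm_num] at h
  exact (contDiff_succ_iff_deriv.mp h).2.2

end S6


namespace S6

lemma forward {σ b Sg f ℓ : ℝ → ℝ} (hσc : Continuous σ) (hσpos : ∀ x, 0 < σ x)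
    (hbc : Continuous b) (hSg : SigmaExists σ b Sg) (hs : IsC1GenSolution σ b f ℓ) :
    ContDiff ℝ 1 f ∧ ∃ ψ : ℝ → ℝ, ContDiff ℝ 1 ψ ∧ ∀ x, deriv f x = Real.exp (-Sg x) * ψ x := by
  obtain ⟨hf1, hℓc, hsol⟩ := hs
  obtain ⟨fn, hfn2, hLc, hfnf, hfn'f', hLℓ⟩ := hsol bumpSchwartz bumpSchwartz_mollifier
  have hSgc : Continuous Sg := hSg.1
  have hSn : TendstoLocallyUniformly (fun n => SigmaApprox σ b bumpSchwartz n) Sg atTop :=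
    hSg.2 bumpSchwartz bumpSchwartz_mollifier
  have hσ2c : Continuous (fun x => σ x ^ 2) := hσc.pow 2
  have hσ2pos : ∀ x, 0 < σ x ^ 2 := fun x => pow_pos (hσpos x) 2
  have hf'c : Continuous (deriv f) := hf1.continuous_deriv le_rfl
  have hsq : TendstoLocallyUniformly (fun n => sigmaSqReg σ bumpSchwartz n)
      (fun x => σ x ^ 2) atTop := tlu_sigmaSq hσc bumpSchwartz bumpSchwartz_mollifier
  set Φ := bumpSchwartz with hΦdef
  set ψ : ℝ → ℝ := fun x => Real.exp (Sg x) * deriv f x with hψdef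
  set ρ : ℝ → ℝ := fun x => Real.exp (Sg x) * (2 * ℓ x * (σ x ^ 2)⁻¹) with hρdef
  have hexpSgc : Continuous (fun x => Real.exp (Sg x)) := Real.continuous_exp.comp hSgc
  have hρc : Continuous ρ :=
    hexpSgc.mul ((continuous_const.mul hℓc).mul (hσ2c.inv₀ fun x => (hσ2pos x).ne'))
  set Ψ : ℕ → ℝ → ℝ := fun n x => Real.exp (SigmaApprox σ b Φ n x) * deriv (fn n) x with hΨdef
  set Rn : ℕ → ℝ → ℝ := fun n x =>
    Real.exp (SigmaApprox σ b Φ n x) *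
      (2 * Lreg σ b Φ n (fn n) x * (sigmaSqReg σ Φ n x)⁻¹) with hRdef
  have hΨtlu : TendstoLocallyUniformly Ψ ψ atTop :=
    tlu_mul (tlu_exp hSn hSgc) hfn'f' hexpSgc hf'c
  have hRtlu : TendstoLocallyUniformly Rn ρ atTop := by
    apply tlu_mul (tlu_exp hSn hSgc) _ hexpSgc
      ((continuous_const.mul hℓc).mul (hσ2c.inv₀ fun x => (hσ2pos x).ne'))
    exact tlu_mul (tlu_mul (tlu_const (fun _ => (2:ℝ))) hLℓ continuous_const hℓc)
      (tlu_inv hsq hσ2c hσ2pos) (continuous_const.mul hℓc)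
      (hσ2c.inv₀ fun x => (hσ2pos x).ne')
  have hRc : ∀ n : ℕ, 1 ≤ n → Continuous (Rn n) := by
    intro n hn
    have hpos : ∀ y, 0 < sigmaSqReg σ Φ n y := fun y => sigmaSqReg_bump_pos hσc hσpos hn y
    exact (Real.continuous_exp.comp (continuous_SigmaApprox hσc hbc hpos)).mul
      ((continuous_const.mul (hLc n)).mul
        ((sigmaSqReg_continuous hσc Φ n).inv₀ fun y => (hpos y).ne'))
  have hiden : ∀ n : ℕ, 1 ≤ n → ∀ x, Ψ n x = Ψ n 0 + ∫ t in (0:ℝ)..x, Rn n t := by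
    intro n hn x
    have hpos : ∀ y, 0 < sigmaSqReg σ Φ n y := fun y => sigmaSqReg_bump_pos hσc hσpos hn y
    have hfnd1 : ContDiff ℝ 1 (deriv (fn n)) := contDiff_two_deriv_deriv (hfn2 n)
    have hΨd : ∀ y, HasDerivAt (Ψ n) (Rn n y) y := by
      intro y
      have hS := hasDerivAt_SigmaApprox hσc hbc hpos y
      have hE := hS.exp
      have hfd : HasDerivAt (deriv (fn n)) (deriv (deriv (fn n)) y) y :=
        ((hfnd1.differentiable one_ne_zero) y).hasDerivAt
      have hmul := hE.mul hfd
      have hval : Real.exp (SigmaApprox σ b Φ n y) *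
            (2 * (deriv (bReg b Φ n) y / sigmaSqReg σ Φ n y)) * deriv (fn n) y +
            Real.exp (SigmaApprox σ b Φ n y) * deriv (deriv (fn n)) y = Rn n y := by
        rw [hRdef]
        simp only [Lreg]
        have h0 : sigmaSqReg σ Φ n y ≠ 0 := (hpos y).ne'
        field_simp
        ring
      rw [hΨdef]
      exact hval ▸ hmul
    have hprim : ∀ y, HasDerivAt (fun x => ∫ t in (0:ℝ)..x, Rn n t) (Rn n y) y :=
      fun y => hasDerivAt_primitive (hRc n hn) y
    have hdiff0 : ∀ y, HasDerivAt (fun x => Ψ n x - ∫ t in (0:ℝ)..x, Rn n t) 0 y := by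
      intro y
      have := (hΨd y).sub (hprim y)
      rwa [sub_self] at this
    have hconst := is_const_of_deriv_eq_zero (𝕜 := ℝ)
      (f := fun x => Ψ n x - ∫ t in (0:ℝ)..x, Rn n t)
      (fun y => (hdiff0 y).differentiableAt)
      (fun y => (hdiff0 y).deriv) x 0
    simp only [intervalIntegral.integral_same] at hconst
    linarith [hconst]
  have hRc_ev : ∀ᶠ n in atTop, Continuous (Rn n) := by
    filter_upwards [eventually_ge_atTop 1] with n hn
    exact hRc n hn
  have hItlu := tlu_integral hRtlu hRc_ev hρc
  have key : ∀ x, ψ x = ψ 0 + ∫ t in (0:ℝ)..x, ρ t := by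
    intro x
    have t1 : Tendsto (fun n => Ψ n x) atTop (𝓝 (ψ x)) := tlu_tendsto_at hΨtlu x
    have t0 : Tendsto (fun n => Ψ n 0) atTop (𝓝 (ψ 0)) := tlu_tendsto_at hΨtlu 0
    have tI : Tendsto (fun n => ∫ t in (0:ℝ)..x, Rn n t) atTop
        (𝓝 (∫ t in (0:ℝ)..x, ρ t)) := tlu_tendsto_at hItlu x
    have t2 : Tendsto (fun n => Ψ n x) atTop (𝓝 (ψ 0 + ∫ t in (0:ℝ)..x, ρ t)) := by
      apply Tendsto.congr' _ (t0.add tI)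
      filter_upwards [eventually_ge_atTop 1] with n hn
      exact (hiden n hn x).symm
    exact tendsto_nhds_unique t1 t2
  have hψd : ∀ x, HasDerivAt ψ (ρ x) x := by
    intro x
    exact HasDerivAt.congr_of_eventuallyEq
      ((hasDerivAt_primitive hρc x).const_add (ψ 0))
      (Eventually.of_forall fun y => key y)
  obtain ⟨hψ1, _⟩ := contDiff_one_of_hasDerivAt hψd hρc
  refine ⟨hf1, ψ, hψ1, fun x => ?_⟩
  show deriv f x = Real.exp (-Sg x) * (Real.exp (Sg x) * deriv f x)
  rw [← mul_assoc, ← Real.exp_add, neg_add_cancel, Real.exp_zero, one_mul]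

end S6


namespace S6

lemma tlu_div_two {F : ℕ → ℝ → ℝ} {f : ℝ → ℝ}
    (h : TendstoLocallyUniformly F f atTop) :
    TendstoLocallyUniformly (fun n x => F n x / 2) (fun x => f x / 2) atTop := by
  rw [tlu_iff] at h ⊢
  intro r hr ε hε
  filter_upwards [h r hr ε hε] with n h1 x hx
  have := h1 x hx
  rw [show F n x / 2 - f x / 2 = (F n x - f x) / 2 by ring, abs_div]
  have h2 : |F n x - f x| / |(2:ℝ)| ≤ |F n x - f x| := by
    rw [abs_two]
    linarith [abs_nonneg (F n x - f x)]
  linarith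

def denF (σ : ℝ → ℝ) (Φ : SchwartzMap ℝ ℝ) (n : ℕ) (y : ℝ) : ℝ :=
  max (sigmaSqReg σ Φ n y) (((n:ℝ)+1)⁻¹)

def qF (σ b : ℝ → ℝ) (Φ : SchwartzMap ℝ ℝ) (n : ℕ) (y : ℝ) : ℝ :=
  deriv (bReg b Φ n) y / denF σ Φ n y

def StF (σ b : ℝ → ℝ) (Φ : SchwartzMap ℝ ℝ) (n : ℕ) (x : ℝ) : ℝ :=
  2 * ∫ t in (0:ℝ)..x, qF σ b Φ n t

def gF (σ b : ℝ → ℝ) (Φ : SchwartzMap ℝ ℝ) (ψ : ℝ → ℝ) (n : ℕ) (y : ℝ) : ℝ :=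
  Real.exp (-(StF σ b Φ n y)) * ψ y

def fF (σ b : ℝ → ℝ) (Φ : SchwartzMap ℝ ℝ) (ψ : ℝ → ℝ) (c : ℝ) (n : ℕ) (x : ℝ) : ℝ :=
  c + ∫ t in (0:ℝ)..x, gF σ b Φ ψ n t

section backward
variable {σ b Sg ψ : ℝ → ℝ} {Φ : SchwartzMap ℝ ℝ}

lemma denF_pos (σ : ℝ → ℝ) (Φ : SchwartzMap ℝ ℝ) (n : ℕ) (y : ℝ) : 0 < denF σ Φ n y :=
  lt_of_lt_of_le (by positivity) (le_max_right _ _)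

lemma denF_cont (hσc : Continuous σ) (Φ : SchwartzMap ℝ ℝ) (n : ℕ) :
    Continuous (denF σ Φ n) := ((sigmaSqReg_continuous hσc Φ n).max continuous_const)

lemma qF_cont (hσc : Continuous σ) (hbc : Continuous b) (Φ : SchwartzMap ℝ ℝ) (n : ℕ) :
    Continuous (qF σ b Φ n) :=
  (deriv_bReg_continuous hbc Φ n).div (denF_cont hσc Φ n) (fun y => (denF_pos σ Φ n y).ne')

lemma StF_hasDeriv (hσc : Continuous σ) (hbc : Continuous b) (Φ : SchwartzMap ℝ ℝ) (n : ℕ)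
    (y : ℝ) : HasDerivAt (StF σ b Φ n) (2 * qF σ b Φ n y) y :=
  (hasDerivAt_primitive (qF_cont hσc hbc Φ n) y).const_mul 2

lemma StF_contDiff (hσc : Continuous σ) (hbc : Continuous b) (Φ : SchwartzMap ℝ ℝ) (n : ℕ) :
    ContDiff ℝ 1 (StF σ b Φ n) :=
  (contDiff_one_of_hasDerivAt (StF_hasDeriv hσc hbc Φ n)
    (continuous_const.mul (qF_cont hσc hbc Φ n))).1

lemma gF_contDiff (hσc : Continuous σ) (hbc : Continuous b) (hψ1 : ContDiff ℝ 1 ψ)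
    (Φ : SchwartzMap ℝ ℝ) (n : ℕ) : ContDiff ℝ 1 (gF σ b Φ ψ n) :=
  (((StF_contDiff hσc hbc Φ n).neg).exp).mul hψ1

lemma fF_hasDeriv (hσc : Continuous σ) (hbc : Continuous b) (hψ1 : ContDiff ℝ 1 ψ)
    (Φ : SchwartzMap ℝ ℝ) (c : ℝ) (n : ℕ) (y : ℝ) :
    HasDerivAt (fF σ b Φ ψ c n) (gF σ b Φ ψ n y) y :=
  (hasDerivAt_primitive (gF_contDiff hσc hbc hψ1 Φ n).continuous y).const_add c

lemma fF_contDiff (hσc : Continuous σ) (hbc : Continuous b) (hψ1 : ContDiff ℝ 1 ψ)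
    (Φ : SchwartzMap ℝ ℝ) (c : ℝ) (n : ℕ) : ContDiff ℝ 2 (fF σ b Φ ψ c n) :=
  contDiff_two_of_hasDerivAt (fF_hasDeriv hσc hbc hψ1 Φ c n) (gF_contDiff hσc hbc hψ1 Φ n)

lemma deriv_fF (hσc : Continuous σ) (hbc : Continuous b) (hψ1 : ContDiff ℝ 1 ψ)
    (Φ : SchwartzMap ℝ ℝ) (c : ℝ) (n : ℕ) :
    deriv (fF σ b Φ ψ c n) = gF σ b Φ ψ n :=
  funext fun y => (fF_hasDeriv hσc hbc hψ1 Φ c n y).deriv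

lemma gF_hasDeriv (hσc : Continuous σ) (hbc : Continuous b) (hψ1 : ContDiff ℝ 1 ψ)
    (Φ : SchwartzMap ℝ ℝ) (n : ℕ) (y : ℝ) :
    HasDerivAt (gF σ b Φ ψ n)
      (Real.exp (-(StF σ b Φ n y)) * (deriv ψ y - 2 * qF σ b Φ n y * ψ y)) y := by
  have h1 : HasDerivAt (fun z => -(StF σ b Φ n z)) (-(2 * qF σ b Φ n y)) y :=
    (StF_hasDeriv hσc hbc Φ n y).neg
  have h2 := h1.exp
  have h3 : HasDerivAt ψ (deriv ψ y) y := (hψ1.differentiable one_ne_zero y).hasDerivAt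
  have h4 := h2.mul h3
  exact h4.congr_deriv (by ring)

lemma deriv_gF (hσc : Continuous σ) (hbc : Continuous b) (hψ1 : ContDiff ℝ 1 ψ)
    (Φ : SchwartzMap ℝ ℝ) (n : ℕ) :
    deriv (gF σ b Φ ψ n) = fun y =>
      Real.exp (-(StF σ b Φ n y)) * (deriv ψ y - 2 * qF σ b Φ n y * ψ y) :=
  funext fun y => (gF_hasDeriv hσc hbc hψ1 Φ n y).deriv

lemma Lreg_fF_eq (hσc : Continuous σ) (hbc : Continuous b) (hψ1 : ContDiff ℝ 1 ψ)
    (Φ : SchwartzMap ℝ ℝ) (c : ℝ) (n : ℕ) :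
    Lreg σ b Φ n (fF σ b Φ ψ c n) = fun x =>
      sigmaSqReg σ Φ n x / 2 *
        (Real.exp (-(StF σ b Φ n x)) * (deriv ψ x - 2 * qF σ b Φ n x * ψ x)) +
      deriv (bReg b Φ n) x * gF σ b Φ ψ n x := by
  funext x
  simp only [Lreg]
  rw [deriv_fF hσc hbc hψ1 Φ c n, deriv_gF hσc hbc hψ1 Φ n]

lemma Lreg_fF_cont (hσc : Continuous σ) (hbc : Continuous b) (hψ1 : ContDiff ℝ 1 ψ)
    (Φ : SchwartzMap ℝ ℝ) (c : ℝ) (n : ℕ) :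
    Continuous (Lreg σ b Φ n (fF σ b Φ ψ c n)) := by
  rw [Lreg_fF_eq hσc hbc hψ1 Φ c n]
  have hψ'c : Continuous (deriv ψ) := hψ1.continuous_deriv le_rfl
  exact (((sigmaSqReg_continuous hσc Φ n).div_const 2).mul
      ((Real.continuous_exp.comp (StF_contDiff hσc hbc Φ n).continuous.neg).mul
        (hψ'c.sub ((continuous_const.mul (qF_cont hσc hbc Φ n)).mul hψ1.continuous)))).add
    ((deriv_bReg_continuous hbc Φ n).mul (gF_contDiff hσc hbc hψ1 Φ n).continuous)

lemma eventual_lb (hσc : Continuous σ) (hσpos : ∀ x, 0 < σ x)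
    (Φ : SchwartzMap ℝ ℝ) (hΦ : IsMollifier Φ) {r : ℝ} (hr : 0 < r) :
    ∀ᶠ n : ℕ in atTop, ∀ y ∈ Icc (-r) r, ((n:ℝ)+1)⁻¹ ≤ sigmaSqReg σ Φ n y := by
  obtain ⟨z, hzmem, hz⟩ := (isCompact_Icc (a := -r) (b := r)).exists_isMinOn
    (nonempty_Icc.mpr (by linarith)) (hσc.pow 2).continuousOn
  have hc : 0 < σ z ^ 2 := pow_pos (hσpos z) 2
  have h1 := (tlu_iff.mp (tlu_sigmaSq hσc Φ hΦ)) r hr (σ z ^ 2 / 2) (by linarith)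
  have h2 : ∀ᶠ n : ℕ in atTop, ((n:ℝ)+1)⁻¹ < σ z ^ 2 / 2 := by
    have h3 := tendsto_one_div_add_atTop_nhds_zero_nat.eventually
      (gt_mem_nhds (show (0:ℝ) < σ z ^ 2 / 2 by linarith))
    filter_upwards [h3] with n hn
    rw [one_div] at hn
    exact hn
  filter_upwards [h1, h2] with n hn1 hn2 y hy
  have h4 := hn1 y hy
  have h5 : σ z ^ 2 ≤ σ y ^ 2 := hz hy
  rw [abs_lt] at h4
  linarith [h4.1, h4.2]

lemma StF_eventually_eq (hσc : Continuous σ) (hσpos : ∀ x, 0 < σ x) (hbc : Continuous b)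
    (Φ : SchwartzMap ℝ ℝ) (hΦ : IsMollifier Φ) {r : ℝ} (hr : 0 < r) :
    ∀ᶠ n : ℕ in atTop, ∀ x ∈ Icc (-r) r, SigmaApprox σ b Φ n x = StF σ b Φ n x := by
  filter_upwards [eventual_lb hσc hσpos Φ hΦ hr] with n hn x hx
  show (2 : ℝ) * _ = 2 * _
  congr 1
  apply intervalIntegral.integral_congr
  intro y hy
  have hyI : y ∈ Icc (-r) r := uIcc_zero_subset hx hy
  have := hn y hyI
  simp only [qF, denF]
  rw [max_eq_left this]

lemma StF_tlu (hσc : Continuous σ) (hσpos : ∀ x, 0 < σ x) (hbc : Continuous b)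
    (hSg : SigmaExists σ b Sg) (Φ : SchwartzMap ℝ ℝ) (hΦ : IsMollifier Φ) :
    TendstoLocallyUniformly (fun n => StF σ b Φ n) Sg atTop := by
  apply tlu_congr (fun r hr => StF_eventually_eq hσc hσpos hbc Φ hΦ hr) (hSg.2 Φ hΦ)

end backward

lemma backward {σ b Sg f : ℝ → ℝ} (hσc : Continuous σ) (hσpos : ∀ x, 0 < σ x)
    (hbc : Continuous b) (hSg : SigmaExists σ b Sg) (hf1 : ContDiff ℝ 1 f)
    {ψ : ℝ → ℝ} (hψ1 : ContDiff ℝ 1 ψ) (hψeq : ∀ x, deriv f x = Real.exp (-Sg x) * ψ x) :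
    ∃ ℓ : ℝ → ℝ, IsC1GenSolution σ b f ℓ := by
  have hSgc : Continuous Sg := hSg.1
  have hσ2c : Continuous (fun x : ℝ => σ x ^ 2) := hσc.pow 2
  have hσ2pos : ∀ x, 0 < σ x ^ 2 := fun x => pow_pos (hσpos x) 2
  have hψc : Continuous ψ := hψ1.continuous
  have hψ'c : Continuous (deriv ψ) := hψ1.continuous_deriv le_rfl
  have hf'c : Continuous (deriv f) := hf1.continuous_deriv le_rfl
  have hexpc : Continuous (fun x => Real.exp (-Sg x)) := Real.continuous_exp.comp hSgc.neg
  refine ⟨fun x => Real.exp (-Sg x) * (σ x ^ 2 / 2 * deriv ψ x), hf1,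
    hexpc.mul ((hσ2c.div_const 2).mul hψ'c), ?_⟩
  intro Φ hΦ
  refine ⟨fun n => fF σ b Φ ψ (f 0) n, fun n => fF_contDiff hσc hbc hψ1 Φ (f 0) n,
    fun n => Lreg_fF_cont hσc hbc hψ1 Φ (f 0) n, ?_, ?_, ?_⟩
  · -- fn → f
    have hgtlu : TendstoLocallyUniformly (fun n => gF σ b Φ ψ n) (deriv f) atTop := by
      apply tlu_congr_lim (g := deriv f)
        (tlu_mul (tlu_exp (tlu_neg (StF_tlu hσc hσpos hbc hSg Φ hΦ)) hSgc.neg)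
          (tlu_const ψ) hexpc hψc)
      intro x
      exact (hψeq x).symm
    have h1 := tlu_integral hgtlu
      (Eventually.of_forall fun n => (gF_contDiff hσc hbc hψ1 Φ n).continuous) hf'c
    have h2 := tlu_const_add (f 0) h1
    apply tlu_congr_lim h2
    intro x
    have h3 : (∫ t in (0:ℝ)..x, deriv f t) = f x - f 0 :=
      intervalIntegral.integral_deriv_eq_sub
        (fun y _ => (hf1.differentiable one_ne_zero).differentiableAt)
        (hf'c.intervalIntegrable _ _)
    rw [h3]; ring
  · -- deriv fn → deriv f
    have he : (fun n => deriv (fF σ b Φ ψ (f 0) n)) = fun n => gF σ b Φ ψ n :=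
      funext fun n => deriv_fF hσc hbc hψ1 Φ (f 0) n
    rw [he]
    apply tlu_congr_lim (g := deriv f)
      (tlu_mul (tlu_exp (tlu_neg (StF_tlu hσc hσpos hbc hSg Φ hΦ)) hSgc.neg)
        (tlu_const ψ) hexpc hψc)
    intro x
    exact (hψeq x).symm
  · -- Lreg → ℓ
    have hGtlu : TendstoLocallyUniformly
        (fun n x => Real.exp (-(StF σ b Φ n x)) * (sigmaSqReg σ Φ n x / 2 * deriv ψ x))
        (fun x => Real.exp (-Sg x) * (σ x ^ 2 / 2 * deriv ψ x)) atTop := by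
      apply tlu_mul (tlu_exp (tlu_neg (StF_tlu hσc hσpos hbc hSg Φ hΦ)) hSgc.neg)
        _ hexpc ((hσ2c.div_const 2).mul hψ'c)
      exact tlu_mul (tlu_div_two (tlu_sigmaSq hσc Φ hΦ)) (tlu_const (deriv ψ))
        (hσ2c.div_const 2) hψ'c
    apply tlu_congr _ hGtlu
    intro r hr
    filter_upwards [eventual_lb hσc hσpos Φ hΦ hr] with n hn x hx
    have hle := hn x hx
    have hpos : 0 < sigmaSqReg σ Φ n x := lt_of_lt_of_le (by positivity) hle
    rw [Lreg_fF_eq hσc hbc hψ1 Φ (f 0) n]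
    have hden : denF σ Φ n x = sigmaSqReg σ Φ n x := max_eq_left hle
    simp only [gF, qF, hden]
    field_simp
    ring

end S6

/-- Lemma 2.12: `𝒟_L` is exactly the set of `f ∈ C¹(ℝ)` such that
`f' = e^{−Σ} ψ` for some `ψ ∈ C¹(ℝ)`. -/
theorem statement6 (σ b Sg : ℝ → ℝ) (hσc : Continuous σ) (hσpos : ∀ x, 0 < σ x)
    (hbc : Continuous b) (hb0 : b 0 = 0) (hSg : SigmaExists σ b Sg) (f : ℝ → ℝ) :
    (∃ ℓ : ℝ → ℝ, IsC1GenSolution σ b f ℓ) ↔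
      (ContDiff ℝ 1 f ∧
        ∃ ψ : ℝ → ℝ, ContDiff ℝ 1 ψ ∧ ∀ x, deriv f x = Real.exp (-Sg x) * ψ x) := by
  constructor
  · rintro ⟨ℓ, hsol⟩
    exact S6.forward hσc hσpos hbc hSg hsol
  · rintro ⟨hf1, ψ, hψ1, hψeq⟩
    exact S6.backward hσc hσpos hbc hSg hf1 hψ1 hψeq

end
end

section
/- Let σ, b : ℝ → ℝ be continuous with σ > 0 and b(0) = 0, suppose that Σ exists, and let h be defined by h(0) = 0, h'(x) = exp(−Σ(x)). Then the function h² belongs to 𝒟_L; more precisely, h² is a C¹-generalized solution of L(h²) = ℓ̇ with ℓ̇ = (h')²σ², i.e., ℓ̇(x) = σ²(x) e^{−2Σ(x)}. -/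
open MeasureTheory Filter Topology Set

noncomputable section

/-! ### Auxiliary lemmas -/

section Helpers

lemma schwartz_decay (Φ : SchwartzMap ℝ ℝ) (k : ℕ) :
    ∃ C : ℝ, 0 ≤ C ∧ ∀ x : ℝ, |Φ x| ≤ C / (1 + |x|) ^ k := by
  refine ⟨2 ^ k * ((Finset.Iic (k, 0)).sup fun m => SchwartzMap.seminorm ℝ m.1 m.2) Φ,
    by positivity, fun x => ?_⟩
  have h := SchwartzMap.one_add_le_sup_seminorm_apply (𝕜 := ℝ) (m := (k, 0)) le_rfl le_rfl Φ x
  rw [norm_iteratedFDeriv_zero] at h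
  rw [le_div_iff₀ (by positivity)]
  calc |Φ x| * (1 + |x|) ^ k = (1 + ‖x‖) ^ k * ‖Φ x‖ := by
        rw [Real.norm_eq_abs, Real.norm_eq_abs]; ring
    _ ≤ _ := h

lemma integrable_decay2 : Integrable (fun z : ℝ => ((1 + |z|) ^ 2)⁻¹) := by
  have h := integrable_one_add_norm (E := ℝ) (μ := volume) (r := 2) (by norm_num)
  refine h.congr (Filter.Eventually.of_forall fun x => ?_)
  show (1 + ‖x‖) ^ (-2 : ℝ) = ((1 + |x|) ^ 2)⁻¹
  rw [Real.norm_eq_abs, Real.rpow_neg (by positivity), ← Real.rpow_natCast (1 + |x|) 2]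
  norm_num

lemma integrable_decay2' (a : ℝ) : Integrable (fun u : ℝ => ((1 + |a - u|) ^ 2)⁻¹) :=
  integrable_decay2.comp_sub_left a

lemma convol_eq (f g : ℝ → ℝ) (x : ℝ) :
    convol f g x = ∫ u : ℝ, f u * g (x - u) := by
  rw [convol, ← integral_sub_left_eq_self (fun y => f (x - y) * g y) volume x]
  congr 1; ext u; rw [sub_sub_cancel]

lemma quad_bound {x x₀ u : ℝ} (hx : |x - x₀| ≤ 1) :
    (1 + |x₀ - u|) ^ 2 ≤ 4 * (1 + |x - u|) ^ 2 := by
  have h : |x₀ - u| ≤ 1 + |x - u| := by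
    have h2 : |x₀ - u - (x - u)| = |x₀ - x| := by ring_nf
    have h3 : |x₀ - x| = |x - x₀| := abs_sub_comm _ _
    nlinarith [abs_nonneg (x - u), abs_nonneg (x₀ - u), abs_sub_abs_le_abs_sub (x₀ - u) (x - u),
      abs_sub (x₀ - u) (x - u)]
  nlinarith [abs_nonneg (x - u), abs_nonneg (x₀ - u)]

/-- master continuity lemma for convolution-like integrals -/
lemma continuous_convlike {f g : ℝ → ℝ} {M C : ℝ} (hC : 0 ≤ C)
    (hf : AEStronglyMeasurable f volume) (hfM : ∀ x, |f x| ≤ M)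
    (hg : Continuous g) (hgC : ∀ z, |g z| ≤ C / (1 + |z|) ^ 2) :
    Continuous (fun x => ∫ u : ℝ, f u * g (x - u)) := by
  have hM : 0 ≤ M := le_trans (abs_nonneg _) (hfM 0)
  rw [continuous_iff_continuousAt]
  intro x₀
  apply continuousAt_of_dominated (bound := fun u => M * (4 * C) * ((1 + |x₀ - u|) ^ 2)⁻¹)
  · exact Filter.Eventually.of_forall fun x =>
      (hf.mul ((hg.comp (continuous_const.sub continuous_id)).aestronglyMeasurable))
  · filter_upwards [Metric.ball_mem_nhds x₀ one_pos] with x hx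
    refine Filter.Eventually.of_forall fun u => ?_
    have hx1 : |x - x₀| ≤ 1 := le_of_lt (by simpa [Real.dist_eq] using hx)
    have h1 : |g (x - u)| ≤ C / (1 + |x - u|) ^ 2 := hgC _
    have h2 : C / (1 + |x - u|) ^ 2 ≤ 4 * C / (1 + |x₀ - u|) ^ 2 := by
      rw [div_le_div_iff₀ (by positivity) (by positivity)]
      nlinarith [quad_bound (u := u) hx1]
    calc ‖f u * g (x - u)‖ = |f u| * |g (x - u)| := by
          rw [Real.norm_eq_abs, abs_mul]
      _ ≤ M * (4 * C / (1 + |x₀ - u|) ^ 2) := by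
          apply mul_le_mul (hfM u) (h1.trans h2) (abs_nonneg _) hM
      _ = M * (4 * C) * ((1 + |x₀ - u|) ^ 2)⁻¹ := by ring
  · exact (integrable_decay2' x₀).const_mul _
  · exact Filter.Eventually.of_forall fun u =>
      (continuous_const.mul (hg.comp (continuous_id.sub continuous_const))).continuousAt

/-- master differentiation lemma for convolution-like integrals -/
lemma hasDerivAt_convlike {f g g' : ℝ → ℝ} {M C C' : ℝ} (hC : 0 ≤ C) (hC' : 0 ≤ C')
    (hf : AEStronglyMeasurable f volume) (hfM : ∀ x, |f x| ≤ M)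
    (hgd : ∀ z, HasDerivAt g (g' z) z)
    (hgC : ∀ z, |g z| ≤ C / (1 + |z|) ^ 2)
    (hg' : Continuous g') (hg'C : ∀ z, |g' z| ≤ C' / (1 + |z|) ^ 2) (x₀ : ℝ) :
    HasDerivAt (fun x => ∫ u : ℝ, f u * g (x - u)) (∫ u : ℝ, f u * g' (x₀ - u)) x₀ := by
  have hM : 0 ≤ M := le_trans (abs_nonneg _) (hfM 0)
  have hg : Continuous g := by
    have : Differentiable ℝ g := fun z => (hgd z).differentiableAt
    exact this.continuous
  have hmeas : ∀ x : ℝ, AEStronglyMeasurable (fun u => f u * g (x - u)) volume := fun x =>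
    hf.mul ((hg.comp (continuous_const.sub continuous_id)).aestronglyMeasurable)
  have hmeas' : AEStronglyMeasurable (fun u => f u * g' (x₀ - u)) volume :=
    hf.mul ((hg'.comp (continuous_const.sub continuous_id)).aestronglyMeasurable)
  have hint : Integrable (fun u => f u * g (x₀ - u)) volume := by
    refine ((integrable_decay2' x₀).const_mul (M * C)).mono' (hmeas x₀)
      (Filter.Eventually.of_forall fun u => ?_)
    calc ‖f u * g (x₀ - u)‖ = |f u| * |g (x₀ - u)| := by rw [Real.norm_eq_abs, abs_mul]
      _ ≤ M * (C / (1 + |x₀ - u|) ^ 2) := mul_le_mul (hfM u) (hgC _) (abs_nonneg _) hM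
      _ = M * C * ((1 + |x₀ - u|) ^ 2)⁻¹ := by ring
  have key := hasDerivAt_integral_of_dominated_loc_of_deriv_le (μ := volume) (𝕜 := ℝ)
    (F := fun x u => f u * g (x - u)) (F' := fun x u => f u * g' (x - u)) (x₀ := x₀)
    (bound := fun u => M * (4 * C') * ((1 + |x₀ - u|) ^ 2)⁻¹) (s := Metric.ball x₀ 1) (Metric.ball_mem_nhds x₀ one_pos)
    (Filter.Eventually.of_forall hmeas) hint hmeas' ?_ ((integrable_decay2' x₀).const_mul _) ?_
  · exact key.2
  · refine Filter.Eventually.of_forall fun u => fun x hx => ?_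
    have hx1 : |x - x₀| ≤ 1 := le_of_lt (by simpa [Real.dist_eq] using hx)
    have h2 : C' / (1 + |x - u|) ^ 2 ≤ 4 * C' / (1 + |x₀ - u|) ^ 2 := by
      rw [div_le_div_iff₀ (by positivity) (by positivity)]
      nlinarith [quad_bound (u := u) hx1]
    calc ‖f u * g' (x - u)‖ = |f u| * |g' (x - u)| := by rw [Real.norm_eq_abs, abs_mul]
      _ ≤ M * (4 * C' / (1 + |x₀ - u|) ^ 2) :=
          mul_le_mul (hfM u) ((hg'C _).trans h2) (abs_nonneg _) hM
      _ = M * (4 * C') * ((1 + |x₀ - u|) ^ 2)⁻¹ := by ring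
  · refine Filter.Eventually.of_forall fun u => fun x _ => ?_
    have h1 : HasDerivAt (fun x : ℝ => x - u) 1 x := (hasDerivAt_id x).sub_const u
    have h2 : HasDerivAt (fun x : ℝ => g (x - u)) (g' (x - u) * 1) x :=
      (hgd (x - u)).comp x h1
    simpa using h2.const_mul (f u)

/-! ### Properties of the rescaled mollifier -/

lemma moll_cont (Φ : SchwartzMap ℝ ℝ) (n : ℕ) : Continuous (moll Φ n) :=
  continuous_const.mul (Φ.continuous.comp (continuous_const.mul continuous_id))

lemma moll_decay (Φ : SchwartzMap ℝ ℝ) (n : ℕ) (hn : 1 ≤ n) :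
    ∃ C : ℝ, 0 ≤ C ∧ ∀ z : ℝ, |moll Φ n z| ≤ C / (1 + |z|) ^ 2 := by
  obtain ⟨C, hC0, hC⟩ := schwartz_decay Φ 2
  have hn1 : (1 : ℝ) ≤ (n : ℝ) := by exact_mod_cast hn
  refine ⟨(n : ℝ) * C, by positivity, fun z => ?_⟩
  have h1 : |moll Φ n z| = (n : ℝ) * |Φ ((n : ℝ) * z)| := by
    rw [moll, abs_mul, abs_of_nonneg (by positivity : (0:ℝ) ≤ (n:ℝ))]
  have h2 : |Φ ((n : ℝ) * z)| ≤ C / (1 + |(n : ℝ) * z|) ^ 2 := hC _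
  have h3 : (1 + |z|) ^ 2 ≤ (1 + |(n : ℝ) * z|) ^ 2 := by
    have : |z| ≤ |(n : ℝ) * z| := by
      rw [abs_mul, abs_of_nonneg (by positivity : (0:ℝ) ≤ (n:ℝ))]
      nlinarith [abs_nonneg z]
    nlinarith [abs_nonneg z, abs_nonneg ((n:ℝ) * z)]
  have h4 : C / (1 + |(n : ℝ) * z|) ^ 2 ≤ C / (1 + |z|) ^ 2 :=
    div_le_div_of_nonneg_left hC0 (by positivity) h3
  rw [h1, mul_div_assoc]
  exact mul_le_mul_of_nonneg_left (h2.trans h4) (by positivity)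

lemma moll_hasDerivAt (Φ : SchwartzMap ℝ ℝ) (n : ℕ) (z : ℝ) :
    HasDerivAt (moll Φ n) ((n : ℝ) ^ 2 * deriv Φ ((n : ℝ) * z)) z := by
  have h1 : HasDerivAt (fun z : ℝ => (n : ℝ) * z) ((n : ℝ) * 1) z :=
    (hasDerivAt_id z).const_mul _
  have h2 : HasDerivAt Φ (deriv Φ ((n : ℝ) * z)) ((n : ℝ) * z) :=
    (Φ.differentiable.differentiableAt).hasDerivAt
  have h3 : HasDerivAt (fun z : ℝ => Φ ((n : ℝ) * z))
      (deriv Φ ((n : ℝ) * z) * ((n : ℝ) * 1)) z := h2.comp z h1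
  have h4 := h3.const_mul (n : ℝ)
  exact h4.congr_deriv (by ring)

lemma deriv_schwartz_cont (Φ : SchwartzMap ℝ ℝ) : Continuous (fun z : ℝ => deriv Φ z) := by
  have heq : (fun z : ℝ => deriv Φ z) = ⇑(SchwartzMap.derivCLM ℝ ℝ Φ) := by
    ext z; rw [SchwartzMap.derivCLM_apply]
  rw [heq]
  exact (SchwartzMap.derivCLM ℝ ℝ Φ).continuous

lemma deriv_schwartz_decay (Φ : SchwartzMap ℝ ℝ) (k : ℕ) :
    ∃ C : ℝ, 0 ≤ C ∧ ∀ x : ℝ, |deriv Φ x| ≤ C / (1 + |x|) ^ k := by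
  obtain ⟨C, hC0, hC⟩ := schwartz_decay (SchwartzMap.derivCLM ℝ ℝ Φ) k
  exact ⟨C, hC0, fun x => by rw [← SchwartzMap.derivCLM_apply ℝ Φ x]; exact hC x⟩

lemma moll_zero (Φ : SchwartzMap ℝ ℝ) : moll Φ 0 = fun _ => 0 := by
  funext x; simp [moll]

lemma convol_moll_zero (Φ : SchwartzMap ℝ ℝ) (f : ℝ → ℝ) :
    convol f (moll Φ 0) = fun _ => 0 := by
  funext x; rw [convol, moll_zero]; simp

lemma trunc_sigma_bound (σ : ℝ → ℝ) (n : ℕ) (x : ℝ) :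
    |min (σ x ^ 2) (n : ℝ)| ≤ (n : ℝ) := by
  rw [abs_le]
  constructor
  · have : (0:ℝ) ≤ min (σ x ^ 2) (n : ℝ) := le_min (sq_nonneg _) (by positivity)
    linarith [Nat.cast_nonneg (α := ℝ) n]
  · exact min_le_right _ _

lemma trunc_b_bound (b : ℝ → ℝ) (n : ℕ) (x : ℝ) :
    |max (-(n : ℝ)) (min (b x) (n : ℝ))| ≤ (n : ℝ) := by
  rw [abs_le]
  constructor
  · exact le_max_left _ _
  · exact max_le (by simp) (min_le_right _ _)

lemma sigmaSqReg_cont (σ : ℝ → ℝ) (Φ : SchwartzMap ℝ ℝ) (hσc : Continuous σ) (n : ℕ) :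
    Continuous (sigmaSqReg σ Φ n) := by
  rcases Nat.eq_zero_or_pos n with h | h
  · subst h; rw [sigmaSqReg, convol_moll_zero]; exact continuous_const
  · obtain ⟨C, hC0, hC⟩ := moll_decay Φ n h
    have heq : sigmaSqReg σ Φ n
        = fun x => ∫ u : ℝ, min (σ u ^ 2) (n : ℝ) * moll Φ n (x - u) := by
      funext x; exact convol_eq _ _ x
    rw [heq]
    exact continuous_convlike hC0 ((hσc.pow 2).min continuous_const).aestronglyMeasurable
      (trunc_sigma_bound σ n) (moll_cont Φ n) hC

/-- derivative of the regularized drift, as an explicit integral -/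
def bRegDeriv (b : ℝ → ℝ) (Φ : SchwartzMap ℝ ℝ) (n : ℕ) (x : ℝ) : ℝ :=
  ∫ u : ℝ, max (-(n : ℝ)) (min (b u) (n : ℝ)) * ((n : ℝ) ^ 2 * deriv Φ ((n : ℝ) * (x - u)))

lemma scaled_deriv_decay (Φ : SchwartzMap ℝ ℝ) (n : ℕ) (hn : 1 ≤ n) :
    ∃ C' : ℝ, 0 ≤ C' ∧
      ∀ z : ℝ, |(n : ℝ) ^ 2 * deriv Φ ((n:ℝ) * z)| ≤ C' / (1 + |z|) ^ 2 := by
  obtain ⟨C', hC'0, hC'⟩ := deriv_schwartz_decay Φ 2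
  have hn1 : (1:ℝ) ≤ (n:ℝ) := by exact_mod_cast hn
  refine ⟨(n:ℝ) ^ 2 * C', by positivity, fun z => ?_⟩
  rw [abs_mul, abs_of_nonneg (by positivity : (0:ℝ) ≤ (n:ℝ)^2), mul_div_assoc]
  refine mul_le_mul_of_nonneg_left ((hC' _).trans ?_) (by positivity)
  apply div_le_div_of_nonneg_left hC'0 (by positivity)
  have : |z| ≤ |(n : ℝ) * z| := by
    rw [abs_mul, abs_of_nonneg (by positivity : (0:ℝ) ≤ (n:ℝ))]
    nlinarith [abs_nonneg z]
  nlinarith [abs_nonneg z, abs_nonneg ((n:ℝ) * z)]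

lemma bReg_hasDerivAt (b : ℝ → ℝ) (Φ : SchwartzMap ℝ ℝ) (hbc : Continuous b) (n : ℕ)
    (hn : 1 ≤ n) (x : ℝ) :
    HasDerivAt (bReg b Φ n) (bRegDeriv b Φ n x) x := by
  obtain ⟨C, hC0, hC⟩ := moll_decay Φ n hn
  obtain ⟨C', hC'0, hC'⟩ := scaled_deriv_decay Φ n hn
  have heq : bReg b Φ n
      = fun x => ∫ u : ℝ, max (-(n : ℝ)) (min (b u) (n : ℝ)) * moll Φ n (x - u) := by
    funext x; exact convol_eq _ _ x
  rw [heq]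
  exact hasDerivAt_convlike hC0 hC'0
    ((continuous_const.max (hbc.min continuous_const)).aestronglyMeasurable) (trunc_b_bound b n)
    (moll_hasDerivAt Φ n) hC
    (continuous_const.mul ((deriv_schwartz_cont Φ).comp (continuous_const.mul continuous_id)))
    hC' x

lemma bReg_deriv_eq (b : ℝ → ℝ) (Φ : SchwartzMap ℝ ℝ) (hbc : Continuous b) (n : ℕ)
    (hn : 1 ≤ n) : deriv (bReg b Φ n) = bRegDeriv b Φ n := by
  funext x; exact (bReg_hasDerivAt b Φ hbc n hn x).deriv

lemma bRegDeriv_cont (b : ℝ → ℝ) (Φ : SchwartzMap ℝ ℝ) (hbc : Continuous b) (n : ℕ)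
    (hn : 1 ≤ n) : Continuous (bRegDeriv b Φ n) := by
  obtain ⟨C', hC'0, hC'⟩ := scaled_deriv_decay Φ n hn
  exact continuous_convlike hC'0
    ((continuous_const.max (hbc.min continuous_const)).aestronglyMeasurable) (trunc_b_bound b n)
    (continuous_const.mul ((deriv_schwartz_cont Φ).comp (continuous_const.mul continuous_id)))
    hC'

lemma bReg_deriv_cont (b : ℝ → ℝ) (Φ : SchwartzMap ℝ ℝ) (hbc : Continuous b) (n : ℕ) :
    Continuous (deriv (bReg b Φ n)) := by
  rcases Nat.eq_zero_or_pos n with h | h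
  · subst h
    have h0 : bReg b Φ 0 = fun _ => (0:ℝ) := convol_moll_zero Φ _
    rw [h0]
    simp only [deriv_const']
    exact continuous_const
  · rw [bReg_deriv_eq b Φ hbc n h]
    exact bRegDeriv_cont b Φ hbc n h

/-! ### Integral identities for the mollifier -/

lemma moll_integral (Φ : SchwartzMap ℝ ℝ) (hΦ : IsMollifier Φ) (n : ℕ) (hn : 1 ≤ n) (x : ℝ) :
    ∫ u : ℝ, moll Φ n (x - u) = 1 := by
  rw [integral_sub_left_eq_self (moll Φ n) volume x]
  have hn0 : (n:ℝ) ≠ 0 := by positivity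
  calc ∫ y : ℝ, moll Φ n y = (n:ℝ) * ∫ y : ℝ, Φ ((n:ℝ) * y) := by
        simp only [moll]; rw [integral_const_mul]
    _ = (n:ℝ) * (|(n:ℝ)⁻¹| • ∫ y : ℝ, Φ y) := by rw [Measure.integral_comp_mul_left]
    _ = 1 := by
        rw [hΦ, abs_of_pos (by positivity), smul_eq_mul, mul_one, mul_inv_cancel₀ hn0]

lemma moll_abs_integral (Φ : SchwartzMap ℝ ℝ) (n : ℕ) (hn : 1 ≤ n) (x : ℝ) :
    ∫ u : ℝ, |moll Φ n (x - u)| = ∫ y : ℝ, |Φ y| := by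
  rw [integral_sub_left_eq_self (fun y => |moll Φ n y|) volume x]
  have hn0 : (n:ℝ) ≠ 0 := by positivity
  calc ∫ y : ℝ, |moll Φ n y| = (n:ℝ) * ∫ y : ℝ, |Φ ((n:ℝ) * y)| := by
        simp only [moll, abs_mul, Nat.abs_cast]
        rw [integral_const_mul]
    _ = (n:ℝ) * (|(n:ℝ)⁻¹| • ∫ y : ℝ, |Φ y|) := by
        rw [Measure.integral_comp_mul_left (fun y => |Φ y|)]
    _ = ∫ y : ℝ, |Φ y| := by
        rw [abs_of_pos (by positivity), smul_eq_mul, ← mul_assoc, mul_inv_cancel₀ hn0, one_mul]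

lemma moll_integrable (Φ : SchwartzMap ℝ ℝ) (n : ℕ) (hn : 1 ≤ n) (x : ℝ) :
    Integrable (fun u : ℝ => moll Φ n (x - u)) := by
  have hn0 : (n:ℝ) ≠ 0 := by positivity
  have h1 : Integrable (fun y : ℝ => Φ ((n:ℝ) * y)) := Φ.integrable.comp_mul_left' hn0
  have h2 : Integrable (moll Φ n) := by
    exact h1.const_mul (n:ℝ)
  exact h2.comp_sub_left x

lemma decay_scaled_integral (Φ : SchwartzMap ℝ ℝ) (n : ℕ) (hn : 1 ≤ n) (x : ℝ) :
    ∫ u : ℝ, ((1 + |(n:ℝ) * (x - u)|) ^ 2)⁻¹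
      = (n:ℝ)⁻¹ * ∫ z : ℝ, ((1 + |z|) ^ 2)⁻¹ := by
  have hn0 : (n:ℝ) ≠ 0 := by positivity
  rw [integral_sub_left_eq_self (fun y => ((1 + |(n:ℝ) * y|) ^ 2)⁻¹) volume x]
  rw [Measure.integral_comp_mul_left (fun z => ((1 + |z|) ^ 2)⁻¹) (n:ℝ)]
  rw [abs_of_pos (by positivity : (0:ℝ) < (n:ℝ)⁻¹), smul_eq_mul]

lemma decay_scaled_integrable (Φ : SchwartzMap ℝ ℝ) (n : ℕ) (hn : 1 ≤ n) (x : ℝ) :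
    Integrable (fun u : ℝ => ((1 + |(n:ℝ) * (x - u)|) ^ 2)⁻¹) := by
  have hn0 : (n:ℝ) ≠ 0 := by positivity
  exact (integrable_decay2.comp_mul_left' hn0).comp_sub_left x

/-- THE BIG ONE : uniform convergence of `σₙ²` to `σ²` on compacts -/
lemma sigmaSqReg_unif (σ : ℝ → ℝ) (hσc : Continuous σ) (Φ : SchwartzMap ℝ ℝ)
    (hΦ : IsMollifier Φ) (R : ℝ) (hR : 0 < R) :
    TendstoUniformlyOn (fun n => sigmaSqReg σ Φ n) (fun x => σ x ^ 2) atTop (Icc (-R) R) := by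
  rw [Metric.tendstoUniformlyOn_iff]
  intro ε hε
  set f : ℝ → ℝ := fun x => σ x ^ 2 with hf
  have hfc : Continuous f := hσc.pow 2
  set A : ℝ := ∫ y : ℝ, |Φ y| with hA
  have hA0 : 0 ≤ A := integral_nonneg fun y => abs_nonneg _
  set B : ℝ := ∫ z : ℝ, ((1 + |z|) ^ 2)⁻¹ with hB
  have hB0 : 0 ≤ B := integral_nonneg fun z => by positivity
  obtain ⟨C₄, hC₄0, hC₄⟩ := schwartz_decay Φ 4
  -- bound on f on the enlarged interval
  obtain ⟨M₀, hM₀⟩ := isCompact_Icc.exists_bound_of_continuousOn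
    (s := Icc (-R - 1) (R + 1)) hfc.continuousOn
  set M : ℝ := max M₀ 0 with hM
  have hM0 : 0 ≤ M := le_max_right _ _
  have hMb : ∀ y ∈ Icc (-R - 1) (R + 1), |f y| ≤ M := fun y hy =>
    le_trans (by simpa [Real.norm_eq_abs] using hM₀ y hy) (le_max_left _ _)
  -- uniform continuity
  have hUC := (isCompact_Icc (a := -R - 1) (b := R + 1)).uniformContinuousOn_of_continuous
    hfc.continuousOn
  rw [Metric.uniformContinuousOn_iff] at hUC
  set ε₁ : ℝ := ε / (2 * (A + 1)) with hε₁
  have hε₁0 : 0 < ε₁ := by positivity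
  obtain ⟨δ₀, hδ₀0, hδ₀⟩ := hUC ε₁ hε₁0
  set δ : ℝ := min δ₀ 1 / 2 with hδ
  have hδpos : 0 < δ := by positivity
  have hδ1 : δ ≤ 1 := by
    have : min δ₀ 1 ≤ 1 := min_le_right _ _
    linarith
  have hδδ₀ : δ < δ₀ := by
    have : min δ₀ 1 ≤ δ₀ := min_le_left _ _
    linarith
  clear_value A B M δ
  -- the eventual smallness of the tail term
  have hTend := tendsto_const_div_atTop_nhds_zero_nat (2 * C₄ * B / δ ^ 2)
  have hev1 : ∀ᶠ n : ℕ in atTop, 2 * C₄ * B / δ ^ 2 / (n : ℝ) < ε / 2 := by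
    have := hTend.eventually (eventually_lt_nhds (show (0:ℝ) < ε / 2 by positivity))
    exact this
  have hev2 : ∀ᶠ n : ℕ in atTop, M ≤ (n : ℝ) :=
    tendsto_natCast_atTop_atTop.eventually_ge_atTop M
  have hev3 : ∀ᶠ n : ℕ in atTop, 1 ≤ n := eventually_ge_atTop 1
  filter_upwards [hev1, hev2, hev3] with n hT hMn hn1
  intro x hx
  have hn0 : (0:ℝ) < (n:ℝ) := by exact_mod_cast hn1
  rw [Real.dist_eq]
  -- the integral representation of the difference
  set fmin : ℝ → ℝ := fun u => min (σ u ^ 2) (n : ℝ) with hfmin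
  have hint1 : Integrable (fun u : ℝ => fmin u * moll Φ n (x - u)) :=
    (moll_integrable Φ n hn1 x).bdd_mul
      ((hσc.pow 2).min continuous_const).aestronglyMeasurable
      (c := (n:ℝ)) (Filter.Eventually.of_forall fun u => by
        simpa [Real.norm_eq_abs] using trunc_sigma_bound σ n u)
  have hint2 : Integrable (fun u : ℝ => f x * moll Φ n (x - u)) :=
    (moll_integrable Φ n hn1 x).const_mul _
  have hrepr : f x - sigmaSqReg σ Φ n x
      = ∫ u : ℝ, (f x - fmin u) * moll Φ n (x - u) := by
    have e1 : sigmaSqReg σ Φ n x = ∫ u : ℝ, fmin u * moll Φ n (x - u) := convol_eq _ _ x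
    have e2 : f x = ∫ u : ℝ, f x * moll Φ n (x - u) := by
      rw [integral_const_mul, moll_integral Φ hΦ n hn1 x, mul_one]
    rw [e1]
    conv_lhs => rw [e2]
    rw [← integral_sub hint2 hint1]
    congr 1; funext u; ring
  rw [hrepr]
  -- pointwise bound
  set bound1 : ℝ → ℝ := fun u => ε₁ * |moll Φ n (x - u)| with hbd1
  set bound2 : ℝ → ℝ := fun u =>
    ((n:ℝ) + M) * ((n:ℝ) * C₄ / (1 + (n:ℝ) * δ) ^ 2) * ((1 + |(n:ℝ) * (x - u)|) ^ 2)⁻¹ with hbd2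
  have hpt : ∀ u : ℝ, |(f x - fmin u) * moll Φ n (x - u)| ≤ bound1 u + bound2 u := by
    intro u
    rw [abs_mul]
    rcases le_or_gt |x - u| δ with hcase | hcase
    · -- near case
      have hxI : x ∈ Icc (-R - 1) (R + 1) := by
        obtain ⟨h1, h2⟩ := hx; constructor <;> linarith
      have huI : u ∈ Icc (-R - 1) (R + 1) := by
        obtain ⟨h1, h2⟩ := hx
        rw [abs_le] at hcase
        constructor <;> linarith
      have hfu : fmin u = f u := by
        apply min_eq_left
        calc σ u ^ 2 = |f u| := by rw [hf]; exact (abs_of_nonneg (sq_nonneg _)).symm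
          _ ≤ M := hMb u huI
          _ ≤ (n:ℝ) := hMn
      have hclose : |f x - fmin u| ≤ ε₁ := by
        rw [hfu]
        have := hδ₀ x hxI u huI (by rw [Real.dist_eq]; exact lt_of_le_of_lt hcase hδδ₀)
        rw [Real.dist_eq] at this
        exact le_of_lt this
      have h1 : |f x - fmin u| * |moll Φ n (x - u)| ≤ bound1 u :=
        mul_le_mul_of_nonneg_right hclose (abs_nonneg _)
      have h2 : 0 ≤ bound2 u := by positivity
      linarith
    · -- far case
      have h1 : |f x - fmin u| ≤ (n:ℝ) + M := by
        have ha : |f x| ≤ M := hMb x (by obtain ⟨h1, h2⟩ := hx; constructor <;> linarith)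
        have hb := trunc_sigma_bound σ n u
        calc |f x - fmin u| ≤ |f x| + |fmin u| := abs_sub _ _
          _ ≤ M + (n:ℝ) := add_le_add ha hb
          _ = (n:ℝ) + M := by ring
      have h2 : |moll Φ n (x - u)| ≤
          (n:ℝ) * C₄ / (1 + (n:ℝ) * δ) ^ 2 * ((1 + |(n:ℝ) * (x - u)|) ^ 2)⁻¹ := by
        have e1 : |moll Φ n (x - u)| = (n:ℝ) * |Φ ((n:ℝ) * (x - u))| := by
          rw [moll, abs_mul, abs_of_nonneg (le_of_lt hn0)]
        have e2 : |Φ ((n:ℝ) * (x - u))| ≤ C₄ / (1 + |(n:ℝ) * (x - u)|) ^ 4 := hC₄ _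
        have e3 : (1 + (n:ℝ) * δ) ≤ 1 + |(n:ℝ) * (x - u)| := by
          have : (n:ℝ) * δ ≤ |(n:ℝ) * (x - u)| := by
            rw [abs_mul, abs_of_nonneg (le_of_lt hn0)]
            exact mul_le_mul_of_nonneg_left (le_of_lt hcase) (le_of_lt hn0)
          linarith
        have e4 : C₄ / (1 + |(n:ℝ) * (x - u)|) ^ 4 ≤
            C₄ / ((1 + (n:ℝ) * δ) ^ 2 * (1 + |(n:ℝ) * (x - u)|) ^ 2) := by
          apply div_le_div_of_nonneg_left hC₄0 (by positivity)
          have hpos : (0:ℝ) < 1 + (n:ℝ) * δ := by positivity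
          have habs : (0:ℝ) ≤ |(n:ℝ) * (x - u)| := abs_nonneg _
          calc (1 + (n:ℝ) * δ) ^ 2 * (1 + |(n:ℝ) * (x - u)|) ^ 2
              ≤ (1 + |(n:ℝ) * (x - u)|) ^ 2 * (1 + |(n:ℝ) * (x - u)|) ^ 2 := by
                apply mul_le_mul_of_nonneg_right _ (by positivity)
                apply pow_le_pow_left₀ (by positivity) e3
            _ = (1 + |(n:ℝ) * (x - u)|) ^ 4 := by ring
        rw [e1]
        calc (n:ℝ) * |Φ ((n:ℝ) * (x - u))|
            ≤ (n:ℝ) * (C₄ / ((1 + (n:ℝ) * δ) ^ 2 * (1 + |(n:ℝ) * (x - u)|) ^ 2)) :=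
              mul_le_mul_of_nonneg_left (e2.trans e4) (le_of_lt hn0)
          _ = (n:ℝ) * C₄ / (1 + (n:ℝ) * δ) ^ 2 * ((1 + |(n:ℝ) * (x - u)|) ^ 2)⁻¹ := by
              field_simp
      have h3 : |f x - fmin u| * |moll Φ n (x - u)| ≤ bound2 u := by
        calc |f x - fmin u| * |moll Φ n (x - u)|
            ≤ ((n:ℝ) + M) * ((n:ℝ) * C₄ / (1 + (n:ℝ) * δ) ^ 2 * ((1 + |(n:ℝ) * (x - u)|) ^ 2)⁻¹) :=
              mul_le_mul h1 h2 (abs_nonneg _) (by positivity)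
          _ = bound2 u := by rw [hbd2]; ring
      have h4 : 0 ≤ bound1 u := by positivity
      linarith
  -- integrate the bound
  have hbint1 : Integrable bound1 := ((moll_integrable Φ n hn1 x).abs).const_mul _
  have hbint2 : Integrable bound2 := (decay_scaled_integrable Φ n hn1 x).const_mul _
  have hHint : Integrable (fun u : ℝ => (f x - fmin u) * moll Φ n (x - u)) := by
    have h := hint2.sub hint1
    refine h.congr (Filter.Eventually.of_forall fun u => ?_)
    simp only [Pi.sub_apply]
    ring
  have step1 : |∫ u : ℝ, (f x - fmin u) * moll Φ n (x - u)|
      ≤ ∫ u : ℝ, |(f x - fmin u) * moll Φ n (x - u)| := by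
    have h := norm_integral_le_integral_norm (μ := volume)
      (fun u : ℝ => (f x - fmin u) * moll Φ n (x - u))
    simpa only [Real.norm_eq_abs] using h
  have step2 : ∫ u : ℝ, |(f x - fmin u) * moll Φ n (x - u)| ≤ ∫ u : ℝ, (bound1 u + bound2 u) :=
    integral_mono hHint.abs (hbint1.add hbint2) hpt
  have step3 : ∫ u : ℝ, (bound1 u + bound2 u)
      = ε₁ * A + ((n:ℝ) + M) * C₄ * B / (1 + (n:ℝ) * δ) ^ 2 := by
    rw [integral_add hbint1 hbint2, hbd1, hbd2]
    rw [integral_const_mul, integral_const_mul, moll_abs_integral Φ n hn1 x,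
      decay_scaled_integral Φ n hn1 x, ← hA, ← hB]
    have hd : ((1:ℝ) + (n:ℝ) * δ) ^ 2 ≠ 0 := by positivity
    have hn0' : ((n:ℝ)) ≠ 0 := ne_of_gt hn0
    field_simp
  -- final numeric estimate
  have est1 : ε₁ * A < ε / 2 := by
    rw [hε₁]
    rw [div_mul_eq_mul_div, div_lt_iff₀ (by positivity)]
    nlinarith
  have est2 : ((n:ℝ) + M) * C₄ * B / (1 + (n:ℝ) * δ) ^ 2 ≤ 2 * C₄ * B / δ ^ 2 / (n : ℝ) := by
    rw [div_le_div_iff₀ (by positivity) (by positivity)]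
    have h1 : (n:ℝ) + M ≤ 2 * (n:ℝ) := by linarith
    have h2 : ((n:ℝ) * δ) ^ 2 ≤ (1 + (n:ℝ) * δ) ^ 2 := by nlinarith
    have c0 : (0:ℝ) ≤ C₄ * B := mul_nonneg hC₄0 hB0
    have hδ0' : δ ≠ 0 := ne_of_gt hδpos
    calc ((n:ℝ) + M) * C₄ * B * (n:ℝ) = C₄ * B * (((n:ℝ) + M) * (n:ℝ)) := by ring
      _ ≤ C₄ * B * (2 * (n:ℝ) * (n:ℝ)) := by
          refine mul_le_mul_of_nonneg_left ?_ c0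
          exact mul_le_mul_of_nonneg_right h1 (le_of_lt hn0)
      _ = 2 * C₄ * B / δ ^ 2 * ((n:ℝ) * δ) ^ 2 := by field_simp
      _ ≤ 2 * C₄ * B / δ ^ 2 * (1 + (n:ℝ) * δ) ^ 2 :=
          mul_le_mul_of_nonneg_left h2 (by positivity)
  calc |∫ u : ℝ, (f x - fmin u) * moll Φ n (x - u)|
      ≤ ε₁ * A + ((n:ℝ) + M) * C₄ * B / (1 + (n:ℝ) * δ) ^ 2 := by
        rw [← step3]; exact step1.trans step2
    _ < ε / 2 + ε / 2 := add_lt_add_of_lt_of_le est1 (est2.trans (le_of_lt hT))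
    _ = ε := by ring

lemma hasDerivAt_primitive {f : ℝ → ℝ} (hf : Continuous f) (x : ℝ) :
    HasDerivAt (fun u => ∫ y in (0:ℝ)..u, f y) (f x) x :=
  intervalIntegral.integral_hasDerivAt_right (hf.intervalIntegrable _ _)
    (hf.stronglyMeasurableAtFilter _ _) hf.continuousAt

/-- uniform convergence composed with a continuous two-variable map,
given bounds on the limit functions -/
lemma tuo_comp2 {F G : ℕ → ℝ → ℝ} {f g : ℝ → ℝ} {s : Set ℝ}
    (hF : TendstoUniformlyOn F f atTop s) (hG : TendstoUniformlyOn G g atTop s)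
    {Mf Mg : ℝ} (hfb : ∀ x ∈ s, |f x| ≤ Mf) (hgb : ∀ x ∈ s, |g x| ≤ Mg)
    (Ψ : ℝ → ℝ → ℝ) (hΨ : Continuous fun p : ℝ × ℝ => Ψ p.1 p.2) :
    TendstoUniformlyOn (fun n x => Ψ (F n x) (G n x)) (fun x => Ψ (f x) (g x)) atTop s := by
  rw [Metric.tendstoUniformlyOn_iff]
  intro ε hε
  set K : Set (ℝ × ℝ) := Icc (-Mf - 1) (Mf + 1) ×ˢ Icc (-Mg - 1) (Mg + 1) with hK
  have hKc : IsCompact K := isCompact_Icc.prod isCompact_Icc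
  have hUC := hKc.uniformContinuousOn_of_continuous hΨ.continuousOn
  rw [Metric.uniformContinuousOn_iff] at hUC
  obtain ⟨δ, hδ0, hδ⟩ := hUC ε hε
  set δ' : ℝ := min δ 1 / 2 with hδ'
  have hδ'0 : 0 < δ' := by positivity
  have hδ'1 : δ' ≤ 1 := by
    have : min δ 1 ≤ 1 := min_le_right _ _
    rw [hδ']; linarith
  have hδ'δ : δ' < δ := by
    have : min δ 1 ≤ δ := min_le_left _ _
    rw [hδ']; linarith
  rw [Metric.tendstoUniformlyOn_iff] at hF hG
  filter_upwards [hF δ' hδ'0, hG δ' hδ'0] with n hFn hGn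
  intro x hx
  have h1 : dist (f x) (F n x) < δ' := hFn x hx
  have h2 : dist (g x) (G n x) < δ' := hGn x hx
  have hp : (f x, g x) ∈ K := by
    constructor
    · have := hfb x hx; rw [abs_le] at this
      exact ⟨by linarith [this.1], by linarith [this.2]⟩
    · have := hgb x hx; rw [abs_le] at this
      exact ⟨by linarith [this.1], by linarith [this.2]⟩
  have hq : (F n x, G n x) ∈ K := by
    rw [Real.dist_eq, abs_sub_lt_iff] at h1 h2
    have hf' := hfb x hx; rw [abs_le] at hf'
    have hg' := hgb x hx; rw [abs_le] at hg'
    constructor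
    · exact ⟨by simp only; linarith [h1.1, h1.2, hf'.1, hf'.2],
        by simp only; linarith [h1.1, h1.2, hf'.1, hf'.2]⟩
    · exact ⟨by simp only; linarith [h2.1, h2.2, hg'.1, hg'.2],
        by simp only; linarith [h2.1, h2.2, hg'.1, hg'.2]⟩
  have hdist : dist ((f x, g x) : ℝ × ℝ) (F n x, G n x) < δ := by
    rw [Prod.dist_eq]
    exact lt_of_le_of_lt (max_le (le_of_lt h1) (le_of_lt h2)) hδ'δ
  exact hδ _ hp _ hq hdist

/-- one-variable version -/
lemma tuo_comp1 {F : ℕ → ℝ → ℝ} {f : ℝ → ℝ} {s : Set ℝ}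
    (hF : TendstoUniformlyOn F f atTop s)
    {Mf : ℝ} (hfb : ∀ x ∈ s, |f x| ≤ Mf)
    (Ψ : ℝ → ℝ) (hΨ : Continuous Ψ) :
    TendstoUniformlyOn (fun n x => Ψ (F n x)) (fun x => Ψ (f x)) atTop s := by
  have hG : TendstoUniformlyOn (fun (_ : ℕ) (_ : ℝ) => (0:ℝ)) (fun _ => (0:ℝ)) atTop s := by
    rw [Metric.tendstoUniformlyOn_iff]
    intro ε hε
    exact Filter.Eventually.of_forall fun n x _ => by simpa using hε
  have h := tuo_comp2 (Mg := 0) hF hG hfb (fun x _ => by simp) (fun a _ => Ψ a)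
    (hΨ.comp continuous_fst)
  exact h

/-- passing uniform convergence through the primitive -/
lemma tuo_primitive {F : ℕ → ℝ → ℝ} {f : ℝ → ℝ} {R : ℝ} (hR : 0 < R)
    (hFc : ∀ n, Continuous (F n)) (hfc : Continuous f)
    (h : TendstoUniformlyOn F f atTop (Icc (-R) R)) :
    TendstoUniformlyOn (fun n x => ∫ y in (0:ℝ)..x, F n y)
      (fun x => ∫ y in (0:ℝ)..x, f y) atTop (Icc (-R) R) := by
  rw [Metric.tendstoUniformlyOn_iff] at h ⊢
  intro ε hε
  have hε2 : 0 < ε / (2 * R) := by positivity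
  filter_upwards [h (ε / (2 * R)) hε2] with n hn
  intro x hx
  rw [Real.dist_eq]
  show |(∫ y in (0:ℝ)..x, f y) - ∫ y in (0:ℝ)..x, F n y| < ε
  have hsub : (∫ y in (0:ℝ)..x, f y) - (∫ y in (0:ℝ)..x, F n y)
      = ∫ y in (0:ℝ)..x, (f y - F n y) :=
    (intervalIntegral.integral_sub (hfc.intervalIntegrable _ _)
      ((hFc n).intervalIntegrable _ _)).symm
  rw [hsub]
  have hbd : ∀ y ∈ Set.uIoc (0:ℝ) x, ‖f y - F n y‖ ≤ ε / (2 * R) := by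
    intro y hy
    have hyI : y ∈ Icc (-R) R := by
      obtain ⟨h1, h2⟩ := hx
      rcases Set.mem_uIoc.mp hy with ⟨ha, hb⟩ | ⟨ha, hb⟩
      · exact ⟨by linarith, by linarith⟩
      · exact ⟨by linarith, by linarith⟩
    have := hn y hyI
    rw [Real.dist_eq] at this
    rw [Real.norm_eq_abs]
    exact le_of_lt this
  have := intervalIntegral.norm_integral_le_of_norm_le_const hbd
  rw [Real.norm_eq_abs] at this
  have hxR : |x - 0| ≤ R := by
    rw [sub_zero, abs_le]; exact ⟨hx.1, hx.2⟩
  calc |∫ y in (0:ℝ)..x, (f y - F n y)| ≤ ε / (2 * R) * |x - 0| := this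
    _ ≤ ε / (2 * R) * R := mul_le_mul_of_nonneg_left hxR (le_of_lt hε2)
    _ = ε / 2 := by field_simp
    _ < ε := by linarith


lemma compact_subset_Icc {K : Set ℝ} (hK : IsCompact K) :
    ∃ R : ℝ, 0 < R ∧ K ⊆ Icc (-R) R := by
  obtain ⟨r, hr⟩ := hK.isBounded.subset_closedBall 0
  refine ⟨max r 1, lt_of_lt_of_le one_pos (le_max_right _ _), fun x hx => ?_⟩
  have h := hr hx
  rw [Metric.mem_closedBall, Real.dist_eq, sub_zero] at h
  have h2 : |x| ≤ max r 1 := le_trans h (le_max_left _ _)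
  rw [abs_le] at h2
  exact ⟨h2.1, h2.2⟩

lemma abs_bound_of_continuousOn {f : ℝ → ℝ} {s : Set ℝ} (hs : IsCompact s)
    (hf : ContinuousOn f s) : ∃ M : ℝ, ∀ x ∈ s, |f x| ≤ M := by
  obtain ⟨M, hM⟩ := hs.exists_bound_of_continuousOn hf
  exact ⟨M, fun x hx => by simpa [Real.norm_eq_abs] using hM x hx⟩

end Helpers

/-- Proposition 2.15(a): `h² ∈ 𝒟_L` with `L(h²) = (h')² σ²`,
i.e. `h²` is a `C¹`-generalized solution of `L(h²) = σ² e^{−2Σ}`. -/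
theorem statement8 (σ b Sg : ℝ → ℝ) (hσc : Continuous σ) (hσpos : ∀ x, 0 < σ x)
    (hbc : Continuous b) (hb0 : b 0 = 0) (hSg : SigmaExists σ b Sg) :
    IsC1GenSolution σ b (fun x => hFun Sg x ^ 2)
      (fun x => σ x ^ 2 * Real.exp (-(2 * Sg x))) := by
  obtain ⟨hSgc, hSgconv⟩ := hSg
  have hexpc : Continuous fun y : ℝ => Real.exp (-Sg y) := Real.continuous_exp.comp hSgc.neg
  have hderivh : ∀ x, HasDerivAt (hFun Sg) (Real.exp (-Sg x)) x := fun x =>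
    hasDerivAt_primitive hexpc x
  have hhd : Differentiable ℝ (hFun Sg) := fun x => (hderivh x).differentiableAt
  have hhc : Continuous (hFun Sg) := hhd.continuous
  have hderivh2 : ∀ x, HasDerivAt (fun x => hFun Sg x ^ 2)
      (2 * hFun Sg x * Real.exp (-Sg x)) x := by
    intro x
    have h := (hderivh x).fun_pow 2
    exact h.congr_deriv (by norm_num)
  have hderiv2_eq : deriv (fun x => hFun Sg x ^ 2)
      = fun x => 2 * hFun Sg x * Real.exp (-Sg x) :=
    funext fun x => (hderivh2 x).deriv
  refine ⟨?_, ?_, ?_⟩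
  · rw [contDiff_one_iff_deriv]
    refine ⟨fun x => (hderivh2 x).differentiableAt, ?_⟩
    rw [hderiv2_eq]
    exact (continuous_const.mul hhc).mul hexpc
  · exact (hσc.pow 2).mul (Real.continuous_exp.comp (continuous_const.mul hSgc).neg)
  · intro Φ hΦ
    have hscont : ∀ n, Continuous (sigmaSqReg σ Φ n) := sigmaSqReg_cont σ Φ hσc
    have hDcont : ∀ n, Continuous (deriv (bReg b Φ n)) := bReg_deriv_cont b Φ hbc
    set ρ : ℕ → ℝ → ℝ := fun n y =>
      2 * deriv (bReg b Φ n) y / max (sigmaSqReg σ Φ n y) (((n:ℝ) + 1)⁻¹) with hρdef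
    have hmaxpos : ∀ n y, 0 < max (sigmaSqReg σ Φ n y) (((n:ℝ) + 1)⁻¹) := fun n y =>
      lt_of_lt_of_le (by positivity) (le_max_right _ _)
    have hρc : ∀ n, Continuous (ρ n) := fun n =>
      (continuous_const.mul (hDcont n)).div ((hscont n).max continuous_const)
        (fun y => ne_of_gt (hmaxpos n y))
    set St : ℕ → ℝ → ℝ := fun n x => ∫ y in (0:ℝ)..x, ρ n y with hStdef
    have hStd : ∀ n x, HasDerivAt (St n) (ρ n x) x := fun n x =>
      hasDerivAt_primitive (hρc n) x
    have hStdiff : ∀ n, Differentiable ℝ (St n) := fun n x => (hStd n x).differentiableAt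
    have hStc : ∀ n, Continuous (St n) := fun n => (hStdiff n).continuous
    set Ee : ℕ → ℝ → ℝ := fun n x => Real.exp (-St n x) with hEedef
    have hEec : ∀ n, Continuous (Ee n) := fun n => Real.continuous_exp.comp (hStc n).neg
    have hEed : ∀ n x, HasDerivAt (Ee n) (-ρ n x * Ee n x) x := by
      intro n x
      have h1 : HasDerivAt (fun x => -St n x) (-ρ n x) x := (hStd n x).neg
      have h2 := (Real.hasDerivAt_exp (-St n x)).comp x h1
      exact h2.congr_deriv (by simp only [hEedef]; ring)
    set hT : ℕ → ℝ → ℝ := fun n x => ∫ y in (0:ℝ)..x, Ee n y with hhTdef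
    have hTd : ∀ n x, HasDerivAt (hT n) (Ee n x) x := fun n x =>
      hasDerivAt_primitive (hEec n) x
    have hTdiff : ∀ n, Differentiable ℝ (hT n) := fun n x => (hTd n x).differentiableAt
    have hTc : ∀ n, Continuous (hT n) := fun n => (hTdiff n).continuous
    have fnd : ∀ n x, HasDerivAt (fun x => hT n x ^ 2) (2 * hT n x * Ee n x) x := by
      intro n x
      have h := (hTd n x).fun_pow 2
      exact h.congr_deriv (by norm_num)
    have fn_deriv : ∀ n, deriv (fun x => hT n x ^ 2) = fun x => 2 * hT n x * Ee n x :=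
      fun n => funext fun x => (fnd n x).deriv
    have fnd2 : ∀ n x, HasDerivAt (fun x => 2 * hT n x * Ee n x)
        (2 * Ee n x * Ee n x + 2 * hT n x * (-ρ n x * Ee n x)) x := by
      intro n x
      have h1 : HasDerivAt (fun x => 2 * hT n x) (2 * Ee n x) x := (hTd n x).const_mul 2
      exact h1.mul (hEed n x)
    have fn_deriv2 : ∀ n, deriv (deriv (fun x => hT n x ^ 2))
        = fun x => 2 * Ee n x * Ee n x + 2 * hT n x * (-ρ n x * Ee n x) := fun n => by
      rw [fn_deriv n]; exact funext fun x => (fnd2 n x).deriv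
    -- shared convergence work
    have key : ∀ R : ℝ, 0 < R →
        TendstoUniformlyOn (fun n x => hT n x ^ 2) (fun x => hFun Sg x ^ 2) atTop (Icc (-R) R)
        ∧ TendstoUniformlyOn (fun n => deriv (fun x => hT n x ^ 2))
            (deriv (fun x => hFun Sg x ^ 2)) atTop (Icc (-R) R)
        ∧ TendstoUniformlyOn (fun n => Lreg σ b Φ n (fun x => hT n x ^ 2))
            (fun x => σ x ^ 2 * Real.exp (-(2 * Sg x))) atTop (Icc (-R) R) := by
      intro R hR
      have h0I : (0:ℝ) ∈ Icc (-R) R := ⟨by linarith, by linarith⟩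
      obtain ⟨z, hzI, hzmin⟩ := isCompact_Icc.exists_isMinOn ⟨0, h0I⟩
        ((hσc.pow 2).continuousOn : ContinuousOn (fun x => σ x ^ 2) (Icc (-R) R))
      set m : ℝ := σ z ^ 2 with hm
      have hm0 : 0 < m := pow_pos (hσpos z) 2
      have hU2 : TendstoUniformlyOn (fun n => sigmaSqReg σ Φ n) (fun x => σ x ^ 2)
          atTop (Icc (-R) R) := sigmaSqReg_unif σ hσc Φ hΦ R hR
      have hU1 : TendstoUniformlyOn (fun n => SigmaApprox σ b Φ n) Sg atTop (Icc (-R) R) :=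
        tendstoLocallyUniformly_iff_forall_isCompact.mp (hSgconv Φ hΦ) _ isCompact_Icc
      have hEv1 : ∀ᶠ n : ℕ in atTop, ∀ y ∈ Icc (-R) R, m / 2 ≤ sigmaSqReg σ Φ n y := by
        have hU2' := Metric.tendstoUniformlyOn_iff.mp hU2 (m/2) (by positivity)
        filter_upwards [hU2'] with n hn
        intro y hy
        have h1 := hn y hy
        rw [Real.dist_eq, abs_sub_lt_iff] at h1
        have h2 : m ≤ σ y ^ 2 := hzmin hy
        linarith [h1.1, h1.2]
      have hEv2 : ∀ᶠ n : ℕ in atTop, ((n:ℝ) + 1)⁻¹ ≤ m / 2 := by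
        have ht := tendsto_one_div_add_atTop_nhds_zero_nat (𝕜 := ℝ)
        have h2 := ht.eventually (eventually_le_nhds (by positivity : (0:ℝ) < m/2))
        filter_upwards [h2] with n hn
        rw [one_div] at hn
        exact hn
      have hEvEq : ∀ᶠ n : ℕ in atTop, ∀ y ∈ Icc (-R) R,
          ρ n y = 2 * deriv (bReg b Φ n) y / sigmaSqReg σ Φ n y
            ∧ m / 2 ≤ sigmaSqReg σ Φ n y := by
        filter_upwards [hEv1, hEv2] with n h1 h2
        intro y hy
        have hmax : max (sigmaSqReg σ Φ n y) (((n:ℝ)+1)⁻¹) = sigmaSqReg σ Φ n y :=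
          max_eq_left (le_trans h2 (h1 y hy))
        refine ⟨?_, h1 y hy⟩
        rw [hρdef]
        simp only
        rw [hmax]
      have hEvSt : ∀ᶠ n : ℕ in atTop, ∀ x ∈ Icc (-R) R,
          St n x = SigmaApprox σ b Φ n x := by
        filter_upwards [hEvEq] with n hn
        intro x hx
        have hsub : uIcc (0:ℝ) x ⊆ Icc (-R) R := by
          rw [uIcc]
          apply Icc_subset_Icc
          · exact le_inf h0I.1 hx.1
          · exact sup_le h0I.2 hx.2
        have heq : ∫ y in (0:ℝ)..x, ρ n y
            = ∫ y in (0:ℝ)..x, 2 * (deriv (bReg b Φ n) y / sigmaSqReg σ Φ n y) := by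
          apply intervalIntegral.integral_congr
          intro y hy
          rw [(hn y (hsub hy)).1]
          ring
        rw [hStdef]
        simp only
        rw [heq, intervalIntegral.integral_const_mul]
        rfl
      have hU1' : TendstoUniformlyOn St Sg atTop (Icc (-R) R) := by
        refine hU1.congr ?_
        filter_upwards [hEvSt] with n hn
        exact fun x hx => (hn x hx).symm
      obtain ⟨MS, hMS⟩ := abs_bound_of_continuousOn isCompact_Icc
        (hSgc.continuousOn : ContinuousOn Sg (Icc (-R) R))
      have hU3 : TendstoUniformlyOn (fun n x => Ee n x) (fun x => Real.exp (-Sg x))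
          atTop (Icc (-R) R) :=
        tuo_comp1 hU1' hMS (fun a => Real.exp (-a))
          (Real.continuous_exp.comp continuous_neg)
      have hU4 : TendstoUniformlyOn hT (hFun Sg) atTop (Icc (-R) R) := by
        have h := tuo_primitive hR hEec hexpc hU3
        exact h
      obtain ⟨Mh, hMh⟩ := abs_bound_of_continuousOn isCompact_Icc hhc.continuousOn
      obtain ⟨ME, hME⟩ := abs_bound_of_continuousOn isCompact_Icc hexpc.continuousOn
      obtain ⟨Mσ, hMσ⟩ := abs_bound_of_continuousOn isCompact_Icc
        ((hσc.pow 2).continuousOn : ContinuousOn (fun x => σ x ^ 2) (Icc (-R) R))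
      refine ⟨?_, ?_, ?_⟩
      · exact tuo_comp1 hU4 hMh (fun a => a ^ 2) (continuous_pow 2)
      · have h := tuo_comp2 hU4 hU3 hMh hME (fun a e => 2 * a * e)
          ((continuous_const.mul continuous_fst).mul continuous_snd)
        have e1 : (fun n => deriv (fun x => hT n x ^ 2))
            = fun n x => 2 * hT n x * Ee n x := funext fn_deriv
        rw [e1, hderiv2_eq]
        exact h
      · have hG : TendstoUniformlyOn
            (fun n x => sigmaSqReg σ Φ n x * Real.exp (-(2 * St n x)))
            (fun x => σ x ^ 2 * Real.exp (-(2 * Sg x))) atTop (Icc (-R) R) := by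
          have h := tuo_comp2 hU2 hU1' hMσ hMS
            (fun s a => s * Real.exp (-(2 * a)))
            (continuous_fst.mul
              (Real.continuous_exp.comp (continuous_const.mul continuous_snd).neg))
          exact h
        refine hG.congr ?_
        filter_upwards [hEvEq] with n hn
        intro x hx
        obtain ⟨hρeq, hslb⟩ := hn x hx
        have hspos : 0 < sigmaSqReg σ Φ n x := lt_of_lt_of_le (by positivity) hslb
        show sigmaSqReg σ Φ n x * Real.exp (-(2 * St n x))
          = Lreg σ b Φ n (fun x => hT n x ^ 2) x
        rw [Lreg, fn_deriv2 n, fn_deriv n]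
        simp only
        rw [hρeq]
        have hEsq : Real.exp (-(2 * St n x)) = Ee n x * Ee n x := by
          rw [hEedef]
          simp only
          rw [← Real.exp_add]
          ring_nf
        rw [hEsq]
        field_simp
        ring
    refine ⟨fun n x => hT n x ^ 2, ?_, ?_, ?_, ?_, ?_⟩
    · intro n
      rw [show (2 : WithTop ℕ∞) = 1 + 1 by norm_num, contDiff_succ_iff_deriv]
      refine ⟨fun x => (fnd n x).differentiableAt, by simp, ?_⟩
      rw [fn_deriv n, contDiff_one_iff_deriv]
      refine ⟨fun x => (fnd2 n x).differentiableAt, ?_⟩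
      rw [show deriv (fun x => 2 * hT n x * Ee n x)
          = fun x => 2 * Ee n x * Ee n x + 2 * hT n x * (-ρ n x * Ee n x) from
          funext fun x => (fnd2 n x).deriv]
      exact ((continuous_const.mul (hEec n)).mul (hEec n)).add
        ((continuous_const.mul (hTc n)).mul ((hρc n).neg.mul (hEec n)))
    · intro n
      have heq : Lreg σ b Φ n (fun x => hT n x ^ 2)
          = fun x => sigmaSqReg σ Φ n x / 2
              * (2 * Ee n x * Ee n x + 2 * hT n x * (-ρ n x * Ee n x))
            + deriv (bReg b Φ n) x * (2 * hT n x * Ee n x) := by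
        funext x
        rw [Lreg, fn_deriv2 n, fn_deriv n]
      rw [heq]
      exact (((hscont n).div_const 2).mul
          (((continuous_const.mul (hEec n)).mul (hEec n)).add
            ((continuous_const.mul (hTc n)).mul ((hρc n).neg.mul (hEec n))))).add
        ((hDcont n).mul ((continuous_const.mul (hTc n)).mul (hEec n)))
    · rw [tendstoLocallyUniformly_iff_forall_isCompact]
      intro K hK
      obtain ⟨R, hR0, hKR⟩ := compact_subset_Icc hK
      exact ((key R hR0).1).mono hKR
    · rw [tendstoLocallyUniformly_iff_forall_isCompact]
      intro K hK
      obtain ⟨R, hR0, hKR⟩ := compact_subset_Icc hK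
      exact ((key R hR0).2.1).mono hKR
    · rw [tendstoLocallyUniformly_iff_forall_isCompact]
      intro K hK
      obtain ⟨R, hR0, hKR⟩ := compact_subset_Icc hK
      exact ((key R hR0).2.2).mono hKR


end
end

section
/- Let τ : ℝ → ℝ be continuous with τ(x) > 0 for all x, and let L⁰ be the formal operator with diffusion coefficient τ and zero drift, i.e., with regularizations L⁰_n g := (τ_n²/2) g'' where τ_n² := (τ² ∧ n) ∗ Φ_n. Then 𝒟_{L⁰} = C²(ℝ): a function f ∈ C¹(ℝ) is a C¹-generalized solution of L⁰f = ℓ̇ for some ℓ̇ ∈ C⁰(ℝ) if and only if f ∈ C²(ℝ), and in that case ℓ̇ = (τ²/2) f''. -/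
open MeasureTheory Filter Topology Set

noncomputable section

lemma moll_integrable_s9 (Φ : SchwartzMap ℝ ℝ) (n : ℕ) : Integrable (moll Φ n) := by
  rcases Nat.eq_zero_or_pos n with h | h
  · subst h
    have : (moll Φ 0) = fun _ => (0:ℝ) := by funext x; simp [moll]
    rw [this]; exact integrable_zero _ _ _
  · have h1 : Integrable fun x : ℝ => Φ ((n:ℝ) * x) :=
      (Φ.integrable (μ := volume)).comp_mul_left' (by positivity)
    exact h1.const_mul (n:ℝ)

lemma bReg_zero (Φ : SchwartzMap ℝ ℝ) (n : ℕ) : bReg (fun _ => 0) Φ n = fun _ => 0 := by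
  funext x
  have h1 : min (0:ℝ) (n:ℝ) = 0 := min_eq_left (Nat.cast_nonneg n)
  have h2 : max (-(n:ℝ)) (0:ℝ) = 0 := max_eq_right (neg_nonpos.mpr (Nat.cast_nonneg n))
  simp [bReg, convol, h1, h2]

lemma sigmaSqReg_continuous {τ : ℝ → ℝ} (hτc : Continuous τ) (Φ : SchwartzMap ℝ ℝ) (n : ℕ) :
    Continuous (sigmaSqReg τ Φ n) := by
  have heq : sigmaSqReg τ Φ n =
      MeasureTheory.convolution (moll Φ n) (fun x => min (τ x ^ 2) (n:ℝ))
        (ContinuousLinearMap.mul ℝ ℝ) volume := by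
    funext x
    simp only [sigmaSqReg, convol, MeasureTheory.convolution, ContinuousLinearMap.mul_apply']
    exact integral_congr_ae (Eventually.of_forall fun y => mul_comm _ _)
  rw [heq]
  have hb : BddAbove (range fun x => ‖min (τ x ^ 2) (n:ℝ)‖) := by
    refine ⟨(n:ℝ), ?_⟩
    rintro _ ⟨x, rfl⟩
    show ‖min (τ x ^ 2) (n:ℝ)‖ ≤ (n:ℝ)
    rw [Real.norm_eq_abs, abs_le]
    constructor
    · exact le_trans (neg_nonpos.mpr (Nat.cast_nonneg n)) (le_min (sq_nonneg _) (Nat.cast_nonneg n))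
    · exact min_le_right _ _
  exact hb.continuous_convolution_right_of_integrable (ContinuousLinearMap.mul ℝ ℝ)
    (moll_integrable_s9 Φ n) (Continuous.min (by continuity) continuous_const)

lemma exists_mollifier : ∃ Φ : SchwartzMap ℝ ℝ, IsMollifier Φ := by
  let b : ContDiffBump (0:ℝ) := ⟨1, 2, one_pos, one_lt_two⟩
  set f : ℝ → ℝ := fun x => b.normed volume x with hf
  have hsm : ContDiff ℝ ((⊤:ℕ∞) : WithTop ℕ∞) f := b.contDiff_normed
  have hcs : HasCompactSupport f := b.hasCompactSupport_normed
  have hdecay : ∀ (k m : ℕ), ∃ C, ∀ x : ℝ, ‖x‖ ^ k * ‖iteratedFDeriv ℝ m f x‖ ≤ C := by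
    intro k m
    have hFc : Continuous (iteratedFDeriv ℝ m f) := hsm.continuous_iteratedFDeriv (by exact_mod_cast le_top)
    have hFcs : HasCompactSupport (iteratedFDeriv ℝ m f) := hcs.iteratedFDeriv m
    have hgc : Continuous fun x : ℝ => ‖x‖ ^ k * ‖iteratedFDeriv ℝ m f x‖ := by continuity
    have hgcs : HasCompactSupport fun x : ℝ => ‖x‖ ^ k * ‖iteratedFDeriv ℝ m f x‖ :=
      HasCompactSupport.mul_left (f := fun x : ℝ => ‖x‖ ^ k) hFcs.norm
    obtain ⟨C, hC⟩ := hgc.bounded_above_of_compact_support hgcs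
    refine ⟨C, fun x => ?_⟩
    have := hC x
    rwa [Real.norm_eq_abs, abs_of_nonneg (by positivity)] at this
  refine ⟨⟨f, hsm, hdecay⟩, ?_⟩
  show (∫ x : ℝ, f x) = 1
  exact b.integral_normed

set_option maxHeartbeats 1000000 in
lemma sigmaSqReg_tendsto {τ : ℝ → ℝ} (hτc : Continuous τ) (Φ : SchwartzMap ℝ ℝ)
    (hΦ : IsMollifier Φ) :
    TendstoLocallyUniformly (fun n => sigmaSqReg τ Φ n) (fun x => τ x ^ 2) atTop := by
  have hgc : Continuous fun x => τ x ^ 2 := by continuity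
  rw [tendstoLocallyUniformly_iff_forall_isCompact]
  intro K hK
  rw [Metric.tendstoUniformlyOn_iff]
  intro ε hε
  obtain ⟨R, hR⟩ := hK.isBounded.subset_closedBall 0
  set J : Set ℝ := Icc (-(R + 1)) (R + 1) with hJ
  have hJc : IsCompact J := isCompact_Icc
  obtain ⟨M, hM⟩ := hJc.exists_bound_of_continuousOn hgc.continuousOn
  set M' : ℝ := max M 0 with hM'
  have hM'nn : 0 ≤ M' := le_max_right _ _
  have huc := hJc.uniformContinuousOn_of_continuous hgc.continuousOn
  rw [Metric.uniformContinuousOn_iff] at huc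
  set I : ℝ := ∫ z : ℝ, ‖Φ z‖ with hI
  have hInn : 0 ≤ I := integral_nonneg fun z => norm_nonneg _
  set ε' : ℝ := ε / (2 * (I + 1)) with hε'def
  have hε'pos : 0 < ε' := by positivity
  obtain ⟨δ, hδpos, hδ⟩ := huc ε' hε'pos
  set δ' : ℝ := min (δ / 2) 1 with hδ'def
  have hδ'pos : 0 < δ' := lt_min (by linarith) one_pos
  have hδ'le1 : δ' ≤ 1 := min_le_right _ _
  have hδ'ltδ : δ' < δ := lt_of_le_of_lt (min_le_left _ _) (by linarith)
  set h : ℝ → ℝ := fun z => (|z| / δ' + M') * ‖Φ z‖ with hh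
  have hhnn : ∀ z, 0 ≤ h z := fun z => by
    apply mul_nonneg (by positivity) (norm_nonneg _)
  have hh_int : Integrable h := by
    have h1 : Integrable (fun z : ℝ => ‖z‖ ^ 1 * ‖Φ z‖) := Φ.integrable_pow_mul volume 1
    have heq : h = fun z => (1 / δ') * (‖z‖ ^ 1 * ‖Φ z‖) + M' * ‖Φ z‖ := by
      funext z; simp only [hh, pow_one, Real.norm_eq_abs]; ring
    rw [heq]
    exact (h1.const_mul _).add ((Φ.integrable (μ := volume)).norm.const_mul _)
  -- tail integral tends to zero
  have htail : Tendsto (fun n : ℕ => ∫ z in (Metric.closedBall (0:ℝ) (δ' * n))ᶜ, h z)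
      atTop (𝓝 0) := by
    have hmono : Monotone fun n : ℕ => Metric.closedBall (0:ℝ) (δ' * n) := by
      intro a b hab
      exact Metric.closedBall_subset_closedBall
        (mul_le_mul_of_nonneg_left (by exact_mod_cast hab) hδ'pos.le)
    have hunion : ⋃ n : ℕ, Metric.closedBall (0:ℝ) (δ' * n) = univ := by
      rw [eq_univ_iff_forall]
      intro z
      refine mem_iUnion.mpr ⟨⌈|z| / δ'⌉₊, ?_⟩
      rw [Metric.mem_closedBall, Real.dist_0_eq_abs]
      calc |z| = δ' * (|z| / δ') := by field_simp
        _ ≤ δ' * ⌈|z| / δ'⌉₊ := by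
            exact mul_le_mul_of_nonneg_left (Nat.le_ceil _) hδ'pos.le
    have h2 := tendsto_setIntegral_of_monotone (fun n => measurableSet_closedBall) hmono
      (by rw [hunion]; exact hh_int.integrableOn)
    rw [hunion, setIntegral_univ] at h2
    have h3 : ∀ n : ℕ, ∫ z in (Metric.closedBall (0:ℝ) (δ' * n))ᶜ, h z =
        (∫ z, h z) - ∫ z in Metric.closedBall (0:ℝ) (δ' * n), h z := by
      intro n
      have h4 := integral_add_compl (measurableSet_closedBall
        (x := (0:ℝ)) (ε := δ' * n)) hh_int
      linarith
    simp_rw [h3]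
    have h5 : Tendsto (fun n : ℕ => (∫ z : ℝ, h z) -
        ∫ z in Metric.closedBall (0:ℝ) (δ' * n), h z) atTop (𝓝 ((∫ z : ℝ, h z) - ∫ z : ℝ, h z)) :=
      Tendsto.sub tendsto_const_nhds h2
    simpa using h5
  filter_upwards [htail.eventually (gt_mem_nhds (half_pos hε)), eventually_ge_atTop 1,
    eventually_ge_atTop ⌈M'⌉₊] with n hn1 hn2 hn3
  intro x hxK
  have hnpos : (0:ℝ) < n := by exact_mod_cast hn2
  have hne : (n:ℝ) ≠ 0 := hnpos.ne'
  have hnM : M' ≤ (n:ℝ) := le_trans (Nat.le_ceil _) (by exact_mod_cast hn3)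
  have hxR : |x| ≤ R := by
    have := hR hxK; rwa [Metric.mem_closedBall, Real.dist_0_eq_abs] at this
  have hxJ : x ∈ J := by
    constructor <;> [linarith [abs_le.mp hxR] ; linarith [(abs_le.mp hxR).2]]
  -- change of variables
  have hA : sigmaSqReg τ Φ n x = ∫ z : ℝ, min (τ (x - z / (n:ℝ)) ^ 2) (n:ℝ) * Φ z := by
    have hcv : ∀ y : ℝ, min (τ (x - y) ^ 2) (n:ℝ) * moll Φ n y =
        (n:ℝ) * ((fun z => min (τ (x - z / (n:ℝ)) ^ 2) (n:ℝ) * Φ z) ((n:ℝ) * y)) := by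
      intro y
      simp only [moll]
      rw [mul_div_cancel_left₀ _ hne]
      ring
    calc sigmaSqReg τ Φ n x
        = ∫ y : ℝ, (n:ℝ) * ((fun z => min (τ (x - z / (n:ℝ)) ^ 2) (n:ℝ) * Φ z) ((n:ℝ) * y)) := by
          simp only [sigmaSqReg, convol]
          exact integral_congr_ae (Eventually.of_forall fun y => hcv y)
      _ = (n:ℝ) * ∫ y : ℝ, (fun z => min (τ (x - z / (n:ℝ)) ^ 2) (n:ℝ) * Φ z) ((n:ℝ) * y) :=
          integral_const_mul _ _
      _ = (n:ℝ) * (|(n:ℝ)⁻¹| • ∫ z : ℝ, min (τ (x - z / (n:ℝ)) ^ 2) (n:ℝ) * Φ z) :=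
          congrArg (fun t => (n:ℝ) * t)
            (MeasureTheory.Measure.integral_comp_mul_left
              (fun z => min (τ (x - z / (n:ℝ)) ^ 2) (n:ℝ) * Φ z) (n:ℝ))
      _ = ∫ z : ℝ, min (τ (x - z / (n:ℝ)) ^ 2) (n:ℝ) * Φ z := by
          rw [abs_of_pos (inv_pos.mpr hnpos), smul_eq_mul, ← mul_assoc,
            mul_inv_cancel₀ hne, one_mul]
  -- integrability facts
  have hFn_int : Integrable fun z : ℝ => min (τ (x - z / (n:ℝ)) ^ 2) (n:ℝ) * Φ z := by
    refine (Φ.integrable (μ := volume)).bdd_mul (c := (n:ℝ)) ?_ (Eventually.of_forall fun z => ?_)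
    · exact (Continuous.min ((hτc.comp (continuous_const.sub
        (continuous_id.div_const (n:ℝ)))).pow 2) continuous_const).aestronglyMeasurable
    · rw [Real.norm_eq_abs, abs_le]
      exact ⟨le_trans (by linarith [hnpos]) (le_min (sq_nonneg _) (by positivity)), min_le_right _ _⟩
  have hGn_int : Integrable fun z : ℝ => τ x ^ 2 * Φ z :=
    (Φ.integrable (μ := volume)).const_mul _
  -- B : constant
  have hB : τ x ^ 2 = ∫ z : ℝ, τ x ^ 2 * Φ z := by
    rw [integral_const_mul, hΦ, mul_one]
  have hsub : τ x ^ 2 - sigmaSqReg τ Φ n x =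
      ∫ z : ℝ, (τ x ^ 2 - min (τ (x - z / (n:ℝ)) ^ 2) (n:ℝ)) * Φ z := by
    rw [hA]
    nth_rewrite 1 [hB]
    rw [← integral_sub hGn_int hFn_int]
    exact integral_congr_ae (Eventually.of_forall fun z => by ring)
  -- pointwise bound
  have hbound : ∀ z : ℝ, |(τ x ^ 2 - min (τ (x - z / (n:ℝ)) ^ 2) (n:ℝ)) * Φ z| ≤
      ε' * ‖Φ z‖ + ((Metric.closedBall (0:ℝ) (δ' * n))ᶜ).indicator h z := by
    intro z
    rw [abs_mul, ← Real.norm_eq_abs (Φ z)]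
    by_cases hz : |z| ≤ δ' * n
    · have hzmem : z ∈ Metric.closedBall (0:ℝ) (δ' * n) := by
        rwa [Metric.mem_closedBall, Real.dist_0_eq_abs]
      have hind : ((Metric.closedBall (0:ℝ) (δ' * n))ᶜ).indicator h z = 0 := by
        rw [indicator_of_notMem (notMem_compl_iff.mpr hzmem)]
      rw [hind, add_zero]
      have hzn : |z / (n:ℝ)| ≤ δ' := by
        rw [abs_div, abs_of_pos hnpos, div_le_iff₀ hnpos]
        linarith [hz]
      have hmemJ : x - z / (n:ℝ) ∈ J := by
        obtain ⟨h5a, h5b⟩ := abs_le.mp hxR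
        obtain ⟨h6a, h6b⟩ := abs_le.mp hzn
        constructor <;> [nlinarith [hδ'le1]; nlinarith [hδ'le1]]
      have hd : dist (x - z / (n:ℝ)) x < δ := by
        rw [Real.dist_eq]
        have : |x - z / (n:ℝ) - x| = |z / (n:ℝ)| := by rw [← abs_neg]; congr 1; ring
        rw [this]; linarith [hzn]
      have huc2 := hδ _ hmemJ _ hxJ hd
      rw [Real.dist_eq] at huc2
      have hgle : τ (x - z / (n:ℝ)) ^ 2 ≤ (n:ℝ) := by
        have := hM _ hmemJ
        rw [Real.norm_eq_abs, abs_of_nonneg (sq_nonneg _)] at this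
        calc τ (x - z / (n:ℝ)) ^ 2 ≤ M := this
          _ ≤ M' := le_max_left _ _
          _ ≤ (n:ℝ) := hnM
      rw [min_eq_left hgle]
      have : |τ x ^ 2 - τ (x - z / (n:ℝ)) ^ 2| ≤ ε' := by
        rw [← abs_neg]
        have heq : -(τ x ^ 2 - τ (x - z / (n:ℝ)) ^ 2) = τ (x - z / (n:ℝ)) ^ 2 - τ x ^ 2 := by ring
        rw [heq]; exact le_of_lt huc2
      exact mul_le_mul_of_nonneg_right this (norm_nonneg _)
    · have hzmem : z ∈ (Metric.closedBall (0:ℝ) (δ' * n))ᶜ := by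
        simp only [mem_compl_iff, Metric.mem_closedBall, Real.dist_0_eq_abs]
        linarith [not_le.mp hz]
      rw [indicator_of_mem hzmem]
      have hτxM : τ x ^ 2 ≤ M' := by
        have := hM _ hxJ
        rw [Real.norm_eq_abs, abs_of_nonneg (sq_nonneg _)] at this
        exact le_trans this (le_max_left _ _)
      have hminb : |min (τ (x - z / (n:ℝ)) ^ 2) (n:ℝ)| ≤ (n:ℝ) := by
        rw [abs_le]
        exact ⟨le_trans (by linarith) (le_min (sq_nonneg _) (by positivity)), min_le_right _ _⟩
      have hnb : (n:ℝ) ≤ |z| / δ' := by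
        rw [le_div_iff₀ hδ'pos]
        linarith [not_le.mp hz]
      have hdb : |τ x ^ 2 - min (τ (x - z / (n:ℝ)) ^ 2) (n:ℝ)| ≤ |z| / δ' + M' := by
        calc |τ x ^ 2 - min (τ (x - z / (n:ℝ)) ^ 2) (n:ℝ)|
            ≤ |τ x ^ 2| + |min (τ (x - z / (n:ℝ)) ^ 2) (n:ℝ)| := abs_sub _ _
          _ ≤ M' + (n:ℝ) := by
              gcongr
              · rwa [abs_of_nonneg (sq_nonneg _)]
          _ ≤ |z| / δ' + M' := by linarith
      have : |τ x ^ 2 - min (τ (x - z / (n:ℝ)) ^ 2) (n:ℝ)| * ‖Φ z‖ ≤ h z :=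
        mul_le_mul_of_nonneg_right hdb (norm_nonneg _)
      have hnn : 0 ≤ ε' * ‖Φ z‖ := mul_nonneg hε'pos.le (norm_nonneg _)
      linarith
  -- put it together
  rw [Real.dist_eq, hsub]
  calc |∫ z : ℝ, (τ x ^ 2 - min (τ (x - z / (n:ℝ)) ^ 2) (n:ℝ)) * Φ z|
      ≤ ∫ z : ℝ, |(τ x ^ 2 - min (τ (x - z / (n:ℝ)) ^ 2) (n:ℝ)) * Φ z| := by
        simpa only [Real.norm_eq_abs] using
          norm_integral_le_integral_norm (μ := volume) fun z : ℝ =>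
            (τ x ^ 2 - min (τ (x - z / (n:ℝ)) ^ 2) (n:ℝ)) * Φ z
    _ ≤ ∫ z : ℝ, (ε' * ‖Φ z‖ + ((Metric.closedBall (0:ℝ) (δ' * n))ᶜ).indicator h z) := by
        have hsub_int : Integrable (fun z : ℝ =>
            (τ x ^ 2 - min (τ (x - z / (n:ℝ)) ^ 2) (n:ℝ)) * Φ z) :=
          (hGn_int.sub hFn_int).congr (Eventually.of_forall fun z => by simp only [Pi.sub_apply]; ring)
        refine integral_mono hsub_int.abs ?_ hbound
        exact ((Φ.integrable (μ := volume)).norm.const_mul _).add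
          (hh_int.indicator measurableSet_closedBall.compl)
    _ = ε' * I + ∫ z in (Metric.closedBall (0:ℝ) (δ' * n))ᶜ, h z := by
        rw [integral_add ((Φ.integrable (μ := volume)).norm.const_mul _)
          (hh_int.indicator measurableSet_closedBall.compl), integral_const_mul,
          integral_indicator measurableSet_closedBall.compl]
    _ < ε / 2 + ε / 2 := by
        have h7 : ε' * I < ε / 2 := by
          have : ε' * I < ε' * (I + 1) := by nlinarith
          have h8 : ε' * (I + 1) = ε / 2 := by
            rw [hε'def]; field_simp
          linarith
        exact add_lt_add h7 hn1
    _ = ε := by ring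

lemma tlu_const (f : ℝ → ℝ) : TendstoLocallyUniformly (fun _ : ℕ => f) f atTop := by
  rw [tendstoLocallyUniformly_iff_forall_isCompact]
  intro K _
  rw [Metric.tendstoUniformlyOn_iff]
  intro ε hε
  filter_upwards with n x _
  simpa using hε

lemma tlu_mul {F : ℕ → ℝ → ℝ} {f h : ℝ → ℝ} (hF : TendstoLocallyUniformly F f atTop)
    (hh : Continuous h) :
    TendstoLocallyUniformly (fun n x => F n x / 2 * h x) (fun x => f x / 2 * h x) atTop := by
  rw [tendstoLocallyUniformly_iff_forall_isCompact] at hF ⊢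
  intro K hK
  have hFK := hF K hK
  rw [Metric.tendstoUniformlyOn_iff] at hFK ⊢
  intro ε hε
  obtain ⟨C, hC⟩ := hK.exists_bound_of_continuousOn hh.continuousOn
  set C' : ℝ := max C 0 with hC'
  have hC'nn : 0 ≤ C' := le_max_right _ _
  filter_upwards [hFK (ε / (C' + 1)) (by positivity)] with n hn x hx
  have h1 := hn x hx
  rw [Real.dist_eq] at h1 ⊢
  have h2 : |h x| ≤ C' := le_trans (by simpa [Real.norm_eq_abs] using hC x hx) (le_max_left _ _)
  have h3 : |f x / 2 * h x - F n x / 2 * h x| = |f x - F n x| / 2 * |h x| := by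
    have he : f x / 2 * h x - F n x / 2 * h x = (f x - F n x) / 2 * h x := by ring
    rw [he, abs_mul, abs_div, abs_two]
  rw [h3]
  have h4 : |f x - F n x| / 2 * |h x| ≤ ε / (C' + 1) / 2 * C' := by gcongr
  have h5 : ε / (C' + 1) / 2 * C' < ε := by
    rw [div_div, div_mul_eq_mul_div, div_lt_iff₀ (by positivity)]
    nlinarith
  linarith

lemma tlu_div {a u : ℕ → ℝ → ℝ} {s ℓ : ℝ → ℝ}
    (hs : TendstoLocallyUniformly a s atTop)
    (hL : TendstoLocallyUniformly (fun n x => a n x / 2 * u n x) ℓ atTop)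
    (hspos : ∀ x, 0 < s x) (hsc : Continuous s) (hℓc : Continuous ℓ) :
    TendstoLocallyUniformly u (fun x => 2 * ℓ x / s x) atTop := by
  rw [tendstoLocallyUniformly_iff_forall_isCompact] at hs hL ⊢
  intro K hK
  have hsK := hs K hK
  have hLK := hL K hK
  rw [Metric.tendstoUniformlyOn_iff] at hsK hLK ⊢
  intro ε hε
  rcases K.eq_empty_or_nonempty with rfl | hKne
  · filter_upwards with n x hx
    exact absurd hx (notMem_empty x)
  obtain ⟨x₀, hx₀K, hx₀⟩ := hK.exists_isMinOn hKne hsc.continuousOn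
  rw [isMinOn_iff] at hx₀
  set c : ℝ := s x₀ with hc
  have hcpos : 0 < c := hspos x₀
  obtain ⟨Mℓ, hMℓ⟩ := hK.exists_bound_of_continuousOn hℓc.continuousOn
  set M : ℝ := max Mℓ 0 with hM
  have hMnn : 0 ≤ M := le_max_right _ _
  filter_upwards [hsK (min (c / 2) (ε * c ^ 2 / (16 * (M + 1)))) (by positivity),
    hLK (ε * c / 16) (by positivity)] with n hn1 hn2 x hx
  have hsx : c ≤ s x := hx₀ x hx
  have hd2 : |s x - a n x| < min (c / 2) (ε * c ^ 2 / (16 * (M + 1))) := by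
    have := hn1 x hx; rwa [Real.dist_eq] at this
  have hd1 : |a n x / 2 * u n x - ℓ x| < ε * c / 16 := by
    have := hn2 x hx
    rw [Real.dist_eq, abs_sub_comm] at this
    exact this
  have hax : c / 2 < a n x := by
    have h6 := (abs_lt.mp (lt_of_lt_of_le hd2 (min_le_left _ _))).2
    linarith
  have haxpos : 0 < a n x := lt_trans (by positivity) hax
  have hMx : |ℓ x| ≤ M :=
    le_trans (by simpa [Real.norm_eq_abs] using hMℓ x hx) (le_max_left _ _)
  rw [Real.dist_eq]
  have hkey : 2 * ℓ x / s x - u n x =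
      -(2 * (a n x / 2 * u n x - ℓ x) / a n x) - 2 * ℓ x * (s x - a n x) / (a n x * s x) := by
    field_simp [haxpos.ne', (hspos x).ne']
    ring
  rw [hkey]
  have hb1 : |(-(2 * (a n x / 2 * u n x - ℓ x) / a n x))| ≤ 2 * (ε * c / 16) / (c / 2) := by
    rw [abs_neg, abs_div, abs_of_pos haxpos, abs_mul, abs_two]
    gcongr
  have hb2 : |2 * ℓ x * (s x - a n x) / (a n x * s x)| ≤
      2 * M * (ε * c ^ 2 / (16 * (M + 1))) / (c / 2 * c) := by
    rw [abs_div, abs_of_pos (mul_pos haxpos (lt_of_lt_of_le hcpos hsx)), abs_mul, abs_mul, abs_two]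
    gcongr
    exact le_trans hd2.le (min_le_right _ _)
  have he1 : 2 * (ε * c / 16) / (c / 2) = ε / 4 := by
    field_simp
    ring
  have he2 : 2 * M * (ε * c ^ 2 / (16 * (M + 1))) / (c / 2 * c) = ε * M / (4 * (M + 1)) := by
    field_simp
    ring
  have he3 : ε * M / (4 * (M + 1)) ≤ ε / 4 := by
    rw [div_le_div_iff₀ (by positivity) (by positivity)]
    nlinarith
  have habs : |(-(2 * (a n x / 2 * u n x - ℓ x) / a n x)) -
      2 * ℓ x * (s x - a n x) / (a n x * s x)| ≤
      |(-(2 * (a n x / 2 * u n x - ℓ x) / a n x))| +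
      |2 * ℓ x * (s x - a n x) / (a n x * s x)| := abs_sub _ _
  have hsum := add_le_add hb1 hb2
  rw [he1, he2] at hsum
  linarith


lemma Lreg_driftless (τ : ℝ → ℝ) (Φ : SchwartzMap ℝ ℝ) (n : ℕ) (g : ℝ → ℝ) :
    Lreg τ (fun _ => 0) Φ n g = fun x => sigmaSqReg τ Φ n x / 2 * deriv (deriv g) x := by
  funext x
  simp [Lreg, bReg_zero]

lemma contDiff_two_iff' {g : ℝ → ℝ} :
    ContDiff ℝ 2 g ↔ Differentiable ℝ g ∧ Differentiable ℝ (deriv g) ∧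
      Continuous (deriv (deriv g)) := by
  rw [show (2 : WithTop ℕ∞) = 1 + 1 from by norm_num, contDiff_succ_iff_deriv,
    contDiff_one_iff_deriv]
  constructor
  · rintro ⟨h1, -, h2, h3⟩
    exact ⟨h1, h2, h3⟩
  · rintro ⟨h1, h2, h3⟩
    refine ⟨h1, ?_, h2, h3⟩
    intro hw
    exact absurd hw (by simp)

/-- Proposition 2.15(b): for a driftless operator `L⁰` with continuous positive
diffusion coefficient `τ`, `𝒟_{L⁰} = C²(ℝ)`, and for `f ∈ 𝒟_{L⁰}` one has `L⁰f = (τ²/2) f''`. -/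
theorem statement9 (τ : ℝ → ℝ) (hτc : Continuous τ) (hτpos : ∀ x, 0 < τ x) :
    (∀ f : ℝ → ℝ, (∃ ℓ : ℝ → ℝ, IsC1GenSolution τ (fun _ => 0) f ℓ) ↔ ContDiff ℝ 2 f) ∧
    (∀ f ℓ : ℝ → ℝ, IsC1GenSolution τ (fun _ => 0) f ℓ →
      ∀ x, ℓ x = τ x ^ 2 / 2 * deriv (deriv f) x) := by
  have hτsq : Continuous fun x => τ x ^ 2 := hτc.pow 2
  have hrev : ∀ f ℓ : ℝ → ℝ, IsC1GenSolution τ (fun _ => 0) f ℓ →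
      ∀ x, HasDerivAt (deriv f) (2 * ℓ x / τ x ^ 2) x := by
    intro f ℓ hsol
    obtain ⟨hf1, hℓc, H⟩ := hsol
    obtain ⟨Φ, hΦ⟩ := exists_mollifier
    obtain ⟨fn, hfn2, _, hfnf, hfn', hfnL⟩ := H Φ hΦ
    simp only [Lreg_driftless] at hfnL
    have hupp : TendstoLocallyUniformly (fun n => deriv (deriv (fn n)))
        (fun x => 2 * ℓ x / τ x ^ 2) atTop :=
      tlu_div (sigmaSqReg_tendsto hτc Φ hΦ) hfnL
        (fun x => by have := hτpos x; positivity) hτsq hℓc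
    intro x
    refine hasDerivAt_of_tendstoLocallyUniformlyOn (f := fun n => deriv (fn n)) isOpen_univ
      (tendstoLocallyUniformlyOn_univ.mpr hupp) ?_ ?_ (mem_univ x)
    · filter_upwards with n
      intro y _
      exact ((contDiff_two_iff'.mp (hfn2 n)).2.1 y).hasDerivAt
    · intro y _
      exact (tendstoLocallyUniformlyOn_univ.mpr hfn').tendsto_at (mem_univ y)
  constructor
  · intro f
    constructor
    · rintro ⟨ℓ, hsol⟩
      have h := hrev f ℓ hsol
      obtain ⟨hf1, hℓc, -⟩ := hsol
      refine contDiff_two_iff'.mpr ⟨hf1.differentiable (by norm_num),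
        fun x => (h x).differentiableAt, ?_⟩
      have hdd : deriv (deriv f) = fun x => 2 * ℓ x / τ x ^ 2 :=
        funext fun x => (h x).deriv
      rw [hdd]
      exact (continuous_const.mul hℓc).div hτsq fun x => by have := hτpos x; positivity
    · intro hf
      obtain ⟨hfd, hfd', hfppc⟩ := contDiff_two_iff'.mp hf
      refine ⟨fun x => τ x ^ 2 / 2 * deriv (deriv f) x, hf.of_le (by norm_num),
        (hτsq.div_const 2).mul hfppc, ?_⟩
      intro Φ hΦ
      refine ⟨fun _ => f, fun _ => hf, ?_, tlu_const f, tlu_const (deriv f), ?_⟩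
      · intro n
        rw [Lreg_driftless]
        exact ((sigmaSqReg_continuous hτc Φ n).div_const 2).mul hfppc
      · simp only [Lreg_driftless]
        exact tlu_mul (sigmaSqReg_tendsto hτc Φ hΦ) hfppc
  · intro f ℓ hsol x
    have h := hrev f ℓ hsol x
    have hdd : deriv (deriv f) x = 2 * ℓ x / τ x ^ 2 := h.deriv
    have hne : τ x ^ 2 ≠ 0 := by have := hτpos x; positivity
    rw [hdd]
    field_simp
    rw [mul_div_assoc, div_self (hτpos x).ne', mul_one]


end
end
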